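/- arXiv:1110.3856 — 9 statements merged into one kernel-verified Lean document; each statement's English description precedes it below -/
import Mathlib

section
/- Let α and β be types, let μ be a probability mass function on α and ν a probability mass function on β, and let h : α → β → Prop be a decidable predicate such that p := Σ_{a,b} μ(a)·ν(b)·[h(a,b)] is strictly positive. Define the target probability mass function s on α × β by s(a,b) = μ(a)·ν(b)·[h(a,b)]/p. For a ∈ α set q(a) := Σ_b ν(b)·[h(a,b)], define the first-stage probability mass function x on α by x(a) = μ(a)·q(a)/p, and for each a with q(a) > 0 define the second-stage probability mass function y_a on β by y_a(b) = ν(b)·[h(a,b)]/q(a) (for a with q(a) = 0 let y_a be arbitrary). Then sampling a from x and then b from y_a produces the distribution s; that is, the probability mass function obtained by binding x with a ↦ (map of y_a under b ↦ (a,b)) equals s. -/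
open scoped ENNReal

/-- **Probabilistic divide-and-conquer, basic lemma.**
Sampling `a` from the conditioned first marginal `x` and then `b` from the
conditional second-stage distribution `y a` produces the conditioned joint
distribution `s` of an independent pair `(A,B) ~ μ ⊗ ν` given `h (A, B)`. -/
theorem pdc_basic_lemma {α β : Type*} (μ : PMF α) (ν : PMF β) (h : α → β → Prop)
    [∀ a b, Decidable (h a b)]
    (p : ℝ≥0∞) (hp : p = ∑' a, ∑' b, μ a * ν b * (if h a b then 1 else 0))
    (hppos : 0 < p)
    (q : α → ℝ≥0∞) (hq : ∀ a, q a = ∑' b, ν b * (if h a b then 1 else 0))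
    (s : PMF (α × β))
    (hs : ∀ a b, s (a, b) = μ a * ν b * (if h a b then 1 else 0) / p)
    (x : PMF α) (hx : ∀ a, x a = μ a * q a / p)
    (y : α → PMF β)
    (hy : ∀ a, 0 < q a → ∀ b, y a b = ν b * (if h a b then 1 else 0) / q a) :
    x.bind (fun a => (y a).map (fun b => (a, b))) = s := by
  classical
  ext ⟨a, b⟩
  rw [PMF.bind_apply]
  have hstep : ∀ a', x a' * (y a').map (fun b => (a', b)) (a, b)
      = if a' = a then x a * y a b else 0 := by
    intro a'
    rw [PMF.map_apply]
    by_cases ha : a' = a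
    · subst ha
      simp only [if_pos rfl]
      congr 1
      rw [tsum_eq_single b]
      · simp
      · intro b' hb'
        rw [if_neg]
        simp [hb'.symm]
    · rw [if_neg ha]
      have haa : a ≠ a' := fun hc => ha hc.symm
      simp [Prod.mk.injEq, haa]
  rw [tsum_congr hstep, tsum_ite_eq, hs]
  by_cases hqa : q a = 0
  · have hnb : ν b * (if h a b then 1 else 0) = 0 := by
      have := (ENNReal.tsum_eq_zero.mp ((hq a) ▸ hqa)) b
      exact this
    rw [hx, hqa, mul_assoc, hnb]
    simp
  · have hqpos : 0 < q a := pos_iff_ne_zero.mpr hqa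
    have hqtop : q a ≠ ⊤ := by
      have : q a ≤ 1 := by
        rw [hq a]
        calc ∑' b, ν b * (if h a b then 1 else 0) ≤ ∑' b, ν b := by
              apply ENNReal.tsum_le_tsum
              intro b'
              split <;> simp
          _ = 1 := ν.tsum_coe
      exact (this.trans_lt ENNReal.one_lt_top).ne
    rw [hx, hy a hqpos b]
    have hcancel : q a * (q a)⁻¹ = 1 := ENNReal.mul_inv_cancel hqa hqtop
    simp only [div_eq_mul_inv]
    rw [show μ a * q a * p⁻¹ * (ν b * (if h a b then 1 else 0) * (q a)⁻¹)
        = μ a * (ν b * (if h a b then 1 else 0)) * p⁻¹ * (q a * (q a)⁻¹) from by ring,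
      hcancel, mul_one]
    ring
end

section
/- Fix x ∈ (0,1), and let μ_x be the product probability measure on ℕ^{ℕ≥1} whose i-th coordinate Z_i is geometric with parameter x^i, i.e. P(Z_i = k) = (1−x^i)·x^{ik} for k ∈ ℕ, with all coordinates independent. Then for every n ≥ 1 and every finitely supported function c : {1,2,3,…} → ℕ with Σ_{i≥1} i·c(i) = n, the μ_x-probability of the event {ω : ω(i) = c(i) for all i ≥ 1} equals x^n · ∏_{i=1}^∞ (1−x^i). In particular this probability is the same for every partition c of n, so conditional on Σ_i i·Z_i = n the induced random partition (with Z_i parts of size i) is uniform over the partitions of n. -/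
open MeasureTheory ProbabilityTheory

section Aux

variable {x : ℝ}

private lemma aux_pow_lt_one (hx : x ∈ Set.Ioo (0:ℝ) 1) (i : {i : ℕ // 0 < i}) :
    x ^ (i : ℕ) < 1 :=
  pow_lt_one₀ hx.1.le hx.2 i.2.ne'

private lemma aux_summable_log (hx : x ∈ Set.Ioo (0:ℝ) 1) :
    Summable fun i : {i : ℕ // 0 < i} => Real.log (1 - x ^ (i : ℕ)) := by
  obtain ⟨hx0, hx1⟩ := hx
  rw [← summable_neg_iff]
  have hbase : Summable fun n : ℕ => x ^ n / (1 - x) :=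
    (summable_geometric_of_lt_one hx0.le hx1).div_const _
  have hsub : Summable fun i : {i : ℕ // 0 < i} => x ^ (i : ℕ) / (1 - x) :=
    hbase.subtype _
  refine Summable.of_nonneg_of_le (fun i => ?_) (fun i => ?_) hsub
  · have h1 := aux_pow_lt_one ⟨hx0, hx1⟩ i
    have hp : (0:ℝ) < x ^ (i : ℕ) := pow_pos hx0 _
    have h2 : Real.log (1 - x ^ (i : ℕ)) ≤ 0 :=
      Real.log_nonpos (by linarith) (by linarith)
    linarith
  · have hlt := aux_pow_lt_one ⟨hx0, hx1⟩ i
    have hp : (0:ℝ) < x ^ (i : ℕ) := pow_pos hx0 _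
    have hle : x ^ (i : ℕ) ≤ x := by
      calc x ^ (i : ℕ) ≤ x ^ 1 := pow_le_pow_of_le_one hx0.le hx1.le i.2
      _ = x := pow_one x
    have hpos : (0:ℝ) < 1 - x ^ (i : ℕ) := by linarith
    have h1x : (0:ℝ) < 1 - x := by linarith
    have hneg : -Real.log (1 - x ^ (i : ℕ)) = Real.log (1 - x ^ (i : ℕ))⁻¹ := by
      rw [Real.log_inv]
    rw [hneg]
    have h2 := Real.log_le_sub_one_of_pos (inv_pos.2 hpos)
    refine h2.trans ?_
    have hinv : (1 - x ^ (i : ℕ))⁻¹ ≤ (1 - x)⁻¹ := by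
      apply inv_anti₀ h1x
      linarith
    have key : (1 - x ^ (i : ℕ))⁻¹ - 1 = x ^ (i : ℕ) * (1 - x ^ (i : ℕ))⁻¹ := by
      field_simp
      ring
    have key2 : x ^ (i : ℕ) / (1 - x) = x ^ (i : ℕ) * (1 - x)⁻¹ := by ring
    rw [key, key2]
    exact mul_le_mul_of_nonneg_left hinv hp.le

private lemma aux_multipliable (hx : x ∈ Set.Ioo (0:ℝ) 1) :
    Multipliable fun i : {i : ℕ // 0 < i} => 1 - x ^ (i : ℕ) := by
  exact Real.multipliable_of_summable_log
    (fun i => sub_pos.2 (aux_pow_lt_one hx i))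
    (aux_summable_log hx)

end Aux

/-- **Fristedt's observation.**  Let `μ` be the product probability measure on
`ℕ^{ℕ≥1}` whose `i`-th coordinate is geometric with parameter `x^i`
(i.e. the coordinates are independent with `P(Z_i = k) = (1 - x^i) x^{i k}`).
Then for every finitely supported `c : {i // 0 < i} → ℕ` encoding a partition of
`n` (i.e. `Σ i·c(i) = n`), the probability of the event `{ω | ∀ i, ω i = c i}`
equals `x^n · ∏_{i≥1} (1 - x^i)`, independently of the partition `c`. -/
theorem fristedt_cylinder_prob (x : ℝ) (hx : x ∈ Set.Ioo (0 : ℝ) 1)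
    (μ : Measure ({i : ℕ // 0 < i} → ℕ)) [IsProbabilityMeasure μ]
    (hindep : iIndepFun (fun i ω => ω i) μ)
    (hmarg : ∀ (i : {i : ℕ // 0 < i}) (k : ℕ),
      μ {ω | ω i = k} = ENNReal.ofReal ((1 - x ^ (i : ℕ)) * x ^ ((i : ℕ) * k)))
    (n : ℕ) (hn : 1 ≤ n) (c : {i : ℕ // 0 < i} → ℕ)
    (hc : (Function.support c).Finite)
    (hsum : ∑ᶠ i : {i : ℕ // 0 < i}, i.1 * c i = n) :
    μ {ω | ∀ i, ω i = c i} =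
      ENNReal.ofReal (x ^ n * ∏' i : {i : ℕ // 0 < i}, (1 - x ^ (i : ℕ))) := by
  obtain ⟨hx0, hx1⟩ := hx
  -- the equivalence ℕ ≃ {i // 0 < i}
  let e : ℕ ≃ {i : ℕ // 0 < i} :=
    { toFun := fun m => ⟨m + 1, m.succ_pos⟩
      invFun := fun i => i.1 - 1
      left_inv := fun m => by simp
      right_inv := fun i => by
        ext
        exact Nat.succ_pred_eq_of_pos i.2 }
  -- the factor for coordinate i
  set f : {i : ℕ // 0 < i} → ℝ :=
    fun i => (1 - x ^ (i : ℕ)) * x ^ ((i : ℕ) * c i) with hf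
  have hfpos : ∀ i, 0 < f i := fun i => by
    have h1 := aux_pow_lt_one ⟨hx0, hx1⟩ i
    have hp : (0:ℝ) < x ^ (i : ℕ) := pow_pos hx0 _
    have h2 : (0:ℝ) < 1 - x ^ (i : ℕ) := by linarith
    positivity
  -- the "partition weight" part of the product
  have hsum' : ∑ i ∈ hc.toFinset, (i : ℕ) * c i = n := by
    rw [← hsum]
    refine (finsum_eq_finset_sum_of_support_subset _ ?_).symm
    intro i hi
    rw [Set.Finite.coe_toFinset]
    simp only [Function.mem_support] at hi ⊢
    intro h0
    exact hi (by rw [h0, mul_zero])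
  have hprodh : HasProd (fun i : {i : ℕ // 0 < i} => x ^ ((i : ℕ) * c i)) (x ^ n) := by
    have h1 : ∀ i ∉ hc.toFinset, x ^ ((i : ℕ) * c i) = 1 := by
      intro i hi
      simp only [Set.Finite.mem_toFinset, Function.mem_support, not_not] at hi
      rw [hi, mul_zero, pow_zero]
    have h2 := hasProd_prod_of_ne_finset_one (L := SummationFilter.unconditional _) h1
    rwa [Finset.prod_pow_eq_pow_sum, hsum'] at h2
  -- the infinite product part
  have hmult : Multipliable fun i : {i : ℕ // 0 < i} => 1 - x ^ (i : ℕ) :=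
    aux_multipliable ⟨hx0, hx1⟩
  have hprodf : HasProd f
      (x ^ n * ∏' i : {i : ℕ // 0 < i}, (1 - x ^ (i : ℕ))) := by
    have h3 := hmult.hasProd.mul hprodh
    rw [mul_comm]
    exact h3.congr fun i => rfl
  -- partial products along e converge
  have htend : Filter.Tendsto (fun m => ∏ j ∈ Finset.range m, f (e j)) Filter.atTop
      (nhds (x ^ n * ∏' i : {i : ℕ // 0 < i}, (1 - x ^ (i : ℕ)))) :=
    ((e.hasProd_iff (f := f)).2 hprodf).tendsto_prod_nat
  -- the cylinder sets
  set s : ℕ → Set ({i : ℕ // 0 < i} → ℕ) :=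
    fun m => (fun ω : {i : ℕ // 0 < i} → ℕ => ω (e m)) ⁻¹' {c (e m)} with hs
  have hmeas : ∀ m, MeasurableSet (s m) := fun m =>
    measurable_pi_apply (e m) (measurableSet_singleton (c (e m)))
  -- identify the intersection
  have hiInter : (⋂ m, s m) = {ω : {i : ℕ // 0 < i} → ℕ | ∀ i, ω i = c i} := by
    ext ω
    simp only [Set.mem_iInter, Set.mem_setOf_eq, hs, Set.mem_preimage,
      Set.mem_singleton_iff]
    constructor
    · intro h i
      have := h (e.symm i)
      rwa [e.apply_symm_apply] at this
    · intro h m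
      exact h _
  -- measure of finite intersections
  have hfin : ∀ m : ℕ, μ (⋂ j ≤ m, s j) =
      ENNReal.ofReal (∏ j ∈ Finset.Iic m, f (e j)) := by
    intro m
    have h1 : (⋂ j ≤ m, s j) = ⋂ i ∈ (Finset.Iic m).map e.toEmbedding,
        (fun ω : {i : ℕ // 0 < i} → ℕ => ω i) ⁻¹' {c i} := by
      ext ω
      simp only [Set.mem_iInter, Finset.mem_map, Equiv.coe_toEmbedding, hs,
        Set.mem_preimage, Set.mem_singleton_iff]
      constructor
      · rintro h i ⟨j, hj, rfl⟩
        exact h j (Finset.mem_Iic.mp hj)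
      · intro h j hj
        exact h (e j) ⟨j, Finset.mem_Iic.mpr hj, rfl⟩
    rw [h1, hindep.meas_biInter (fun i _ => ⟨{c i}, measurableSet_singleton _, rfl⟩),
      Finset.prod_map]
    simp only [Equiv.coe_toEmbedding]
    rw [ENNReal.ofReal_prod_of_nonneg (fun j _ => (hfpos (e j)).le)]
    exact Finset.prod_congr rfl fun j _ => hmarg (e j) (c (e j))
  -- continuity from above
  have htendμ : Filter.Tendsto (fun m => μ (⋂ j ≤ m, s j)) Filter.atTop
      (nhds (μ (⋂ m, s m))) :=
    tendsto_measure_iInter_le (fun m => (hmeas m).nullMeasurableSet)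
      ⟨0, measure_ne_top μ _⟩
  have htendμ' : Filter.Tendsto (fun m => μ (⋂ j ≤ m, s j)) Filter.atTop
      (nhds (ENNReal.ofReal
        (x ^ n * ∏' i : {i : ℕ // 0 < i}, (1 - x ^ (i : ℕ))))) := by
    have heq : ∀ m, μ (⋂ j ≤ m, s j)
        = ENNReal.ofReal (∏ j ∈ Finset.range (m + 1), f (e j)) := by
      intro m
      rw [hfin m]
      congr 1
      apply Finset.prod_congr _ (fun _ _ => rfl)
      ext j
      simp [Nat.lt_succ_iff]
    simp_rw [heq]
    exact (ENNReal.continuous_ofReal.tendsto _).comp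
      (htend.comp (Filter.tendsto_add_atTop_nat 1))
  rw [← hiInter]
  exact tendsto_nhds_unique htendμ htendμ'
end

section
/- Fix x ∈ (0,1), and let μ_x be the product probability measure on ℕ^{ℕ≥1} whose i-th coordinate Z_i is geometric with parameter x^i, i.e. P(Z_i = k) = (1−x^i)·x^{ik}, with all coordinates independent. For n ≥ 1, the μ_x-probability of the event {ω : ω is finitely supported and Σ_{i≥1} i·ω(i) = n} equals p_n · x^n · ∏_{i=1}^∞ (1−x^i), where p_n is the number of partitions of n. -/
open MeasureTheory ProbabilityTheory

private lemma frs_pos (x : ℝ) (hx : x ∈ Set.Ioo (0 : ℝ) 1) (i : {i : ℕ // 0 < i}) :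
    (0 : ℝ) < 1 - x ^ (i : ℕ) := by
  have := pow_lt_one₀ hx.1.le hx.2 i.2.ne'
  linarith

private lemma frs_hasProd (x : ℝ) (hx : x ∈ Set.Ioo (0 : ℝ) 1) :
    HasProd (fun i : {i : ℕ // 0 < i} => 1 - x ^ (i : ℕ))
      (∏' i : {i : ℕ // 0 < i}, (1 - x ^ (i : ℕ))) ∧
    (0 : ℝ) < ∏' i : {i : ℕ // 0 < i}, (1 - x ^ (i : ℕ)) := by
  have h1 := frs_pos x hx
  have hsum : Summable (fun i : {i : ℕ // 0 < i} => Real.log (1 - x ^ (i : ℕ))) := by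
    rw [← summable_neg_iff]
    have hb : Summable (fun i : {i : ℕ // 0 < i} => x ^ (i : ℕ) * (1 - x)⁻¹) :=
      ((summable_geometric_of_lt_one hx.1.le hx.2).mul_right _).comp_injective
        Subtype.val_injective
    refine hb.of_nonneg_of_le (fun i => ?_) (fun i => ?_)
    · have hle : Real.log (1 - x ^ (i : ℕ)) ≤ 0 :=
        Real.log_nonpos (h1 i).le (by nlinarith [pow_pos hx.1 (i : ℕ)])
      linarith
    · have hxi : x ^ (i : ℕ) ≤ x := pow_le_of_le_one hx.1.le hx.2.le i.2.ne'
      rw [← Real.log_inv]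
      have h3 := Real.log_le_sub_one_of_pos (inv_pos.mpr (h1 i))
      have h4 : (1 - x ^ (i : ℕ))⁻¹ - 1 ≤ x ^ (i : ℕ) * (1 - x)⁻¹ := by
        have heq : (1 - x ^ (i : ℕ))⁻¹ - 1 = x ^ (i : ℕ) * (1 - x ^ (i : ℕ))⁻¹ := by
          rw [inv_eq_one_div, div_sub_one (h1 i).ne', mul_one_div]
          congr 1
          ring
        rw [heq]
        have hinv : (1 - x ^ (i : ℕ))⁻¹ ≤ (1 - x)⁻¹ := by
          apply inv_anti₀ (by linarith [hx.2]) (by linarith)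
        exact mul_le_mul_of_nonneg_left hinv (pow_pos hx.1 _).le
      linarith
  have hp := hsum.hasSum.rexp
  have hfe : (Real.exp ∘ fun i : {i : ℕ // 0 < i} => Real.log (1 - x ^ (i : ℕ)))
      = fun i : {i : ℕ // 0 < i} => 1 - x ^ (i : ℕ) :=
    funext fun i => Real.exp_log (h1 i)
  rw [hfe] at hp
  have ht := hp.tprod_eq
  rw [ht]
  exact ⟨hp, Real.exp_pos _⟩

/-- The counting function of a partition. -/
private def frs_c {n : ℕ} (p : Nat.Partition n) : {i : ℕ // 0 < i} → ℕ :=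
  fun i => p.parts.count i.1

private lemma frs_c_inj {n : ℕ} : Function.Injective (frs_c (n := n)) := by
  intro p q h
  ext a
  rcases Nat.eq_zero_or_pos a with rfl | ha
  · rw [Multiset.count_eq_zero_of_notMem, Multiset.count_eq_zero_of_notMem]
    · intro hm; exact absurd (q.parts_pos hm) (lt_irrefl 0)
    · intro hm; exact absurd (p.parts_pos hm) (lt_irrefl 0)
  · exact congrFun h ⟨a, ha⟩

private lemma frs_c_sum {n : ℕ} (p : Nat.Partition n) :
    ∑ᶠ i : {i : ℕ // 0 < i}, i.1 * frs_c p i = n := by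
  classical
  set S : Finset {i : ℕ // 0 < i} := p.parts.toFinset.subtype (0 < ·) with hS
  have hsupp : Function.support (fun i : {i : ℕ // 0 < i} => i.1 * frs_c p i) ⊆ ↑S := by
    intro i hi
    have : frs_c p i ≠ 0 := by
      intro h0; apply hi; simp [h0]
    rw [Finset.mem_coe, hS, Finset.mem_subtype, Multiset.mem_toFinset]
    exact Multiset.count_pos.mp (Nat.pos_of_ne_zero this)
  rw [finsum_eq_sum_of_support_subset _ hsupp]
  have h2 : ∑ a ∈ p.parts.toFinset.filter (0 < ·), a * p.parts.count a
      = ∑ i ∈ S, i.1 * frs_c p i := by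
    rw [← Finset.subtype_map (0 < ·), Finset.sum_map]
    rfl
  rw [← h2, Finset.filter_true_of_mem (fun a ha => p.parts_pos (Multiset.mem_toFinset.mp ha))]
  conv_rhs => rw [← p.parts_sum, Finset.sum_multiset_count]
  exact Finset.sum_congr rfl fun a _ => by rw [smul_eq_mul, mul_comm]

private lemma frs_c_support_le {n : ℕ} (p : Nat.Partition n) (i : {i : ℕ // 0 < i})
    (h : frs_c p i ≠ 0) : i.1 ≤ n := by
  have hm : i.1 ∈ p.parts := Multiset.count_pos.mp (Nat.pos_of_ne_zero h)
  calc i.1 ≤ p.parts.sum := Multiset.le_sum_of_mem hm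
    _ = n := p.parts_sum

private lemma frs_set_eq (n : ℕ) :
    {ω : {i : ℕ // 0 < i} → ℕ | (Function.support ω).Finite ∧
        ∑ᶠ i : {i : ℕ // 0 < i}, i.1 * ω i = n}
      = ⋃ p : Nat.Partition n, {frs_c p} := by
  classical
  ext ω
  simp only [Set.mem_setOf_eq, Set.mem_iUnion, Set.mem_singleton_iff]
  constructor
  · rintro ⟨hfin, hsum⟩
    set m : Multiset ℕ := ∑ i ∈ hfin.toFinset, Multiset.replicate (ω i) i.1 with hm
    have hpos : ∀ {a}, a ∈ m → 0 < a := by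
      intro a ha
      rw [hm, Multiset.mem_sum] at ha
      obtain ⟨i, _, hai⟩ := ha
      rw [Multiset.eq_of_mem_replicate hai]
      exact i.2
    have hsupp : Function.support (fun i : {i : ℕ // 0 < i} => i.1 * ω i) ⊆ ↑hfin.toFinset := by
      intro i hi
      rw [Finset.mem_coe, Set.Finite.mem_toFinset]
      intro h0
      exact hi (by simp [Function.mem_support, h0])
    have hmsum : m.sum = n := by
      rw [hm, Multiset.sum_sum, ← hsum, finsum_eq_sum_of_support_subset _ hsupp]
      exact Finset.sum_congr rfl fun i _ => by
        rw [Multiset.sum_replicate, smul_eq_mul, mul_comm]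
    refine ⟨⟨m, hpos, hmsum⟩, ?_⟩
    funext i
    show ω i = m.count i.1
    rw [hm, Multiset.count_sum']
    have : ∀ j ∈ hfin.toFinset,
        Multiset.count i.1 (Multiset.replicate (ω j) j.1) = if j = i then ω j else 0 := by
      intro j _
      rw [Multiset.count_replicate]
      congr 1
      rw [← Subtype.coe_inj]
    rw [Finset.sum_congr rfl this, Finset.sum_ite_eq' hfin.toFinset i ω]
    by_cases hi : i ∈ hfin.toFinset
    · rw [if_pos hi]
    · rw [if_neg hi]
      by_contra h
      exact hi (hfin.mem_toFinset.mpr h)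
  · rintro ⟨p, rfl⟩
    refine ⟨?_, frs_c_sum p⟩
    have : Function.support (frs_c p) ⊆ Subtype.val ⁻¹' ↑p.parts.toFinset := by
      intro i hi
      simp only [Set.mem_preimage, Finset.mem_coe, Multiset.mem_toFinset]
      exact Multiset.count_pos.mp (Nat.pos_of_ne_zero hi)
    exact Set.Finite.subset ((p.parts.toFinset.finite_toSet).preimage
      (Subtype.val_injective.injOn)) this

private lemma frs_singleton (x : ℝ) (hx : x ∈ Set.Ioo (0 : ℝ) 1)
    (μ : Measure ({i : ℕ // 0 < i} → ℕ)) [IsProbabilityMeasure μ]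
    (hindep : iIndepFun (fun (i : {i : ℕ // 0 < i}) (ω : {i : ℕ // 0 < i} → ℕ) => ω i) μ)
    (hmarg : ∀ (i : {i : ℕ // 0 < i}) (k : ℕ),
      μ {ω | ω i = k} = ENNReal.ofReal ((1 - x ^ (i : ℕ)) * x ^ ((i : ℕ) * k)))
    (n : ℕ) (p : Nat.Partition n) :
    μ {frs_c p} = ENNReal.ofReal (x ^ n *
      ∏' i : {i : ℕ // 0 < i}, (1 - x ^ (i : ℕ))) := by
  classical
  obtain ⟨hprod, hppos⟩ := frs_hasProd x hx
  have h1 := frs_pos x hx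
  set C := frs_c p with hC
  set S : ℕ → Finset {i : ℕ // 0 < i} := fun m => (Finset.range (m+1)).subtype (0 < ·)
    with hSdef
  have hSmono : Monotone S := by
    intro a b hab i hi
    rw [hSdef, Finset.mem_subtype] at hi ⊢
    exact Finset.range_subset_range.mpr (by omega) hi
  set A : ℕ → Set ({i : ℕ // 0 < i} → ℕ) :=
    fun m => ⋂ i ∈ S m, (fun ω : {i : ℕ // 0 < i} → ℕ => ω i) ⁻¹' {C i} with hA
  have hAmeas : ∀ m, MeasurableSet (A m) :=
    fun m => Finset.measurableSet_biInter _ (fun i _ =>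
      measurable_pi_apply i (measurableSet_singleton _))
  have hAanti : Antitone A := by
    intro a b hab ω hω
    simp only [hA, Set.mem_iInter] at hω ⊢
    exact fun i hi => hω i (hSmono hab hi)
  have hAint : ⋂ m, A m = {C} := by
    ext ω
    simp only [Set.mem_iInter, Set.mem_singleton_iff, hA, Set.mem_preimage,
      Set.mem_singleton_iff]
    constructor
    · intro h
      funext i
      exact h i.1 i (by
        rw [hSdef, Finset.mem_subtype]
        exact Finset.mem_range.mpr (Nat.lt_succ_of_le le_rfl))
    · rintro rfl m i _; rfl
  have hAval : ∀ m, μ (A m)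
      = ∏ i ∈ S m, ENNReal.ofReal ((1 - x ^ (i : ℕ)) * x ^ ((i : ℕ) * C i)) := by
    intro m
    have h2 : μ (A m) = ∏ i ∈ S m, μ {ω : {i : ℕ // 0 < i} → ℕ | ω i = C i} :=
      hindep.measure_inter_preimage_eq_mul (S m) (sets := fun i => {C i})
        (fun i _ => measurableSet_singleton _)
    rw [h2]
    exact Finset.prod_congr rfl fun i _ => hmarg i (C i)
  have hsum_m : ∀ m, n ≤ m → ∑ i ∈ S m, i.1 * C i = n := by
    intro m hm
    rw [← frs_c_sum p]
    refine (finsum_eq_sum_of_support_subset _ ?_).symm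
    intro i hi
    have hCi : C i ≠ 0 := by
      intro h0
      apply hi
      show i.1 * C i = 0
      rw [h0, mul_zero]
    rw [Finset.mem_coe, hSdef, Finset.mem_subtype, Finset.mem_range]
    exact Nat.lt_succ_of_le (le_trans (frs_c_support_le p i hCi) hm)
  have hstep : ∀ m, n ≤ m → μ (A m)
      = ENNReal.ofReal (x ^ n * ∏ i ∈ S m, (1 - x ^ (i : ℕ))) := by
    intro m hm
    rw [hAval m, ← ENNReal.ofReal_prod_of_nonneg (fun i _ =>
      mul_nonneg (h1 i).le (pow_nonneg hx.1.le _))]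
    congr 1
    rw [Finset.prod_mul_distrib, Finset.prod_pow_eq_pow_sum, hsum_m m hm, mul_comm]
  have hlim1 : Filter.Tendsto (fun m => μ (A m)) Filter.atTop (nhds (μ {C})) := by
    rw [← hAint]
    exact tendsto_measure_iInter_atTop (fun m => (hAmeas m).nullMeasurableSet) hAanti
      ⟨0, measure_ne_top μ _⟩
  have hStend : Filter.Tendsto S Filter.atTop Filter.atTop := by
    apply Filter.tendsto_atTop_finset_of_monotone hSmono
    intro i
    refine ⟨i.1, ?_⟩
    rw [hSdef, Finset.mem_subtype]
    exact Finset.mem_range.mpr (Nat.lt_succ_of_le le_rfl)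
  have hlim2 : Filter.Tendsto (fun m => μ (A m)) Filter.atTop
      (nhds (ENNReal.ofReal (x ^ n *
        ∏' i : {i : ℕ // 0 < i}, (1 - x ^ (i : ℕ))))) := by
    have ht : Filter.Tendsto
        (fun m => x ^ n * ∏ i ∈ S m, (1 - x ^ (i : ℕ))) Filter.atTop
        (nhds (x ^ n * ∏' i : {i : ℕ // 0 < i}, (1 - x ^ (i : ℕ)))) :=
      (hprod.comp hStend).const_mul _
    have h3 := (ENNReal.continuous_ofReal.tendsto _).comp ht
    apply h3.congr'
    filter_upwards [Filter.eventually_ge_atTop n] with m hm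
    exact (hstep m hm).symm
  exact tendsto_nhds_unique hlim1 hlim2

/-- Under the product measure whose `i`-th coordinate is geometric with
parameter `x^i` (independent coordinates), the probability that the coordinate
vector is finitely supported with weighted sum `Σ i·Z_i = n` equals
`p_n · x^n · ∏_{i≥1}(1 - x^i)`, where `p_n` is the number of partitions of `n`. -/
theorem fristedt_weighted_sum_prob (x : ℝ) (hx : x ∈ Set.Ioo (0 : ℝ) 1)
    (μ : Measure ({i : ℕ // 0 < i} → ℕ)) [IsProbabilityMeasure μ]
    (hindep : iIndepFun (fun (i : {i : ℕ // 0 < i}) (ω : {i : ℕ // 0 < i} → ℕ) => ω i) μ)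
    (hmarg : ∀ (i : {i : ℕ // 0 < i}) (k : ℕ),
      μ {ω | ω i = k} = ENNReal.ofReal ((1 - x ^ (i : ℕ)) * x ^ ((i : ℕ) * k)))
    (n : ℕ) (hn : 1 ≤ n) :
    μ {ω | (Function.support ω).Finite ∧ ∑ᶠ i : {i : ℕ // 0 < i}, i.1 * ω i = n} =
      ENNReal.ofReal ((Fintype.card (Nat.Partition n) : ℝ) * x ^ n *
        ∏' i : {i : ℕ // 0 < i}, (1 - x ^ (i : ℕ))) := by
  classical
  rw [frs_set_eq n]
  rw [measure_iUnion
    (fun p q hpq => Set.disjoint_singleton.mpr fun h => hpq (frs_c_inj h))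
    (fun p => measurableSet_singleton _)]
  rw [tsum_fintype]
  rw [Finset.sum_congr rfl (fun p _ => frs_singleton x hx μ hindep hmarg n p),
    Finset.sum_const, Finset.card_univ, nsmul_eq_mul,
    ← ENNReal.ofReal_natCast (Fintype.card (Nat.Partition n)),
    ← ENNReal.ofReal_mul (Nat.cast_nonneg _), ← mul_assoc]
end

section
/- Let c = π/√6 and for n ≥ 1 set x(n) = exp(−c/√n). Then, as n → ∞: (1/n)·Σ_{i=1}^∞ i·x(n)^i/(1 − x(n)^i) → 1, and (1/n^{3/2})·Σ_{i=1}^∞ i²·x(n)^i/(1 − x(n)^i)² → 2/c. Equivalently, for independent geometric random variables Z_i with parameter x(n)^i and T = Σ_i i·Z_i, one has E T ∼ n and Var T ∼ (2/c)·n^{3/2}, so the standard deviation of T is asymptotic to √(2/c)·n^{3/4}. -/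
open Filter Real

/-- The Fristedt tilt `x(n) = exp(-c/√n)` with `c = π/√6`. -/
noncomputable def fristedtX (n : ℕ) : ℝ := Real.exp (-(Real.pi / Real.sqrt 6) / Real.sqrt n)

set_option maxHeartbeats 1000000

namespace FristedtAux


lemma nonneg_of_deriv {F : ℝ → ℝ} (hF : Differentiable ℝ F) (h0 : F 0 = 0)
    (hd : ∀ y : ℝ, 0 ≤ y → 0 ≤ deriv F y) {y : ℝ} (hy : 0 ≤ y) : 0 ≤ F y := by
  have hmono : MonotoneOn F (Set.Ici 0) :=
    monotoneOn_of_deriv_nonneg (convex_Ici 0) hF.continuous.continuousOn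
      hF.differentiableOn
      (fun x hx => hd x (le_of_lt (by simpa [interior_Ici] using hx)))
  have := hmono Set.self_mem_Ici (show y ∈ Set.Ici (0:ℝ) from hy) hy
  simpa [h0] using this

lemma self_le_sinh {y : ℝ} (hy : 0 ≤ y) : y ≤ Real.sinh y := by
  rcases eq_or_lt_of_le hy with h | h
  · simp [← h]
  · exact (Real.self_lt_sinh_iff.2 h).le

lemma sinh_le_mul_cosh {y : ℝ} (hy : 0 ≤ y) : Real.sinh y ≤ y * Real.cosh y := by
  have h : ∀ x : ℝ, HasDerivAt (fun z => z * Real.cosh z - Real.sinh z) (x * Real.sinh x) x := by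
    intro x
    have h2 := ((hasDerivAt_id x).mul (Real.hasDerivAt_cosh x)).sub (Real.hasDerivAt_sinh x)
    refine h2.congr_deriv ?_
    simp only [id_eq]
    ring
  have := nonneg_of_deriv (F := fun z => z * Real.cosh z - Real.sinh z)
    (fun x => (h x).differentiableAt) (by simp)
    (fun x hx => by
      rw [(h x).deriv]
      exact mul_nonneg hx (Real.sinh_nonneg_iff.2 hx)) hy
  have h5 : 0 ≤ y * Real.cosh y - Real.sinh y := this
  linarith

lemma cosh_sub_one_le {y : ℝ} (hy : 0 ≤ y) :
    Real.cosh y - 1 ≤ y ^ 2 / 2 * Real.cosh y := by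
  have h : ∀ x : ℝ, HasDerivAt (fun z => z ^ 2 / 2 * Real.cosh z - Real.cosh z + 1)
      (x * Real.cosh x + x ^ 2 / 2 * Real.sinh x - Real.sinh x) x := by
    intro x
    have h1 : HasDerivAt (fun z : ℝ => z ^ 2 / 2) x x := by
      have := (hasDerivAt_pow 2 x).div_const 2
      refine this.congr_deriv ?_; norm_num
    have h2 := ((h1.mul (Real.hasDerivAt_cosh x)).sub (Real.hasDerivAt_cosh x)).add_const 1
    exact h2
  have := nonneg_of_deriv (F := fun z => z ^ 2 / 2 * Real.cosh z - Real.cosh z + 1)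
    (fun x => (h x).differentiableAt) (by simp)
    (fun x hx => by
      rw [(h x).deriv]
      have h3 := sinh_le_mul_cosh hx
      have h4 := Real.sinh_nonneg_iff.2 hx
      nlinarith) hy
  have h5 : 0 ≤ y ^ 2 / 2 * Real.cosh y - Real.cosh y + 1 := this
  linarith

lemma sinh_sub_self_le {y : ℝ} (hy : 0 ≤ y) :
    Real.sinh y - y ≤ y ^ 3 / 6 * Real.cosh y := by
  have h : ∀ x : ℝ, HasDerivAt (fun z => z ^ 3 / 6 * Real.cosh z - Real.sinh z + z)
      (x ^ 2 / 2 * Real.cosh x + x ^ 3 / 6 * Real.sinh x - Real.cosh x + 1) x := by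
    intro x
    have h1 : HasDerivAt (fun z : ℝ => z ^ 3 / 6) (x ^ 2 / 2) x := by
      have := (hasDerivAt_pow 3 x).div_const 6
      refine this.congr_deriv ?_; norm_num; ring
    have h2 := ((h1.mul (Real.hasDerivAt_cosh x)).sub (Real.hasDerivAt_sinh x)).add (hasDerivAt_id x)
    exact h2
  have := nonneg_of_deriv (F := fun z => z ^ 3 / 6 * Real.cosh z - Real.sinh z + z)
    (fun x => (h x).differentiableAt) (by simp)
    (fun x hx => by
      rw [(h x).deriv]
      have h3 := cosh_sub_one_le hx
      have h4 := Real.sinh_nonneg_iff.2 hx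
      nlinarith [mul_nonneg (pow_nonneg hx 3) h4]) hy
  have h5 : 0 ≤ y ^ 3 / 6 * Real.cosh y - Real.sinh y + y := this
  linarith

lemma cube_div_six_le_sinh {y : ℝ} (hy : 0 ≤ y) : y ^ 3 / 6 ≤ Real.sinh y := by
  have hcosh : ∀ x : ℝ, 0 ≤ x → 1 + x ^ 2 / 2 ≤ Real.cosh x := by
    intro x hx
    have h : ∀ z : ℝ, HasDerivAt (fun w => Real.cosh w - 1 - w ^ 2 / 2)
        (Real.sinh z - z) z := by
      intro z
      have h1 : HasDerivAt (fun w : ℝ => w ^ 2 / 2) z z := by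
        have := (hasDerivAt_pow 2 z).div_const 2
        refine this.congr_deriv ?_; norm_num
      have h2 := ((Real.hasDerivAt_cosh z).sub_const 1).sub h1
      exact h2
    have := nonneg_of_deriv (F := fun w => Real.cosh w - 1 - w ^ 2 / 2)
      (fun z => (h z).differentiableAt) (by simp)
      (fun z hz => by rw [(h z).deriv]; linarith [self_le_sinh hz]) hx
    have h5 : 0 ≤ Real.cosh x - 1 - x ^ 2 / 2 := this
    linarith
  have h : ∀ x : ℝ, HasDerivAt (fun z => Real.sinh z - z - z ^ 3 / 6)
      (Real.cosh x - 1 - x ^ 2 / 2) x := by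
    intro x
    have h1 : HasDerivAt (fun z : ℝ => z ^ 3 / 6) (x ^ 2 / 2) x := by
      have := (hasDerivAt_pow 3 x).div_const 6
      refine this.congr_deriv ?_; norm_num; ring
    exact ((Real.hasDerivAt_sinh x).sub (hasDerivAt_id x)).sub h1
  have := nonneg_of_deriv (F := fun z => Real.sinh z - z - z ^ 3 / 6)
    (fun x => (h x).differentiableAt) (by simp)
    (fun x hx => by rw [(h x).deriv]; linarith [hcosh x hx]) hy
  have h5 : 0 ≤ Real.sinh y - y - y ^ 3 / 6 := this
  linarith

lemma cosh_le_two {y : ℝ} (hy0 : 0 ≤ y) (hy : y ≤ 1 / 2) : Real.cosh y ≤ 2 := by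
  have h1 : Real.exp y ≤ Real.exp (1/2) := Real.exp_le_exp.2 hy
  have h2 : Real.exp (1/2) * Real.exp (1/2) = Real.exp 1 := by
    rw [← Real.exp_add]; norm_num
  have h3 : Real.exp 1 < 2.7182818286 := Real.exp_one_lt_d9
  have h4 : Real.exp (1/2) ≤ 2 := by nlinarith [Real.exp_pos (1/2:ℝ)]
  have h5 : Real.exp (-y) ≤ 1 := Real.exp_le_one_iff.2 (by linarith)
  rw [Real.cosh_eq]
  nlinarith





lemma rpow_neg_nat {s : ℝ} (hs : 0 ≤ s) (n : ℕ) : s ^ (-(n : ℝ)) = 1 / s ^ n := by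
  rw [Real.rpow_neg hs, Real.rpow_natCast, one_div]

lemma one_sub_exp (s : ℝ) : 1 - Real.exp (-s) = 2 * Real.exp (-(s/2)) * Real.sinh (s/2) := by
  have he : Real.exp (-(s/2)) * Real.exp (s/2) = 1 := by
    rw [← Real.exp_add]; simp
  have he2 : Real.exp (-(s/2)) * Real.exp (-(s/2)) = Real.exp (-s) := by
    rw [← Real.exp_add]; ring_nf
  rw [Real.sinh_eq]
  linear_combination he2 - he

lemma one_add_exp (s : ℝ) : 1 + Real.exp (-s) = 2 * Real.exp (-(s/2)) * Real.cosh (s/2) := by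
  have he : Real.exp (-(s/2)) * Real.exp (s/2) = 1 := by
    rw [← Real.exp_add]; simp
  have he2 : Real.exp (-(s/2)) * Real.exp (-(s/2)) = Real.exp (-s) := by
    rw [← Real.exp_add]; ring_nf
  rw [Real.cosh_eq]
  linear_combination - he2 - he

lemma G1_eq {s : ℝ} (hs : 0 < s) :
    Real.exp (-s) / (1 - Real.exp (-s)) ^ 2 = 1 / (4 * Real.sinh (s/2) ^ 2) := by
  have hS : 0 < Real.sinh (s/2) := Real.sinh_pos_iff.2 (by linarith)
  have he2 : Real.exp (-(s/2)) * Real.exp (-(s/2)) = Real.exp (-s) := by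
    rw [← Real.exp_add]; ring_nf
  have hE := Real.exp_pos (-(s/2))
  have hEx := Real.exp_pos (-s)
  have h : (2 * Real.exp (-(s/2)) * Real.sinh (s/2)) ^ 2
      = 4 * Real.exp (-s) * Real.sinh (s/2) ^ 2 := by
    rw [← he2]; ring
  rw [one_sub_exp, h, div_eq_div_iff (by positivity) (by positivity)]
  ring

lemma G2_eq {s : ℝ} (hs : 0 < s) :
    Real.exp (-s) * (1 + Real.exp (-s)) / (1 - Real.exp (-s)) ^ 3
      = Real.cosh (s/2) / (4 * Real.sinh (s/2) ^ 3) := by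
  have hS : 0 < Real.sinh (s/2) := Real.sinh_pos_iff.2 (by linarith)
  have he2 : Real.exp (-(s/2)) * Real.exp (-(s/2)) = Real.exp (-s) := by
    rw [← Real.exp_add]; ring_nf
  have hE := Real.exp_pos (-(s/2))
  have hEx := Real.exp_pos (-s)
  have h3 : (2 * Real.exp (-(s/2)) * Real.sinh (s/2)) ^ 3
      = 8 * Real.exp (-(s/2)) * Real.exp (-s) * Real.sinh (s/2) ^ 3 := by
    rw [← he2]; ring
  rw [one_sub_exp, one_add_exp, h3, div_eq_div_iff (by positivity) (by positivity)]
  ring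

lemma key1 {s : ℝ} (hs : 0 < s) :
    |Real.exp (-s) / (1 - Real.exp (-s)) ^ 2 - 1 / s ^ 2| ≤ s ^ (-(3:ℝ)/2) := by
  rw [G1_eq hs]
  have hy0 : 0 < s / 2 := by linarith
  set y := s / 2 with hyd
  have hS : 0 < Real.sinh y := Real.sinh_pos_iff.2 hy0
  have hyS : y ≤ Real.sinh y := self_le_sinh hy0.le
  have hsy : s = 2 * y := by rw [hyd]; ring
  clear_value y
  have hsq : s ^ 2 = 4 * y ^ 2 := by rw [hsy]; ring
  have hnn : 0 ≤ 1 / s ^ 2 - 1 / (4 * Real.sinh y ^ 2) := by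
    rw [hsq]
    have h1 : 4 * y ^ 2 ≤ 4 * Real.sinh y ^ 2 := by nlinarith
    have := one_div_le_one_div_of_le (by positivity) h1
    linarith
  rw [abs_sub_comm, abs_of_nonneg hnn]
  rcases le_total s 1 with h1 | h1
  · have hy1 : y ≤ 1 / 2 := by linarith [hsy]
    have hC2 : Real.cosh y ≤ 2 := cosh_le_two hy0.le hy1
    have hC1 : 1 ≤ Real.cosh y := Real.one_le_cosh y
    have hA : Real.sinh y - y ≤ y ^ 3 / 6 * Real.cosh y := sinh_sub_self_le hy0.le
    have e1 : Real.sinh y ^ 2 - y ^ 2 ≤ (y ^ 3 / 6 * Real.cosh y) * (Real.sinh y + y) := by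
      have := mul_le_mul_of_nonneg_right hA (by positivity : (0:ℝ) ≤ Real.sinh y + y)
      nlinarith [this]
    have e2 : (y ^ 3 / 6 * Real.cosh y) * (Real.sinh y + y) ≤ (y ^ 3 / 3) * (2 * Real.sinh y) := by
      have ha : y ^ 3 / 6 * Real.cosh y ≤ y ^ 3 / 3 := by nlinarith [pow_pos hy0 3]
      have hb : Real.sinh y + y ≤ 2 * Real.sinh y := by linarith
      have hann : (0:ℝ) ≤ y ^ 3 / 6 * Real.cosh y := by positivity
      have hbnn : (0:ℝ) ≤ Real.sinh y + y := by positivity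
      exact mul_le_mul ha hb hbnn (by positivity)
    have e3 : (y ^ 3 / 3) * (2 * Real.sinh y) ≤ 4 * y ^ 2 * Real.sinh y ^ 2 := by
      have := mul_le_mul_of_nonneg_right hyS (by positivity : (0:ℝ) ≤ y ^ 2 * Real.sinh y)
      nlinarith [this]
    have hprod : Real.sinh y ^ 2 - y ^ 2 ≤ 4 * y ^ 2 * Real.sinh y ^ 2 := by linarith
    have hone : 1 / s ^ 2 - 1 / (4 * Real.sinh y ^ 2) ≤ 1 := by
      rw [hsq]
      rw [div_sub_div _ _ (by positivity : (4:ℝ) * y ^ 2 ≠ 0)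
        (by positivity : (4:ℝ) * Real.sinh y ^ 2 ≠ 0)]
      rw [div_le_one (by positivity)]
      nlinarith [hprod]
    have hrp : (1:ℝ) ≤ s ^ (-(3:ℝ)/2) :=
      Real.one_le_rpow_of_pos_of_le_one_of_nonpos hs h1 (by norm_num)
    linarith
  · have h2 : 1 / s ^ 2 - 1 / (4 * Real.sinh y ^ 2) ≤ 1 / s ^ 2 := by
      have : 0 < 1 / (4 * Real.sinh y ^ 2) := by positivity
      linarith
    have h3 : 1 / s ^ 2 = s ^ (-(2:ℝ)) := by
      rw [show (-(2:ℝ)) = -((2:ℕ):ℝ) by norm_num, rpow_neg_nat hs.le]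
    have h4 : s ^ (-(2:ℝ)) ≤ s ^ (-(3:ℝ)/2) :=
      Real.rpow_le_rpow_of_exponent_le h1 (by norm_num)
    linarith

lemma half_inv_le {s : ℝ} (hs : 0 < s) (h1 : s ≤ 1) : 1 / (2 * s) ≤ 72 * s ^ (-(5:ℝ)/2) := by
  have hss : 1 / s ≤ s ^ (-(5:ℝ)/2) := by
    have h5 : s ^ (-(1:ℝ)) ≤ s ^ (-(5:ℝ)/2) :=
      Real.rpow_le_rpow_of_exponent_ge hs h1 (by norm_num)
    have h6 : s ^ (-(1:ℝ)) = 1 / s := by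
      rw [show (-(1:ℝ)) = -((1:ℕ):ℝ) by norm_num, rpow_neg_nat hs.le, pow_one]
    linarith
  have hrpos : 0 ≤ s ^ (-(5:ℝ)/2) := Real.rpow_nonneg hs.le _
  calc 1 / (2 * s) = 1 / 2 * (1 / s) := by ring
    _ ≤ 1 / 2 * s ^ (-(5:ℝ)/2) := by linarith
    _ ≤ 72 * s ^ (-(5:ℝ)/2) := by linarith

lemma key2 {s : ℝ} (hs : 0 < s) :
    |Real.exp (-s) * (1 + Real.exp (-s)) / (1 - Real.exp (-s)) ^ 3 - 2 / s ^ 3|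
      ≤ 72 * s ^ (-(5:ℝ)/2) := by
  rw [G2_eq hs]
  have hy0 : 0 < s / 2 := by linarith
  set y := s / 2 with hyd
  have hS : 0 < Real.sinh y := Real.sinh_pos_iff.2 hy0
  have hyS : y ≤ Real.sinh y := self_le_sinh hy0.le
  have hC1 : 1 ≤ Real.cosh y := Real.one_le_cosh y
  have hsy : s = 2 * y := by rw [hyd]; ring
  clear_value y
  have hcb : s ^ 3 = 8 * y ^ 3 := by rw [hsy]; ring
  have h2s : 2 / s ^ 3 = 1 / (4 * y ^ 3) := by rw [hcb]; ring
  have hrpos : 0 ≤ s ^ (-(5:ℝ)/2) := Real.rpow_nonneg hs.le _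
  rw [h2s, abs_le]
  constructor
  · rw [neg_le, neg_sub]
    rcases le_total s 1 with h1 | h1
    · have hy1 : y ≤ 1 / 2 := by linarith [hsy]
      have hC2 : Real.cosh y ≤ 2 := cosh_le_two hy0.le hy1
      have hA : Real.sinh y - y ≤ y ^ 3 / 6 * Real.cosh y := sinh_sub_self_le hy0.le
      have h8 : Real.sinh y ^ 3 - y ^ 3
          ≤ (y ^ 3 / 6 * Real.cosh y) * (3 * Real.sinh y ^ 2) := by
        have hfac : Real.sinh y ^ 3 - y ^ 3
            = (Real.sinh y - y) * (Real.sinh y ^ 2 + Real.sinh y * y + y ^ 2) := by ring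
        have h7 : Real.sinh y ^ 2 + Real.sinh y * y + y ^ 2 ≤ 3 * Real.sinh y ^ 2 := by
          nlinarith
        have hnn2 : (0:ℝ) ≤ Real.sinh y ^ 2 + Real.sinh y * y + y ^ 2 := by positivity
        rw [hfac]
        calc (Real.sinh y - y) * (Real.sinh y ^ 2 + Real.sinh y * y + y ^ 2)
            ≤ (y ^ 3 / 6 * Real.cosh y) * (Real.sinh y ^ 2 + Real.sinh y * y + y ^ 2) :=
              mul_le_mul_of_nonneg_right hA hnn2
          _ ≤ (y ^ 3 / 6 * Real.cosh y) * (3 * Real.sinh y ^ 2) := by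
              apply mul_le_mul_of_nonneg_left h7
              positivity
      have h10 : Real.cosh y * y / 2 ≤ Real.sinh y := by
        have : Real.cosh y * y ≤ 2 * y := mul_le_mul_of_nonneg_right hC2 hy0.le
        linarith
      have h11 : (Real.cosh y * y / 2) * (y ^ 2 * Real.sinh y ^ 2) ≤ y ^ 2 * Real.sinh y ^ 3 := by
        have := mul_le_mul_of_nonneg_right h10
          (by positivity : (0:ℝ) ≤ y ^ 2 * Real.sinh y ^ 2)
        nlinarith [this]
      have h12 : y ^ 3 ≤ Real.cosh y * y ^ 3 := by nlinarith [pow_pos hy0 3]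
      have hprod : Real.sinh y ^ 3 ≤ Real.cosh y * y ^ 3 + y ^ 2 * Real.sinh y ^ 3 := by
        nlinarith [h8, h11, h12]
      have hstep : 1 / (4 * y ^ 3) - Real.cosh y / (4 * Real.sinh y ^ 3) ≤ 1 / (2 * s) := by
        have heq : 1 / (4 * y ^ 3) - Real.cosh y / (4 * Real.sinh y ^ 3)
            = (Real.sinh y ^ 3 - Real.cosh y * y ^ 3) / (4 * y ^ 3 * Real.sinh y ^ 3) := by
          field_simp
        have heq2 : 1 / (2 * s) = 1 / (4 * y) := by rw [hsy]; ring
        rw [heq, heq2, div_le_div_iff₀ (by positivity) (by positivity)]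
        nlinarith [mul_le_mul_of_nonneg_right
          (show Real.sinh y ^ 3 - Real.cosh y * y ^ 3 ≤ y ^ 2 * Real.sinh y ^ 3 by linarith)
          (by positivity : (0:ℝ) ≤ 4 * y)]
      linarith [half_inv_le hs h1]
    · have hpos : 0 < Real.cosh y / (4 * Real.sinh y ^ 3) := by positivity
      have h3 : 1 / (4 * y ^ 3) = 2 * s ^ (-(3:ℝ)) := by
        rw [show (-(3:ℝ)) = -((3:ℕ):ℝ) by norm_num, rpow_neg_nat hs.le, hcb]; ring
      have h4 : s ^ (-(3:ℝ)) ≤ s ^ (-(5:ℝ)/2) :=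
        Real.rpow_le_rpow_of_exponent_le h1 (by norm_num)
      linarith
  · rcases le_total s 1 with h1 | h1
    · have hy1 : y ≤ 1 / 2 := by linarith [hsy]
      have hC2 : Real.cosh y ≤ 2 := cosh_le_two hy0.le hy1
      have hB : Real.cosh y - 1 ≤ y ^ 2 / 2 * Real.cosh y := cosh_sub_one_le hy0.le
      have hCy : Real.cosh y ≤ 1 + y ^ 2 := by nlinarith
      have hS3 : y ^ 3 ≤ Real.sinh y ^ 3 := by
        have := pow_le_pow_left₀ hy0.le hyS 3
        simpa using this
      have hprod : Real.cosh y * (4 * y ^ 3) ≤ (1 + y ^ 2) * (4 * Real.sinh y ^ 3) := by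
        have h9 : Real.cosh y * y ^ 3 ≤ (1 + y ^ 2) * y ^ 3 :=
          mul_le_mul_of_nonneg_right hCy (by positivity)
        have h10 : (1 + y ^ 2) * y ^ 3 ≤ (1 + y ^ 2) * Real.sinh y ^ 3 :=
          mul_le_mul_of_nonneg_left hS3 (by positivity)
        nlinarith [h9, h10]
      have hstep : Real.cosh y / (4 * Real.sinh y ^ 3) ≤ 1 / (4 * y ^ 3) + 1 / (2 * s) := by
        have heq : 1 / (4 * y ^ 3) + 1 / (2 * s) = (1 + y ^ 2) / (4 * y ^ 3) := by
          rw [hsy]; field_simp; ring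
        rw [heq, div_le_div_iff₀ (by positivity) (by positivity)]
        linarith [hprod]
      linarith [half_inv_le hs h1]
    · have hy12 : 1 / 2 ≤ y := by linarith [hsy]
      have hCS : Real.cosh y ≤ 3 * Real.sinh y := by
        have h5 : Real.cosh y - Real.sinh y = Real.exp (-y) := Real.cosh_sub_sinh y
        have h6 : Real.exp (-y) ≤ 1 := Real.exp_le_one_iff.2 (by linarith)
        have h7 : 1 / 2 ≤ Real.sinh y := le_trans hy12 hyS
        linarith
      have hS2 : y ^ 4 / 6 ≤ Real.sinh y ^ 2 := by
        have h8 : y ^ 3 / 6 ≤ Real.sinh y := cube_div_six_le_sinh hy0.le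
        calc y ^ 4 / 6 = y * (y ^ 3 / 6) := by ring
          _ ≤ Real.sinh y * Real.sinh y := mul_le_mul hyS h8 (by positivity) hS.le
          _ = Real.sinh y ^ 2 := by ring
      have hstep : Real.cosh y / (4 * Real.sinh y ^ 3) ≤ 72 / s ^ 4 := by
        have e0 : (72:ℝ) / s ^ 4 = (9/2) / y ^ 4 := by
          rw [hsy]; ring
        have e1 : Real.cosh y / (4 * Real.sinh y ^ 3)
            ≤ 3 * Real.sinh y / (4 * Real.sinh y ^ 3) := by gcongr
        have e1b : 3 * Real.sinh y / (4 * Real.sinh y ^ 3) = 3 / (4 * Real.sinh y ^ 2) := by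
          rw [div_eq_div_iff (by positivity) (by positivity)]; ring
        have e1c : 3 / (4 * Real.sinh y ^ 2) ≤ (9/2) / y ^ 4 := by
          rw [div_le_div_iff₀ (by positivity) (by positivity)]
          nlinarith [hS2]
        rw [e0]
        calc Real.cosh y / (4 * Real.sinh y ^ 3)
            ≤ 3 * Real.sinh y / (4 * Real.sinh y ^ 3) := e1
          _ = 3 / (4 * Real.sinh y ^ 2) := e1b
          _ ≤ (9/2) / y ^ 4 := e1c
      have e2 : (72:ℝ) / s ^ 4 = 72 * s ^ (-(4:ℝ)) := by
        rw [show (-(4:ℝ)) = -((4:ℕ):ℝ) by norm_num, rpow_neg_nat hs.le]; ring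
      have e3 : s ^ (-(4:ℝ)) ≤ s ^ (-(5:ℝ)/2) :=
        Real.rpow_le_rpow_of_exponent_le h1 (by norm_num)
      have hy3 : 0 < 1 / (4 * y ^ 3) := by positivity
      nlinarith [hstep, e2, e3]


lemma norm_lt_one {y : ℝ} (h0 : 0 ≤ y) (h1 : y < 1) : ‖y‖ < 1 := by
  rw [Real.norm_eq_abs, abs_of_nonneg h0]; exact h1

lemma hasSum_geom1 {y : ℝ} (h0 : 0 ≤ y) (h1 : y < 1) :
    HasSum (fun k : ℕ => y ^ (k+1)) (y / (1 - y)) := by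
  have h := (hasSum_geometric_of_lt_one h0 h1).mul_left y
  have he : (fun k : ℕ => y * y ^ k) = fun k => y ^ (k+1) := by
    funext k; rw [pow_succ]; ring
  rw [he] at h
  simpa [div_eq_mul_inv] using h

lemma hasSum_geom2 {y : ℝ} (h0 : 0 ≤ y) (h1 : y < 1) :
    HasSum (fun k : ℕ => ((k:ℝ)+1) * y ^ (k+1)) (y / (1 - y)^2) := by
  have h := (hasSum_choose_mul_geometric_of_norm_lt_one 1 (norm_lt_one h0 h1)).mul_left y
  have he : (fun n : ℕ => y * ((((n+1).choose 1 : ℕ):ℝ) * y ^ n))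
      = fun n : ℕ => ((n:ℝ)+1) * y ^ (n+1) := by
    funext n
    rw [Nat.choose_one_right, pow_succ]
    push_cast
    ring
  rw [he] at h
  convert h using 1
  · rfl
  ring

lemma choose_two_cast (n : ℕ) : (((n+2).choose 2 : ℕ) : ℝ) * 2 = ((n:ℝ)+1) * ((n:ℝ)+2) := by
  have hdvd : 2 ∣ (n+1) * (n+2) := (Nat.even_mul_succ_self (n+1)).two_dvd
  have h2 : (n+2).choose 2 * 2 = (n+1) * (n+2) := by
    rw [Nat.choose_two_right]
    have h3 : n + 2 - 1 = n + 1 := rfl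
    rw [h3, show (n+2) * (n+1) = (n+1) * (n+2) by ring, Nat.div_mul_cancel hdvd]
  have := congrArg (fun m : ℕ => (m : ℝ)) h2
  push_cast at this
  linarith

lemma hasSum_geom3 {y : ℝ} (h0 : 0 ≤ y) (h1 : y < 1) :
    HasSum (fun k : ℕ => ((k:ℝ)+1)^2 * y ^ (k+1)) (y * (1 + y) / (1 - y)^3) := by
  have hn := norm_lt_one h0 h1
  have hA := hasSum_choose_mul_geometric_of_norm_lt_one 2 hn
  have hB := hasSum_choose_mul_geometric_of_norm_lt_one 1 hn
  have h := ((hA.mul_left 2).sub hB).mul_left y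
  have he : (fun n : ℕ => y * (2 * ((((n+2).choose 2 : ℕ):ℝ) * y ^ n)
        - (((n+1).choose 1 : ℕ):ℝ) * y ^ n))
      = fun n : ℕ => ((n:ℝ)+1)^2 * y ^ (n+1) := by
    funext n
    rw [Nat.choose_one_right, pow_succ]
    have hc := choose_two_cast n
    push_cast
    linear_combination (y^n * y) * hc
  rw [he] at h
  convert h using 1
  · rfl
  have hne : (1:ℝ) - y ≠ 0 := by intro hcon; nlinarith
  field_simp
  ring

lemma hasSum_inv_sq : HasSum (fun k : ℕ => 1 / ((k:ℝ)+1)^2) (Real.pi^2/6) := by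
  have h := hasSum_zeta_two
  have h2 := (hasSum_nat_add_iff' 1).2 h
  simp only [Finset.range_one, Finset.sum_singleton] at h2
  norm_num at h2
  convert h2 using 2 with k
  · rfl
  push_cast
  ring

lemma summable_inv_rpow32 : Summable (fun k : ℕ => ((k:ℝ)+1) ^ (-(3:ℝ)/2)) := by
  have h : Summable (fun n : ℕ => (n:ℝ) ^ (-(3:ℝ)/2)) :=
    Real.summable_nat_rpow.2 (by norm_num)
  have h2 := (summable_nat_add_iff 1).2 h
  convert h2 using 2 with k
  · rfl
  push_cast
  ring_nf

noncomputable def Z32 : ℝ := ∑' k : ℕ, ((k:ℝ)+1) ^ (-(3:ℝ)/2)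

lemma est1 {t : ℝ} (ht : 0 < t) :
    |(∑' k : ℕ, Real.exp (-(((k:ℝ)+1)*t)) / (1 - Real.exp (-(((k:ℝ)+1)*t))) ^ 2)
      - Real.pi^2/6/t^2| ≤ Z32 * t ^ (-(3:ℝ)/2) := by
  set f : ℕ → ℝ := fun k => Real.exp (-(((k:ℝ)+1)*t)) / (1 - Real.exp (-(((k:ℝ)+1)*t))) ^ 2 with hfd
  set g : ℕ → ℝ := fun k => 1 / (((k:ℝ)+1)*t) ^ 2 with hgd
  set h : ℕ → ℝ := fun k => (((k:ℝ)+1)*t) ^ (-(3:ℝ)/2) with hhd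
  have hak : ∀ k : ℕ, 0 < ((k:ℝ)+1)*t := fun k => mul_pos (by positivity) ht
  have hbound : ∀ k, |f k - g k| ≤ h k := fun k => key1 (hak k)
  have hg : HasSum g (Real.pi^2/6/t^2) := by
    have h0 := hasSum_inv_sq.mul_right (1/t^2)
    have he : (fun k : ℕ => (1 / ((k:ℝ)+1)^2) * (1/t^2)) = g := by
      funext k
      show (1 / ((k:ℝ)+1)^2) * (1/t^2) = 1 / (((k:ℝ)+1)*t) ^ 2
      rw [div_mul_div_comm, one_mul, mul_pow]
    rw [he] at h0
    convert h0 using 1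
    · rfl
    ring
  have hh : HasSum h (Z32 * t ^ (-(3:ℝ)/2)) := by
    have h0 := summable_inv_rpow32.hasSum.mul_right (t ^ (-(3:ℝ)/2))
    have he : (fun k : ℕ => ((k:ℝ)+1) ^ (-(3:ℝ)/2) * t ^ (-(3:ℝ)/2)) = h := by
      funext k
      show ((k:ℝ)+1) ^ (-(3:ℝ)/2) * t ^ (-(3:ℝ)/2) = (((k:ℝ)+1)*t) ^ (-(3:ℝ)/2)
      rw [Real.mul_rpow (by positivity) ht.le]
    rw [he] at h0
    exact h0
  have hfg : Summable (fun k => f k - g k) := by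
    apply Summable.of_norm_bounded hh.summable
    intro k
    rw [Real.norm_eq_abs]
    exact hbound k
  have hf : Summable f := by
    have := hfg.add hg.summable
    simpa using this
  have heq : (∑' k, f k) - Real.pi^2/6/t^2 = ∑' k, (f k - g k) := by
    rw [Summable.tsum_sub hf hg.summable, hg.tsum_eq]
  rw [heq]
  have habs : Summable (fun k => |f k - g k|) := hfg.abs
  calc |∑' k, (f k - g k)| ≤ ∑' k, |f k - g k| := by
        have := norm_tsum_le_tsum_norm (f := fun k => f k - g k)
          (by simpa [Real.norm_eq_abs] using habs)
        simpa [Real.norm_eq_abs] using this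
    _ ≤ ∑' k, h k := Summable.tsum_le_tsum hbound habs hh.summable
    _ = Z32 * t ^ (-(3:ℝ)/2) := hh.tsum_eq

lemma est2 {t : ℝ} (ht : 0 < t) :
    |(∑' k : ℕ, ((k:ℝ)+1) * (Real.exp (-(((k:ℝ)+1)*t)) * (1 + Real.exp (-(((k:ℝ)+1)*t)))
        / (1 - Real.exp (-(((k:ℝ)+1)*t))) ^ 3))
      - Real.pi^2/3/t^3| ≤ 72 * Z32 * t ^ (-(5:ℝ)/2) := by
  set f : ℕ → ℝ := fun k => ((k:ℝ)+1) * (Real.exp (-(((k:ℝ)+1)*t)) * (1 + Real.exp (-(((k:ℝ)+1)*t)))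
        / (1 - Real.exp (-(((k:ℝ)+1)*t))) ^ 3) with hfd
  set g : ℕ → ℝ := fun k => ((k:ℝ)+1) * (2 / (((k:ℝ)+1)*t) ^ 3) with hgd
  set h : ℕ → ℝ := fun k => ((k:ℝ)+1) * (72 * ((((k:ℝ)+1)*t) ^ (-(5:ℝ)/2))) with hhd
  have hak : ∀ k : ℕ, 0 < ((k:ℝ)+1)*t := fun k => mul_pos (by positivity) ht
  have hbound : ∀ k, |f k - g k| ≤ h k := by
    intro k
    have hk2 := key2 (hak k)
    have e : f k - g k = ((k:ℝ)+1) * (Real.exp (-(((k:ℝ)+1)*t)) * (1 + Real.exp (-(((k:ℝ)+1)*t)))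
        / (1 - Real.exp (-(((k:ℝ)+1)*t))) ^ 3 - 2 / (((k:ℝ)+1)*t) ^ 3) := by
      show ((k:ℝ)+1) * (Real.exp (-(((k:ℝ)+1)*t)) * (1 + Real.exp (-(((k:ℝ)+1)*t)))
        / (1 - Real.exp (-(((k:ℝ)+1)*t))) ^ 3) - ((k:ℝ)+1) * (2 / (((k:ℝ)+1)*t) ^ 3) = _
      ring
    have e2 : h k = ((k:ℝ)+1) * (72 * ((((k:ℝ)+1)*t) ^ (-(5:ℝ)/2))) := rfl
    rw [e, e2, abs_mul, abs_of_nonneg (by positivity : (0:ℝ) ≤ (k:ℝ)+1)]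
    exact mul_le_mul_of_nonneg_left hk2 (by positivity)
  have hg : HasSum g (Real.pi^2/3/t^3) := by
    have h0 := hasSum_inv_sq.mul_right (2/t^3)
    have he : (fun k : ℕ => (1 / ((k:ℝ)+1)^2) * (2/t^3)) = g := by
      funext k
      show (1 / ((k:ℝ)+1)^2) * (2/t^3) = ((k:ℝ)+1) * (2 / (((k:ℝ)+1)*t) ^ 3)
      rw [mul_pow]
      have hk : ((k:ℝ)+1) ≠ 0 := by positivity
      have htne : t ≠ 0 := ne_of_gt ht
      field_simp
    rw [he] at h0
    convert h0 using 1
    · rfl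
    ring
  have hh : HasSum h (72 * Z32 * t ^ (-(5:ℝ)/2)) := by
    have h0 := summable_inv_rpow32.hasSum.mul_right (72 * t ^ (-(5:ℝ)/2))
    have he : (fun k : ℕ => ((k:ℝ)+1) ^ (-(3:ℝ)/2) * (72 * t ^ (-(5:ℝ)/2))) = h := by
      funext k
      have hkpos : (0:ℝ) < (k:ℝ)+1 := by positivity
      show ((k:ℝ)+1) ^ (-(3:ℝ)/2) * (72 * t ^ (-(5:ℝ)/2))
          = ((k:ℝ)+1) * (72 * ((((k:ℝ)+1)*t) ^ (-(5:ℝ)/2)))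
      rw [Real.mul_rpow hkpos.le ht.le,
        show (-(5:ℝ)/2) = (-(3:ℝ)/2) + (-1:ℝ) by norm_num,
        Real.rpow_add hkpos, Real.rpow_neg_one]
      have hinv : ((k:ℝ)+1) * ((k:ℝ)+1)⁻¹ = 1 := mul_inv_cancel₀ (by positivity)
      have hr : t ^ ((-(3:ℝ)/2) + (-1:ℝ)) = t ^ (-(5:ℝ)/2) := by norm_num
      rw [hr]
      linear_combination (-72 * ((k:ℝ)+1) ^ (-(3:ℝ)/2) * t ^ (-(5:ℝ)/2)) * hinv
    rw [he] at h0
    have hval : (72:ℝ) * Z32 * t ^ (-(5:ℝ)/2) = Z32 * (72 * t ^ (-(5:ℝ)/2)) := by ring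
    rw [hval]
    exact h0
  have hfg : Summable (fun k => f k - g k) := by
    apply Summable.of_norm_bounded hh.summable
    intro k
    rw [Real.norm_eq_abs]
    exact hbound k
  have hf : Summable f := by
    have := hfg.add hg.summable
    simpa using this
  have heq : (∑' k, f k) - Real.pi^2/3/t^3 = ∑' k, (f k - g k) := by
    rw [Summable.tsum_sub hf hg.summable, hg.tsum_eq]
  rw [heq]
  have habs : Summable (fun k => |f k - g k|) := hfg.abs
  calc |∑' k, (f k - g k)| ≤ ∑' k, |f k - g k| := by
        have := norm_tsum_le_tsum_norm (f := fun k => f k - g k)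
          (by simpa [Real.norm_eq_abs] using habs)
        simpa [Real.norm_eq_abs] using this
    _ ≤ ∑' k, h k := Summable.tsum_le_tsum hbound habs hh.summable
    _ = 72 * Z32 * t ^ (-(5:ℝ)/2) := hh.tsum_eq


lemma swap1 {x : ℝ} (hx0 : 0 ≤ x) (hx1 : x < 1) :
    ∑' i : ℕ, ((i:ℝ)+1) * x ^ (i+1) / (1 - x ^ (i+1))
      = ∑' k : ℕ, x ^ (k+1) / (1 - x ^ (k+1)) ^ 2 := by
  set F : ℕ → ℕ → ℝ := fun i k => ((i:ℝ)+1) * x ^ ((i+1)*(k+1)) with hFd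
  have hxm : ∀ m : ℕ, 0 ≤ x ^ (m+1) ∧ x ^ (m+1) < 1 :=
    fun m => ⟨pow_nonneg hx0 _, pow_lt_one₀ hx0 hx1 (Nat.succ_ne_zero m)⟩
  have hxle : ∀ m : ℕ, x ^ (m+1) ≤ x := by
    intro m
    have := pow_le_pow_of_le_one hx0 hx1.le (Nat.one_le_iff_ne_zero.2 (Nat.succ_ne_zero m))
    simpa using this
  have hrow : ∀ i : ℕ, HasSum (F i) (((i:ℝ)+1) * x ^ (i+1) / (1 - x ^ (i+1))) := by
    intro i
    have h := (hasSum_geom1 (hxm i).1 (hxm i).2).mul_left ((i:ℝ)+1)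
    have he : (fun k : ℕ => ((i:ℝ)+1) * (x ^ (i+1)) ^ (k+1)) = F i := by
      funext k
      show ((i:ℝ)+1) * (x ^ (i+1)) ^ (k+1) = ((i:ℝ)+1) * x ^ ((i+1)*(k+1))
      rw [← pow_mul]
    rw [he] at h
    rw [mul_div_assoc]
    exact h
  have hcol : ∀ k : ℕ, HasSum (fun i => F i k) (x ^ (k+1) / (1 - x ^ (k+1)) ^ 2) := by
    intro k
    have h := hasSum_geom2 (hxm k).1 (hxm k).2
    have he : (fun i : ℕ => ((i:ℝ)+1) * (x ^ (k+1)) ^ (i+1)) = fun i => F i k := by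
      funext i
      show ((i:ℝ)+1) * (x ^ (k+1)) ^ (i+1) = ((i:ℝ)+1) * x ^ ((i+1)*(k+1))
      rw [← pow_mul, mul_comm (k+1) (i+1)]
    rw [he] at h
    exact h
  have hrowsum : Summable (fun i : ℕ => ((i:ℝ)+1) * x ^ (i+1) / (1 - x ^ (i+1))) := by
    have hcomp : Summable (fun i : ℕ => ((i:ℝ)+1) * x ^ (i+1) / (1-x)) := by
      have := (hasSum_geom2 hx0 hx1).summable.mul_right (1/(1-x))
      apply this.congr
      intro i
      rw [mul_one_div]
    apply Summable.of_nonneg_of_le _ _ hcomp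
    · intro i
      have h1 := (hxm i).1
      have h2 := (hxm i).2
      exact div_nonneg (by positivity) (by linarith)
    · intro i
      apply div_le_div_of_nonneg_left (by positivity) (by linarith) (by linarith [hxle i])
  have hunc : Summable (Function.uncurry F) := by
    rw [summable_prod_of_nonneg]
    · constructor
      · intro i
        exact (hrow i).summable
      · apply Summable.congr hrowsum
        intro i
        exact ((hrow i).tsum_eq).symm
    · intro p
      have : (0:ℝ) ≤ ((p.1:ℝ)+1) * x ^ ((p.1+1)*(p.2+1)) := by positivity
      exact this
  calc ∑' i : ℕ, ((i:ℝ)+1) * x ^ (i+1) / (1 - x ^ (i+1))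
      = ∑' i : ℕ, ∑' k : ℕ, F i k := tsum_congr (fun i => ((hrow i).tsum_eq).symm)
    _ = ∑' k : ℕ, ∑' i : ℕ, F i k :=
        (Summable.tsum_comm' hunc (fun i => (hrow i).summable) (fun k => (hcol k).summable)).symm
    _ = ∑' k : ℕ, x ^ (k+1) / (1 - x ^ (k+1)) ^ 2 := tsum_congr (fun k => (hcol k).tsum_eq)

lemma swap2 {x : ℝ} (hx0 : 0 ≤ x) (hx1 : x < 1) :
    ∑' i : ℕ, ((i:ℝ)+1)^2 * x ^ (i+1) / (1 - x ^ (i+1)) ^ 2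
      = ∑' k : ℕ, ((k:ℝ)+1) * (x ^ (k+1) * (1 + x ^ (k+1)) / (1 - x ^ (k+1)) ^ 3) := by
  set F : ℕ → ℕ → ℝ := fun i k => ((i:ℝ)+1)^2 * (((k:ℝ)+1) * x ^ ((i+1)*(k+1))) with hFd
  have hxm : ∀ m : ℕ, 0 ≤ x ^ (m+1) ∧ x ^ (m+1) < 1 :=
    fun m => ⟨pow_nonneg hx0 _, pow_lt_one₀ hx0 hx1 (Nat.succ_ne_zero m)⟩
  have hxle : ∀ m : ℕ, x ^ (m+1) ≤ x := by
    intro m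
    have := pow_le_pow_of_le_one hx0 hx1.le (Nat.one_le_iff_ne_zero.2 (Nat.succ_ne_zero m))
    simpa using this
  have hrow : ∀ i : ℕ, HasSum (F i) (((i:ℝ)+1)^2 * x ^ (i+1) / (1 - x ^ (i+1)) ^ 2) := by
    intro i
    have h := (hasSum_geom2 (hxm i).1 (hxm i).2).mul_left (((i:ℝ)+1)^2)
    have he : (fun k : ℕ => ((i:ℝ)+1)^2 * (((k:ℝ)+1) * (x ^ (i+1)) ^ (k+1))) = F i := by
      funext k
      show ((i:ℝ)+1)^2 * (((k:ℝ)+1) * (x ^ (i+1)) ^ (k+1))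
          = ((i:ℝ)+1)^2 * (((k:ℝ)+1) * x ^ ((i+1)*(k+1)))
      rw [← pow_mul]
    rw [he] at h
    rw [mul_div_assoc]
    exact h
  have hcol : ∀ k : ℕ, HasSum (fun i => F i k)
      (((k:ℝ)+1) * (x ^ (k+1) * (1 + x ^ (k+1)) / (1 - x ^ (k+1)) ^ 3)) := by
    intro k
    have h := (hasSum_geom3 (hxm k).1 (hxm k).2).mul_left ((k:ℝ)+1)
    have he : (fun i : ℕ => ((k:ℝ)+1) * (((i:ℝ)+1)^2 * (x ^ (k+1)) ^ (i+1)))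
        = fun i => F i k := by
      funext i
      show ((k:ℝ)+1) * (((i:ℝ)+1)^2 * (x ^ (k+1)) ^ (i+1))
          = ((i:ℝ)+1)^2 * (((k:ℝ)+1) * x ^ ((i+1)*(k+1)))
      rw [← pow_mul, mul_comm (k+1) (i+1)]
      ring
    rw [he] at h
    exact h
  have hrowsum : Summable (fun i : ℕ => ((i:ℝ)+1)^2 * x ^ (i+1) / (1 - x ^ (i+1)) ^ 2) := by
    have hcomp : Summable (fun i : ℕ => ((i:ℝ)+1)^2 * x ^ (i+1) / (1-x)^2) := by
      have := (hasSum_geom3 hx0 hx1).summable.mul_right (1/(1-x)^2)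
      apply this.congr
      intro i
      rw [mul_one_div]
    apply Summable.of_nonneg_of_le _ _ hcomp
    · intro i
      have h1 := (hxm i).1
      have h2 := (hxm i).2
      exact div_nonneg (by positivity) (by positivity)
    · intro i
      have hle : (1-x)^2 ≤ (1 - x ^ (i+1))^2 := by
        apply pow_le_pow_left₀ (by linarith) (by linarith [hxle i])
      apply div_le_div_of_nonneg_left (by positivity) (pow_pos (by linarith) 2) hle
  have hunc : Summable (Function.uncurry F) := by
    rw [summable_prod_of_nonneg]
    · constructor
      · intro i
        exact (hrow i).summable
      · apply Summable.congr hrowsum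
        intro i
        exact ((hrow i).tsum_eq).symm
    · intro p
      have : (0:ℝ) ≤ ((p.1:ℝ)+1)^2 * (((p.2:ℝ)+1) * x ^ ((p.1+1)*(p.2+1))) := by positivity
      exact this
  calc ∑' i : ℕ, ((i:ℝ)+1)^2 * x ^ (i+1) / (1 - x ^ (i+1)) ^ 2
      = ∑' i : ℕ, ∑' k : ℕ, F i k := tsum_congr (fun i => ((hrow i).tsum_eq).symm)
    _ = ∑' k : ℕ, ∑' i : ℕ, F i k :=
        (Summable.tsum_comm' hunc (fun i => (hrow i).summable) (fun k => (hcol k).summable)).symm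
    _ = ∑' k : ℕ, ((k:ℝ)+1) * (x ^ (k+1) * (1 + x ^ (k+1)) / (1 - x ^ (k+1)) ^ 3) :=
        tsum_congr (fun k => (hcol k).tsum_eq)


lemma exp_lt_one' {t : ℝ} (ht : 0 < t) : Real.exp (-t) < 1 := by
  rw [show (1:ℝ) = Real.exp 0 by simp]
  exact Real.exp_lt_exp.2 (by linarith)

lemma bound1 {n : ℕ} (hn : 1 ≤ n) :
    |(1 / (n:ℝ)) * (∑' i : ℕ, ((i:ℝ)+1) * fristedtX n ^ (i+1) / (1 - fristedtX n ^ (i+1))) - 1|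
      ≤ (Z32 * (Real.pi / Real.sqrt 6) ^ (-(3:ℝ)/2)) * (n:ℝ) ^ (-(1:ℝ)/4) := by
  set c := Real.pi / Real.sqrt 6 with hcd
  have hc : 0 < c := by rw [hcd]; positivity
  have hN : (0:ℝ) < n := by
    have : (1:ℝ) ≤ (n:ℝ) := by exact_mod_cast hn
    linarith
  have hsq : (0:ℝ) < Real.sqrt n := Real.sqrt_pos.2 hN
  set t := c / Real.sqrt n with htd
  have ht : 0 < t := div_pos hc hsq
  have hxe : fristedtX n = Real.exp (-t) := by
    rw [fristedtX, htd, hcd, neg_div]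
  have hx0 : (0:ℝ) ≤ fristedtX n := by rw [hxe]; positivity
  have hx1 : fristedtX n < 1 := by rw [hxe]; exact exp_lt_one' ht
  have hpowe : ∀ k : ℕ, fristedtX n ^ (k+1) = Real.exp (-(((k:ℝ)+1)*t)) := by
    intro k
    rw [hxe, ← Real.exp_nat_mul]
    congr 1
    push_cast
    ring
  set S : ℝ := ∑' i : ℕ, ((i:ℝ)+1) * fristedtX n ^ (i+1) / (1 - fristedtX n ^ (i+1)) with hSd
  have hSe : S = ∑' k : ℕ, Real.exp (-(((k:ℝ)+1)*t)) / (1 - Real.exp (-(((k:ℝ)+1)*t))) ^ 2 := by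
    rw [hSd, swap1 hx0 hx1]
    apply tsum_congr
    intro k
    rw [hpowe k]
  have hc2 : c^2 = Real.pi^2/6 := by
    rw [hcd, div_pow, Real.sq_sqrt (by norm_num : (0:ℝ) ≤ 6)]
  have ht2 : t^2 = c^2 / (n:ℝ) := by
    rw [htd, div_pow, Real.sq_sqrt hN.le]
  have hval : Real.pi^2/6/t^2 = (n:ℝ) := by
    rw [ht2, hc2]
    have hpi : Real.pi ≠ 0 := Real.pi_ne_zero
    field_simp
  have hest : |S - (n:ℝ)| ≤ Z32 * t ^ (-(3:ℝ)/2) := by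
    rw [hSe, ← hval]
    exact est1 ht
  have e1 : t ^ (-(3:ℝ)/2) = c ^ (-(3:ℝ)/2) * (n:ℝ) ^ ((3:ℝ)/4) := by
    rw [htd, Real.div_rpow hc.le (Real.sqrt_nonneg _), Real.sqrt_eq_rpow,
      ← Real.rpow_mul hN.le]
    rw [show (1/(2:ℝ)) * (-(3:ℝ)/2) = -((3:ℝ)/4) by norm_num]
    rw [Real.rpow_neg hN.le ((3:ℝ)/4), div_eq_mul_inv, inv_inv]
  have e2 : (n:ℝ) ^ ((3:ℝ)/4) / (n:ℝ) = (n:ℝ) ^ (-(1:ℝ)/4) := by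
    rw [show -(1:ℝ)/4 = (3:ℝ)/4 - 1 by norm_num, Real.rpow_sub hN, Real.rpow_one]
  have hdiff : (1/(n:ℝ)) * S - 1 = (S - n) / n := by
    field_simp
  rw [hdiff, abs_div, abs_of_pos hN]
  calc |S - (n:ℝ)| / (n:ℝ) ≤ (Z32 * t ^ (-(3:ℝ)/2)) / (n:ℝ) := by gcongr
    _ = (Z32 * c ^ (-(3:ℝ)/2)) * ((n:ℝ) ^ ((3:ℝ)/4) / (n:ℝ)) := by rw [e1]; ring
    _ = (Z32 * c ^ (-(3:ℝ)/2)) * (n:ℝ) ^ (-(1:ℝ)/4) := by rw [e2]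

lemma bound2 {n : ℕ} (hn : 1 ≤ n) :
    |(1 / (n:ℝ) ^ ((3:ℝ)/2)) * (∑' i : ℕ,
        ((i:ℝ)+1)^2 * fristedtX n ^ (i+1) / (1 - fristedtX n ^ (i+1)) ^ 2)
      - 2 / (Real.pi / Real.sqrt 6)|
      ≤ (72 * Z32 * (Real.pi / Real.sqrt 6) ^ (-(5:ℝ)/2)) * (n:ℝ) ^ (-(1:ℝ)/4) := by
  set c := Real.pi / Real.sqrt 6 with hcd
  have hc : 0 < c := by rw [hcd]; positivity
  have hN : (0:ℝ) < n := by
    have : (1:ℝ) ≤ (n:ℝ) := by exact_mod_cast hn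
    linarith
  have hsq : (0:ℝ) < Real.sqrt n := Real.sqrt_pos.2 hN
  set t := c / Real.sqrt n with htd
  have ht : 0 < t := div_pos hc hsq
  have hxe : fristedtX n = Real.exp (-t) := by
    rw [fristedtX, htd, hcd, neg_div]
  have hx0 : (0:ℝ) ≤ fristedtX n := by rw [hxe]; positivity
  have hx1 : fristedtX n < 1 := by rw [hxe]; exact exp_lt_one' ht
  have hpowe : ∀ k : ℕ, fristedtX n ^ (k+1) = Real.exp (-(((k:ℝ)+1)*t)) := by
    intro k
    rw [hxe, ← Real.exp_nat_mul]
    congr 1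
    push_cast
    ring
  have hN32 : (0:ℝ) < (n:ℝ) ^ ((3:ℝ)/2) := Real.rpow_pos_of_pos hN _
  set S : ℝ := ∑' i : ℕ, ((i:ℝ)+1)^2 * fristedtX n ^ (i+1) / (1 - fristedtX n ^ (i+1)) ^ 2
    with hSd
  have hSe : S = ∑' k : ℕ, ((k:ℝ)+1) * (Real.exp (-(((k:ℝ)+1)*t))
      * (1 + Real.exp (-(((k:ℝ)+1)*t))) / (1 - Real.exp (-(((k:ℝ)+1)*t))) ^ 3) := by
    rw [hSd, swap2 hx0 hx1]
    apply tsum_congr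
    intro k
    rw [hpowe k]
  have hc2 : c^2 = Real.pi^2/6 := by
    rw [hcd, div_pow, Real.sq_sqrt (by norm_num : (0:ℝ) ≤ 6)]
  have ht3 : t^3 = c^3 / (n:ℝ) ^ ((3:ℝ)/2) := by
    rw [htd, div_pow]
    congr 1
    rw [Real.sqrt_eq_rpow, ← Real.rpow_natCast ((n:ℝ) ^ ((1:ℝ)/2)) 3, ← Real.rpow_mul hN.le]
    norm_num
  have hval : Real.pi^2/3/t^3 = 2/c * (n:ℝ) ^ ((3:ℝ)/2) := by
    rw [ht3]
    have hpi : Real.pi ≠ 0 := Real.pi_ne_zero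
    field_simp
    linear_combination (-6) * hc2
  have hest : |S - 2/c * (n:ℝ) ^ ((3:ℝ)/2)| ≤ 72 * Z32 * t ^ (-(5:ℝ)/2) := by
    rw [hSe, ← hval]
    exact est2 ht
  have e1 : t ^ (-(5:ℝ)/2) = c ^ (-(5:ℝ)/2) * (n:ℝ) ^ ((5:ℝ)/4) := by
    rw [htd, Real.div_rpow hc.le (Real.sqrt_nonneg _), Real.sqrt_eq_rpow,
      ← Real.rpow_mul hN.le]
    rw [show (1/(2:ℝ)) * (-(5:ℝ)/2) = -((5:ℝ)/4) by norm_num]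
    rw [Real.rpow_neg hN.le ((5:ℝ)/4), div_eq_mul_inv, inv_inv]
  have e2 : (n:ℝ) ^ ((5:ℝ)/4) / (n:ℝ) ^ ((3:ℝ)/2) = (n:ℝ) ^ (-(1:ℝ)/4) := by
    rw [← Real.rpow_sub hN]
    norm_num
  have hdiff : (1/(n:ℝ) ^ ((3:ℝ)/2)) * S - 2/c
      = (S - 2/c * (n:ℝ) ^ ((3:ℝ)/2)) / (n:ℝ) ^ ((3:ℝ)/2) := by
    field_simp
  rw [hdiff, abs_div, abs_of_pos hN32]
  calc |S - 2/c * (n:ℝ) ^ ((3:ℝ)/2)| / (n:ℝ) ^ ((3:ℝ)/2)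
      ≤ (72 * Z32 * t ^ (-(5:ℝ)/2)) / (n:ℝ) ^ ((3:ℝ)/2) := by gcongr
    _ = (72 * Z32 * c ^ (-(5:ℝ)/2)) * ((n:ℝ) ^ ((5:ℝ)/4) / (n:ℝ) ^ ((3:ℝ)/2)) := by
        rw [e1]; ring
    _ = (72 * Z32 * c ^ (-(5:ℝ)/2)) * (n:ℝ) ^ (-(1:ℝ)/4) := by rw [e2]

lemma tendsto_aux (K : ℝ) :
    Tendsto (fun n : ℕ => K * (n:ℝ) ^ (-(1:ℝ)/4)) atTop (nhds 0) := by
  have h := (tendsto_rpow_neg_atTop (by norm_num : (0:ℝ) < 1/4)).comp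
    (tendsto_natCast_atTop_atTop (R := ℝ))
  have h2 : Tendsto (fun n : ℕ => (n:ℝ) ^ (-(1:ℝ)/4)) atTop (nhds 0) := by
    have he : (fun n : ℕ => (n:ℝ) ^ (-(1:ℝ)/4))
        = (fun x : ℝ => x ^ (-((1:ℝ)/4))) ∘ (fun n : ℕ => (n:ℝ)) := by
      funext n
      simp [neg_div]
    rw [he]
    exact h
  have := h2.const_mul K
  simpa using this

lemma squeeze_to_limit {f : ℕ → ℝ} {L K : ℝ}
    (hb : ∀ n : ℕ, 1 ≤ n → |f n - L| ≤ K * (n:ℝ) ^ (-(1:ℝ)/4)) :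
    Tendsto f atTop (nhds L) := by
  have h0 : Tendsto (fun n => f n - L) atTop (nhds 0) := by
    apply squeeze_zero_norm' _ (tendsto_aux K)
    filter_upwards [eventually_ge_atTop 1] with n hn
    rw [Real.norm_eq_abs]
    exact hb n hn
  have h1 := h0.add (tendsto_const_nhds (α := ℕ) (x := L))
  simpa using h1


end FristedtAux

/-- **Mean and variance asymptotics of the Fristedt weighted sum.**
With `c = π/√6` and `x(n) = exp(-c/√n)`:
`(1/n)·Σ_{i≥1} i·x^i/(1-x^i) → 1` and
`(1/n^{3/2})·Σ_{i≥1} i²·x^i/(1-x^i)² → 2/c`,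
i.e. `E T ∼ n` and `Var T ∼ (2/c)·n^{3/2}` for `T = Σ i·Z_i`. -/
theorem fristedt_mean_var_asymptotics :
    Tendsto (fun n : ℕ =>
        (1 / (n : ℝ)) * ∑' i : ℕ,
          ((i : ℝ) + 1) * fristedtX n ^ (i + 1) / (1 - fristedtX n ^ (i + 1)))
      atTop (nhds 1) ∧
    Tendsto (fun n : ℕ =>
        (1 / (n : ℝ) ^ ((3 : ℝ) / 2)) * ∑' i : ℕ,
          ((i : ℝ) + 1) ^ 2 * fristedtX n ^ (i + 1) / (1 - fristedtX n ^ (i + 1)) ^ 2)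
      atTop (nhds (2 / (Real.pi / Real.sqrt 6))) := by
  constructor
  · exact FristedtAux.squeeze_to_limit (fun n hn => FristedtAux.bound1 hn)
  · exact FristedtAux.squeeze_to_limit (fun n hn => FristedtAux.bound2 hn)
end

section
/- Let c = π/√6 and for n ≥ 1 set x(n) = exp(−c/√n). Then, as n → ∞: (1/n)·Σ_{i=2}^n i·x(n)^i/(1 + x(n)^i) → 1/2, and (1/n^{3/2})·Σ_{i=2}^n i²·x(n)^i/(1 + x(n)^i)² → 1/c. Equivalently, for independent Bernoulli random variables ε_i with P(ε_i = 1) = x(n)^i/(1 + x(n)^i), the weighted sum T_A = Σ_{i=2}^n i·ε_i satisfies E T_A ∼ n/2 and Var T_A ∼ (1/c)·n^{3/2}. -/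
open Filter Real

lemma aux_texp_le {t : ℝ} (_ht : 0 ≤ t) : t * exp (-t) ≤ 1 - exp (-t) := by
  nlinarith [Real.add_one_le_exp t, Real.exp_pos (-t), Real.exp_pos t,
    Real.exp_neg t, mul_pos (Real.exp_pos (-t)) (Real.exp_pos t),
    (by rw [← Real.exp_add]; simp : Real.exp (-t) * Real.exp t = 1)]

lemma aux_exp_inv_le_half {t : ℝ} (ht : 1 ≤ t) : exp (-t) ≤ 1/2 := by
  have h1 : (2:ℝ) ≤ exp 1 := by nlinarith [Real.exp_one_gt_d9]
  have h2 : exp 1 ≤ exp t := Real.exp_le_exp.2 ht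
  have h3 : Real.exp (-t) * Real.exp t = 1 := by rw [← Real.exp_add]; simp
  nlinarith [Real.exp_pos (-t)]

lemma aux_exp_le_three {t : ℝ} (ht : t ≤ 1) : exp t ≤ 3 := by
  have h2 : exp t ≤ exp 1 := Real.exp_le_exp.2 ht
  nlinarith [Real.exp_one_lt_d9]

lemma ineq_sq {t : ℝ} (ht : 0 < t) : t^2 * exp (-t) ≤ 20 * (1 - exp (-t))^2 := by
  have hmul : Real.exp (-t) * Real.exp t = 1 := by rw [← Real.exp_add]; simp
  rcases le_or_gt t 1 with h | h
  · have h1 : t * exp (-t) ≤ 1 - exp (-t) := aux_texp_le ht.le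
    have h3 : exp t ≤ 3 := aux_exp_le_three h
    have h4 : (0:ℝ) < exp (-t) := Real.exp_pos _
    have h5 : (1:ℝ)/3 ≤ exp (-t) := by nlinarith [Real.exp_pos t]
    nlinarith [sq_nonneg (t * exp (-t)), mul_pos (mul_pos ht ht) h4]
  · have h4 : exp (-t) ≤ 1/2 := aux_exp_inv_le_half h.le
    have h5 : (1:ℝ) + t/2 ≤ exp (t/2) := by
      have := Real.add_one_le_exp (t/2); linarith
    have hsq : exp (t/2) * exp (t/2) = exp t := by rw [← Real.exp_add]; ring_nf
    have h6 : t^2 ≤ 4 * exp t := by nlinarith [Real.exp_pos (t/2)]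
    have h7 : t^2 * exp (-t) ≤ 4 := by nlinarith [Real.exp_pos (-t), Real.exp_pos t]
    nlinarith [Real.exp_pos (-t)]

lemma ineq_cube {t : ℝ} (ht : 0 < t) :
    t^3 * exp (-t) * (1 + exp (-t)) ≤ 450 * (1 - exp (-t))^3 := by
  have hmul : Real.exp (-t) * Real.exp t = 1 := by rw [← Real.exp_add]; simp
  have h4 : (0:ℝ) < exp (-t) := Real.exp_pos _
  rcases le_or_gt t 1 with h | h
  · have h1 : t * exp (-t) ≤ 1 - exp (-t) := aux_texp_le ht.le
    have h3 : exp t ≤ 3 := aux_exp_le_three h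
    have h5 : (1:ℝ)/3 ≤ exp (-t) := by nlinarith [Real.exp_pos t]
    have hcube : (t * exp (-t))^3 ≤ (1 - exp (-t))^3 :=
      pow_le_pow_left₀ (by positivity) h1 3
    have hle1 : exp (-t) ≤ 1 := by nlinarith [Real.exp_pos t, Real.one_le_exp ht.le]
    have hu2 : 1 + exp (-t) ≤ 450 * exp (-t)^2 := by nlinarith
    have key : t^3 * exp (-t) * (1 + exp (-t)) ≤ 450 * (t * exp (-t))^3 := by
      have hpos : (0:ℝ) ≤ t^3 * exp (-t) := by positivity
      calc t^3 * exp (-t) * (1 + exp (-t)) ≤ t^3 * exp (-t) * (450 * exp (-t)^2) :=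
            mul_le_mul_of_nonneg_left hu2 hpos
        _ = 450 * (t * exp (-t))^3 := by ring
    linarith [mul_le_mul_of_nonneg_left hcube (by norm_num : (0:ℝ) ≤ 450)]
  · have h4' : exp (-t) ≤ 1/2 := aux_exp_inv_le_half h.le
    have h5 : (1:ℝ) + t/3 ≤ exp (t/3) := by
      have := Real.add_one_le_exp (t/3); linarith
    have hsq : exp (t/3) * exp (t/3) * exp (t/3) = exp t := by rw [← Real.exp_add, ← Real.exp_add]; ring_nf
    have h6 : t^3 ≤ 27 * exp t := by
      have hE : (0:ℝ) < exp (t/3) := Real.exp_pos _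
      have ht3 : t ≤ 3 * exp (t/3) := by linarith
      have := pow_le_pow_left₀ ht.le ht3 3
      calc t^3 ≤ (3 * exp (t/3))^3 := this
        _ = 27 * exp t := by rw [← hsq]; ring
    have h7 : t^3 * exp (-t) ≤ 27 := by nlinarith [Real.exp_pos t]
    have h8 : (1:ℝ)/8 ≤ (1 - exp (-t))^3 := by
      have := pow_le_pow_left₀ (by norm_num : (0:ℝ) ≤ 1/2) (by linarith : (1:ℝ)/2 ≤ 1 - exp (-t)) 3
      norm_num at this ⊢; linarith
    nlinarith

lemma tendsto_div_one_sub_exp :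
    Tendsto (fun t : ℝ => t / (1 - exp (-t))) (nhdsWithin 0 {(0:ℝ)}ᶜ) (nhds 1) := by
  have hd : HasDerivAt Real.exp 1 0 := by simpa using Real.hasDerivAt_exp 0
  have h1 : Tendsto (slope Real.exp 0) (nhdsWithin 0 {(0:ℝ)}ᶜ) (nhds 1) :=
    hasDerivAt_iff_tendsto_slope.mp hd
  have h2 : Tendsto (fun t : ℝ => exp t / slope Real.exp 0 t)
      (nhdsWithin 0 {(0:ℝ)}ᶜ) (nhds 1) := by
    have hexp : Tendsto (fun t : ℝ => exp t) (nhdsWithin 0 {(0:ℝ)}ᶜ) (nhds 1) := by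
      simpa using (Real.continuous_exp.continuousAt (x := (0:ℝ))).tendsto.mono_left
        nhdsWithin_le_nhds
    simpa [Pi.div_def] using hexp.div h1 one_ne_zero
  refine h2.congr' ?_
  filter_upwards [self_mem_nhdsWithin] with t ht
  have ht0 : t ≠ 0 := ht
  have het : exp t ≠ 1 := by
    intro h; exact ht0 (by rwa [Real.exp_eq_one_iff] at h)
  have het0 : exp t - 1 ≠ 0 := sub_ne_zero.mpr het
  rw [slope_def_field, Real.exp_zero, sub_zero]
  rw [Real.exp_neg]
  field_simp

lemma hasSum_inv_sq_add_one : HasSum (fun n : ℕ => 1 / ((n:ℝ)+1)^2) (π^2/6) := by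
  have hz : HasSum (fun n : ℕ => 1/((n:ℝ))^2) (π^2/6) := hasSum_zeta_two
  have := (hasSum_nat_add_iff (f := fun n : ℕ => 1/((n:ℝ))^2) 1).mpr (by simpa using hz)
  simpa using this

lemma hasSum_eta2 : HasSum (fun j : ℕ => (-1:ℝ)^j / ((j:ℝ)+1)^2) (π^2/12) := by
  have hz1 := hasSum_inv_sq_add_one
  have hodd : HasSum (fun n : ℕ => if Odd n then 1/((n:ℝ)+1)^2 else 0) (π^2/24) := by
    have hinj : Function.Injective (fun m : ℕ => 2*m+1) := fun a b h => by dsimp only at h; omega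
    rw [← Function.Injective.hasSum_iff hinj ?_]
    · have heq : (fun m : ℕ => (if Odd (2*m+1) then 1/(((2*m+1:ℕ):ℝ)+1)^2 else 0))
          = fun m : ℕ => (1/4) * (1/((m:ℝ)+1)^2) := by
        funext m
        rw [if_pos ⟨m, by ring⟩]
        push_cast
        field_simp
        ring
      show HasSum (fun m : ℕ => (if Odd (2*m+1) then 1/(((2*m+1:ℕ):ℝ)+1)^2 else 0)) _
      rw [heq]
      convert hz1.mul_left (1/4) using 1
      · rfl
      ring
    · intro n hn
      have : ¬ Odd n := by
        intro ⟨k, hk⟩; exact hn ⟨k, by simp [hk, mul_comm]⟩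
      simp [this]
  have hsub := hz1.sub (hodd.mul_left 2)
  have hfun : (fun j : ℕ => (-1:ℝ)^j / ((j:ℝ)+1)^2)
      = fun b : ℕ => 1/((b:ℝ)+1)^2 - 2 * (if Odd b then 1/((b:ℝ)+1)^2 else 0) := by
    funext n
    rcases Nat.even_or_odd n with he | ho
    · simp [Nat.not_odd_iff_even.2 he, he.neg_one_pow]
    · simp only [if_pos ho, ho.neg_one_pow]
      ring
  rw [hfun, show π^2/12 = π^2/6 - 2*(π^2/24) by ring]
  exact hsub

section geo
variable {y : ℝ}

lemma geo_norm (hy : |y| < 1) : ‖y‖ < 1 := by rwa [Real.norm_eq_abs]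

lemma one_sub_ne (hy : |y| < 1) : (1:ℝ) - y ≠ 0 := by
  have : y < 1 := lt_of_le_of_lt (le_abs_self y) hy
  linarith

lemma hasSum_geo0 (hy : |y| < 1) : HasSum (fun n : ℕ => y^n) (1/(1-y)) := by
  simpa [one_div] using hasSum_geometric_of_norm_lt_one (geo_norm hy)

lemma hasSum_geo1 (hy : |y| < 1) : HasSum (fun n : ℕ => (n:ℝ) * y^n) (y/(1-y)^2) :=
  hasSum_coe_mul_geometric_of_norm_lt_one (geo_norm hy)

lemma hasSum_geo_choose (hy : |y| < 1) :
    HasSum (fun n : ℕ => (((n+2).choose 2 : ℕ) : ℝ) * y^n) (1/(1-y)^3) := by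
  simpa using hasSum_choose_mul_geometric_of_norm_lt_one 2 (geo_norm hy)

lemma hasSum_geo2 (hy : |y| < 1) :
    HasSum (fun n : ℕ => (n:ℝ)^2 * y^n) (y*(1+y)/(1-y)^3) := by
  have h3 := (hasSum_geo_choose hy).mul_left 2
  have h1 := (hasSum_geo1 hy).mul_left 3
  have h0 := (hasSum_geo0 hy).mul_left 2
  have := h3.sub (h1.add h0)
  have hne := one_sub_ne hy
  have hfun : (fun n : ℕ => 2 * ((((n+2).choose 2 : ℕ) : ℝ) * y^n)
      - (3 * ((n:ℝ) * y^n) + 2 * y^n)) = fun n : ℕ => (n:ℝ)^2 * y^n := by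
    funext n
    have : (((n+2).choose 2 : ℕ) : ℝ) = ((n:ℝ)+2) * ((n:ℝ)+1) / 2 := by
      rw [Nat.cast_choose_two]
      push_cast
      ring
    rw [this]; ring
  rw [hfun] at this
  convert this using 1
  · rfl
  field_simp
  ring

lemma hasSum_geo_add_one (hy : |y| < 1) :
    HasSum (fun n : ℕ => ((n:ℝ)+1) * y^n) (1/(1-y)^2) := by
  have := (hasSum_geo1 hy).add (hasSum_geo0 hy)
  have hne := one_sub_ne hy
  have hfun : (fun n : ℕ => (n:ℝ) * y^n + y^n) = fun n : ℕ => ((n:ℝ)+1) * y^n := by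
    funext n; ring
  rw [hfun] at this
  convert this using 1
  field_simp
  ring

lemma hasSum_geo_add_one_sq (hy : |y| < 1) :
    HasSum (fun n : ℕ => ((n:ℝ)+1)^2 * y^n) ((1+y)/(1-y)^3) := by
  have := ((hasSum_geo2 hy).add ((hasSum_geo1 hy).mul_left 2)).add (hasSum_geo0 hy)
  have hne := one_sub_ne hy
  have hfun : (fun n : ℕ => ((n:ℝ)^2 * y^n + 2 * ((n:ℝ) * y^n)) + y^n)
      = fun n : ℕ => ((n:ℝ)+1)^2 * y^n := by
    funext n; ring
  rw [hfun] at this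
  convert this using 1
  field_simp
  ring

end geo

section ident
variable {x : ℝ}

lemma xpow_abs_lt (h0 : 0 < x) (h1 : x < 1) {m : ℕ} (hm : 1 ≤ m) : |x^m| < 1 := by
  rw [abs_of_pos (pow_pos h0 m)]
  exact pow_lt_one₀ h0.le h1 (by omega)

lemma neg_xpow_abs_lt (h0 : 0 < x) (h1 : x < 1) {m : ℕ} (hm : 1 ≤ m) : |(-(x^m))| < 1 := by
  rw [abs_neg]; exact xpow_abs_lt h0 h1 hm

lemma summable_bound_mul (h0 : 0 < x) (h1 : x < 1) (k : ℕ) :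
    Summable (fun p : ℕ × ℕ => ((p.1:ℝ)^k * x^p.1) * (((p.2:ℝ)+1) * x^p.2)) := by
  have hn : ‖x‖ < 1 := by rw [Real.norm_eq_abs, abs_of_pos h0]; exact h1
  exact Summable.mul_of_nonneg (f := fun n : ℕ => (n:ℝ)^k * x^n)
    (g := fun n : ℕ => ((n:ℝ)+1) * x^n)
    (summable_pow_mul_geometric_of_norm_lt_one k hn)
    (hasSum_geo_add_one (by rwa [abs_of_pos h0])).summable
    (fun n => by positivity) (fun n => by positivity)

lemma pow_le_of_exp_le (h0 : 0 < x) (h1 : x < 1) {a b : ℕ} (hab : b ≤ a) : x^a ≤ x^b :=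
  pow_le_pow_of_le_one h0.le h1.le hab

lemma identity1 (h0 : 0 < x) (h1 : x < 1) :
    (∑' i : ℕ, (i:ℝ) * x^i / (1 + x^i)) =
      ∑' j : ℕ, (-1:ℝ)^j * x^(j+1) / (1 - x^(j+1))^2 := by
  set F : ℕ → ℕ → ℝ := fun i j => (i:ℝ) * (-1)^j * x^(i*(j+1)) with hF
  have hrow : ∀ i : ℕ, HasSum (F i) ((i:ℝ) * x^i / (1 + x^i)) := by
    intro i
    rcases Nat.eq_zero_or_pos i with rfl | hi
    · have hzero : F 0 = fun _ => (0:ℝ) := by funext j; simp [hF]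
      rw [hzero]
      simpa using hasSum_zero
    · have hx : ‖-(x^i)‖ < 1 := by
        rw [Real.norm_eq_abs]; exact neg_xpow_abs_lt h0 h1 hi
      have hgeo := (hasSum_geometric_of_norm_lt_one hx).mul_left ((i:ℝ) * x^i)
      have hfun : (fun j : ℕ => (i:ℝ) * x^i * (-(x^i))^j) = F i := by
        funext j
        simp only [hF]
        rw [neg_pow, ← pow_mul, show i*(j+1) = i*j + i by ring, pow_add]
        ring
      rw [hfun] at hgeo
      convert hgeo using 1
      · rfl
      rw [sub_neg_eq_add, div_eq_mul_inv]
  have hcol : ∀ j : ℕ, HasSum (fun i => F i j)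
      ((-1:ℝ)^j * x^(j+1) / (1 - x^(j+1))^2) := by
    intro j
    have hy : |x^(j+1)| < 1 := xpow_abs_lt h0 h1 (by omega)
    have hgeo := (hasSum_geo1 hy).mul_left ((-1:ℝ)^j)
    have hfun : (fun i : ℕ => (-1:ℝ)^j * ((i:ℝ) * (x^(j+1))^i)) = fun i => F i j := by
      funext i
      simp only [hF]
      rw [← pow_mul, mul_comm (j+1) i]
      ring
    rw [hfun] at hgeo
    convert hgeo using 1
    · rfl
    ring
  have hsum : Summable (Function.uncurry F) := by
    apply Summable.of_norm_bounded
      (g := fun p : ℕ × ℕ => ((p.1:ℝ)^1 * x^p.1) * (((p.2:ℝ)+1) * x^p.2))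
      (summable_bound_mul h0 h1 1)
    rintro ⟨i, j⟩
    simp only [Function.uncurry, hF]
    rw [Real.norm_eq_abs, abs_mul, abs_mul, abs_pow, abs_neg, abs_one, one_pow, mul_one,
      Nat.abs_cast, abs_of_pos (pow_pos h0 _)]
    rcases Nat.eq_zero_or_pos i with rfl | hi
    · simp
    · have hle : x^(i*(j+1)) ≤ x^(i+j) := by
        apply pow_le_of_exp_le h0 h1
        nlinarith [hi]
      calc (i:ℝ) * x^(i*(j+1)) ≤ (i:ℝ) * x^(i+j) := by
            apply mul_le_mul_of_nonneg_left hle (by positivity)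
        _ ≤ ((i:ℝ)^1 * x^i) * (((j:ℝ)+1) * x^j) := by
            rw [pow_add, pow_one]
            have key : (0:ℝ) ≤ (i:ℝ) * x^i * x^j * (j:ℝ) := by positivity
            nlinarith [key]
  calc (∑' i : ℕ, (i:ℝ) * x^i / (1 + x^i))
      = ∑' i : ℕ, ∑' j : ℕ, F i j := by
        refine tsum_congr fun i => ?_
        exact (hrow i).tsum_eq.symm
    _ = ∑' j : ℕ, ∑' i : ℕ, F i j := by
        exact (Summable.tsum_comm' hsum (fun i => (hrow i).summable)
          (fun j => (hcol j).summable)).symm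
    _ = ∑' j : ℕ, (-1:ℝ)^j * x^(j+1) / (1 - x^(j+1))^2 := by
        refine tsum_congr fun j => ?_
        exact (hcol j).tsum_eq

end ident

section ident2
variable {x : ℝ}

lemma identity2 (h0 : 0 < x) (h1 : x < 1) :
    (∑' i : ℕ, (i:ℝ)^2 * x^i / (1 + x^i)^2) =
      ∑' j : ℕ, (-1:ℝ)^j * ((j:ℝ)+1) * (x^(j+1) * (1 + x^(j+1))) / (1 - x^(j+1))^3 := by
  set F : ℕ → ℕ → ℝ := fun i j => (i:ℝ)^2 * ((-1)^j * ((j:ℝ)+1)) * x^(i*(j+1)) with hF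
  have hrow : ∀ i : ℕ, HasSum (F i) ((i:ℝ)^2 * x^i / (1 + x^i)^2) := by
    intro i
    rcases Nat.eq_zero_or_pos i with rfl | hi
    · have hzero : F 0 = fun _ => (0:ℝ) := by funext j; simp [hF]
      rw [hzero]
      simpa using hasSum_zero
    · have hx : |(-(x^i))| < 1 := neg_xpow_abs_lt h0 h1 hi
      have hgeo := (hasSum_geo_add_one hx).mul_left ((i:ℝ)^2 * x^i)
      have hfun : (fun j : ℕ => (i:ℝ)^2 * x^i * (((j:ℝ)+1) * (-(x^i))^j)) = F i := by
        funext j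
        simp only [hF]
        rw [neg_pow, ← pow_mul, show i*(j+1) = i*j + i by ring, pow_add]
        ring
      rw [hfun] at hgeo
      convert hgeo using 1
      · rfl
      rw [sub_neg_eq_add, mul_one_div]
  have hcol : ∀ j : ℕ, HasSum (fun i => F i j)
      ((-1:ℝ)^j * ((j:ℝ)+1) * (x^(j+1) * (1 + x^(j+1))) / (1 - x^(j+1))^3) := by
    intro j
    have hy : |x^(j+1)| < 1 := xpow_abs_lt h0 h1 (by omega)
    have hgeo := (hasSum_geo2 hy).mul_left ((-1:ℝ)^j * ((j:ℝ)+1))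
    have hfun : (fun i : ℕ => (-1:ℝ)^j * ((j:ℝ)+1) * ((i:ℝ)^2 * (x^(j+1))^i))
        = fun i => F i j := by
      funext i
      simp only [hF]
      rw [← pow_mul, mul_comm (j+1) i]
      ring
    rw [hfun] at hgeo
    convert hgeo using 1
    · rfl
    rw [mul_div_assoc, mul_div_assoc]
  have hsum : Summable (Function.uncurry F) := by
    apply Summable.of_norm_bounded
      (g := fun p : ℕ × ℕ => ((p.1:ℝ)^2 * x^p.1) * (((p.2:ℝ)+1) * x^p.2))
      (summable_bound_mul h0 h1 2)
    rintro ⟨i, j⟩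
    simp only [Function.uncurry, hF]
    have habs : |(i:ℝ)^2 * ((-1)^j * ((j:ℝ)+1)) * x^(i*(j+1))|
        = (i:ℝ)^2 * ((j:ℝ)+1) * x^(i*(j+1)) := by
      rw [abs_mul, abs_mul, abs_mul, abs_pow, abs_pow, abs_neg, abs_one, one_pow, one_mul,
        Nat.abs_cast, abs_of_pos (pow_pos h0 _), abs_of_pos (by positivity : (0:ℝ) < (j:ℝ)+1)]
    rw [Real.norm_eq_abs, habs]
    rcases Nat.eq_zero_or_pos i with rfl | hi
    · simp
    · have hle : x^(i*(j+1)) ≤ x^(i+j) := by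
        apply pow_le_of_exp_le h0 h1
        nlinarith [hi]
      calc (i:ℝ)^2 * ((j:ℝ)+1) * x^(i*(j+1)) ≤ (i:ℝ)^2 * ((j:ℝ)+1) * x^(i+j) := by
            apply mul_le_mul_of_nonneg_left hle (by positivity)
        _ = ((i:ℝ)^2 * x^i) * (((j:ℝ)+1) * x^j) := by
            rw [pow_add]; ring
  calc (∑' i : ℕ, (i:ℝ)^2 * x^i / (1 + x^i)^2)
      = ∑' i : ℕ, ∑' j : ℕ, F i j := by
        exact tsum_congr fun i => (hrow i).tsum_eq.symm
    _ = ∑' j : ℕ, ∑' i : ℕ, F i j := by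
        exact (Summable.tsum_comm' hsum (fun i => (hrow i).summable)
          (fun j => (hcol j).summable)).symm
    _ = _ := tsum_congr fun j => (hcol j).tsum_eq

end ident2


noncomputable def fcC : ℝ := Real.pi / Real.sqrt 6
noncomputable def epsF (n : ℕ) : ℝ := fcC / Real.sqrt n

lemma fcC_pos : 0 < fcC := div_pos Real.pi_pos (Real.sqrt_pos.2 (by norm_num))

lemma fcC_sq : fcC^2 = π^2/6 := by
  rw [fcC, div_pow, Real.sq_sqrt (by norm_num : (6:ℝ) ≥ 0)]

lemma epsF_pos {n : ℕ} (hn : 1 ≤ n) : 0 < epsF n :=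
  div_pos fcC_pos (Real.sqrt_pos.2 (by exact_mod_cast hn))

lemma epsF_le {n : ℕ} (hn : 1 ≤ n) : epsF n ≤ fcC := by
  rw [epsF, div_le_iff₀ (Real.sqrt_pos.2 (by exact_mod_cast hn : (0:ℝ) < n))]
  nlinarith [fcC_pos, Real.one_le_sqrt.mpr (by exact_mod_cast hn : (1:ℝ) ≤ n)]

lemma fristedtX_eq (n : ℕ) : fristedtX n = exp (-(epsF n)) := by
  rw [fristedtX, epsF, fcC, neg_div]

lemma fristedtX_pow (n : ℕ) (m : ℕ) : (fristedtX n)^m = exp (-((m:ℝ) * epsF n)) := by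
  rw [fristedtX_eq, ← Real.exp_nat_mul]
  ring_nf

lemma fristedtX_pos (n : ℕ) : 0 < fristedtX n := Real.exp_pos _

lemma fristedtX_lt_one {n : ℕ} (hn : 1 ≤ n) : fristedtX n < 1 := by
  rw [fristedtX_eq, Real.exp_lt_one_iff]
  linarith [epsF_pos hn]

lemma epsF_sq {n : ℕ} (hn : 1 ≤ n) : (epsF n)^2 = fcC^2 / n := by
  rw [epsF, div_pow, Real.sq_sqrt (by positivity : (0:ℝ) ≤ (n:ℝ))]

lemma sqrt_cube (n : ℕ) : (Real.sqrt n)^3 = (n:ℝ)^((3:ℝ)/2) := by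
  rw [Real.sqrt_eq_rpow, ← Real.rpow_natCast ((n:ℝ)^((1:ℝ)/2)) 3,
    ← Real.rpow_mul (by positivity)]
  norm_num

lemma epsF_cube {n : ℕ} (hn : 1 ≤ n) : (epsF n)^3 = fcC^3 / (n:ℝ)^((3:ℝ)/2) := by
  rw [epsF, div_pow, sqrt_cube]

lemma epsF_tendsto : Tendsto epsF atTop (nhds 0) := by
  have h1 : Tendsto (fun n : ℕ => Real.sqrt n) atTop atTop := by
    have := (tendsto_rpow_atTop (by norm_num : (0:ℝ) < 1/2)).comp tendsto_natCast_atTop_atTop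
    exact this.congr (fun n => (Real.sqrt_eq_rpow _).symm)
  have := h1.inv_tendsto_atTop
  have h2 := this.const_mul fcC
  show Tendsto (fun n : ℕ => fcC / Real.sqrt n) atTop (nhds 0)
  simpa [epsF, div_eq_mul_inv, mul_zero] using h2

lemma epsF_mul_tendsto (m : ℝ) (hm : 0 < m) :
    Tendsto (fun n : ℕ => m * epsF n) atTop (nhdsWithin 0 {(0:ℝ)}ᶜ) := by
  rw [tendsto_nhdsWithin_iff]
  constructor
  · simpa using epsF_tendsto.const_mul m
  · filter_upwards [eventually_ge_atTop 1] with n hn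
    have := epsF_pos hn
    simp only [Set.mem_compl_iff, Set.mem_singleton_iff]
    positivity

lemma one_sub_exp_pos {t : ℝ} (ht : 0 < t) : 0 < 1 - exp (-t) := by
  have : exp (-t) < 1 := Real.exp_lt_one_iff.2 (by linarith)
  linarith

lemma limitA : Tendsto (fun n : ℕ => (1/(n:ℝ)) *
    ∑' j : ℕ, (-1:ℝ)^j * (fristedtX n)^(j+1) / (1 - (fristedtX n)^(j+1))^2)
    atTop (nhds (1/2)) := by
  set f : ℕ → ℕ → ℝ := fun n j =>
    (1/(n:ℝ)) * ((-1:ℝ)^j * (fristedtX n)^(j+1) / (1 - (fristedtX n)^(j+1))^2) with hf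
  have hfun : (fun n : ℕ => (1/(n:ℝ)) *
      ∑' j : ℕ, (-1:ℝ)^j * (fristedtX n)^(j+1) / (1 - (fristedtX n)^(j+1))^2)
      = fun n => ∑' j, f n j := by
    funext n; rw [hf]; exact (tsum_mul_left).symm
  rw [hfun]
  set g : ℕ → ℝ := fun j => (1/fcC^2) * ((-1:ℝ)^j / ((j:ℝ)+1)^2) with hg
  have hgsum : HasSum g ((1/fcC^2) * (π^2/12)) := hasSum_eta2.mul_left _
  have hval : (1/fcC^2) * (π^2/12) = 1/2 := by
    rw [fcC_sq]
    field_simp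
    ring
  have hbound_sum : Summable (fun j : ℕ => (20/fcC^2) * (1/((j:ℝ)+1)^2)) :=
    hasSum_inv_sq_add_one.summable.mul_left _
  have hmain : Tendsto (fun n => ∑' j, f n j) atTop (nhds (∑' j, g j)) := by
    apply tendsto_tsum_of_dominated_convergence hbound_sum
    · -- pointwise limits
      intro j
      have hm : (0:ℝ) < (j:ℝ)+1 := by positivity
      have hme := epsF_mul_tendsto ((j:ℝ)+1) hm
      have hkey : Tendsto (fun n : ℕ =>
          (((j:ℝ)+1)*epsF n) / (1 - exp (-(((j:ℝ)+1)*epsF n)))) atTop (nhds 1) :=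
        tendsto_div_one_sub_exp.comp hme
      have hexp : Tendsto (fun n : ℕ => exp (-(((j:ℝ)+1)*epsF n))) atTop (nhds 1) := by
        have h0 : Tendsto (fun n : ℕ => -(((j:ℝ)+1)*epsF n)) atTop (nhds 0) := by
          simpa using (epsF_tendsto.const_mul ((j:ℝ)+1)).neg
        simpa [Function.comp_def] using (Real.continuous_exp.tendsto 0).comp h0
      have hT := Tendsto.const_mul ((1/fcC^2) * ((-1:ℝ)^j) / (((j:ℝ)+1)^2))
        (hexp.mul (hkey.pow 2))
      have hgj : ((1/fcC^2) * ((-1:ℝ)^j) / (((j:ℝ)+1)^2)) * (1 * 1^2) = g j := by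
        rw [hg]; ring
      rw [hgj] at hT
      refine hT.congr' ?_
      filter_upwards [eventually_ge_atTop 1] with n hn
      have hε := epsF_pos hn
      have hE := one_sub_exp_pos (t := ((j:ℝ)+1) * epsF n) (by positivity)
      have hn0 : (n:ℝ) ≠ 0 := Nat.cast_ne_zero.mpr (by omega)
      have hfc0 : fcC ≠ 0 := fcC_pos.ne'
      have h1n : (1/(n:ℝ)) = (epsF n)^2 / fcC^2 := by
        rw [epsF_sq hn]
        field_simp
      rw [hf]
      simp only
      rw [fristedtX_pow n (j+1), h1n]
      push_cast
      have hfc := fcC_pos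
      field_simp
    · -- bound
      filter_upwards [eventually_ge_atTop 1] with n hn j
      have hε := epsF_pos hn
      have hm : (0:ℝ) < (j:ℝ)+1 := by positivity
      set t : ℝ := ((j:ℝ)+1) * epsF n with hts
      have ht : 0 < t := by positivity
      have hE1 := one_sub_exp_pos ht
      have hEpos : 0 < exp (-t) := Real.exp_pos _
      have hineq := ineq_sq ht
      have hdiv : exp (-t) / (1 - exp (-t))^2 ≤ 20 / t^2 := by
        rw [div_le_div_iff₀ (by positivity) (by positivity)]
        nlinarith [hineq]
      have hnorm : ‖f n j‖ = (1/(n:ℝ)) * (exp (-t) / (1 - exp (-t))^2) := by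
        rw [hf]
        simp only
        rw [fristedtX_pow n (j+1)]
        push_cast
        rw [← hts, Real.norm_eq_abs]
        rw [abs_mul, abs_div, abs_div, abs_mul, abs_pow]
        simp [abs_of_pos hEpos, abs_of_pos hE1, abs_of_pos (pow_pos hE1 2)]
      rw [hnorm]
      have hn0 : (n:ℝ) ≠ 0 := Nat.cast_ne_zero.mpr (by omega)
      have hfc0 : fcC ≠ 0 := fcC_pos.ne'
      have h1n : (1/(n:ℝ)) = (epsF n)^2 / fcC^2 := by
        rw [epsF_sq hn]; field_simp
      rw [h1n]
      have hfc := fcC_pos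
      calc (epsF n)^2 / fcC^2 * (exp (-t) / (1 - exp (-t))^2)
          ≤ (epsF n)^2 / fcC^2 * (20 / t^2) := by
            apply mul_le_mul_of_nonneg_left hdiv (by positivity)
        _ = (20/fcC^2) * (1/((j:ℝ)+1)^2) := by
            rw [hts]
            field_simp
  rw [hgsum.tsum_eq, hval] at hmain
  exact hmain

lemma fcC_cube_val : π^2/6 / fcC^3 = 1/fcC := by
  have h := fcC_sq
  have h0 := fcC_pos
  rw [show fcC^3 = fcC^2 * fcC by ring, h]
  field_simp

lemma limitB : Tendsto (fun n : ℕ => (1/(n:ℝ)^((3:ℝ)/2)) *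
    ∑' j : ℕ, (-1:ℝ)^j * ((j:ℝ)+1) * ((fristedtX n)^(j+1) * (1 + (fristedtX n)^(j+1))) /
      (1 - (fristedtX n)^(j+1))^3)
    atTop (nhds (1/fcC)) := by
  set f : ℕ → ℕ → ℝ := fun n j => (1/(n:ℝ)^((3:ℝ)/2)) *
    ((-1:ℝ)^j * ((j:ℝ)+1) * ((fristedtX n)^(j+1) * (1 + (fristedtX n)^(j+1))) /
      (1 - (fristedtX n)^(j+1))^3) with hf
  have hfun : (fun n : ℕ => (1/(n:ℝ)^((3:ℝ)/2)) *
      ∑' j : ℕ, (-1:ℝ)^j * ((j:ℝ)+1) * ((fristedtX n)^(j+1) * (1 + (fristedtX n)^(j+1))) /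
        (1 - (fristedtX n)^(j+1))^3) = fun n => ∑' j, f n j := by
    funext n; rw [hf]; exact (tsum_mul_left).symm
  rw [hfun]
  set g : ℕ → ℝ := fun j => (2/fcC^3) * ((-1:ℝ)^j / ((j:ℝ)+1)^2) with hg
  have hgsum : HasSum g ((2/fcC^3) * (π^2/12)) := hasSum_eta2.mul_left _
  have hval : (2/fcC^3) * (π^2/12) = 1/fcC := by
    rw [← fcC_cube_val]
    ring
  have hbound_sum : Summable (fun j : ℕ => (450/fcC^3) * (1/((j:ℝ)+1)^2)) :=
    hasSum_inv_sq_add_one.summable.mul_left _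
  have hmain : Tendsto (fun n => ∑' j, f n j) atTop (nhds (∑' j, g j)) := by
    apply tendsto_tsum_of_dominated_convergence hbound_sum
    · intro j
      have hm : (0:ℝ) < (j:ℝ)+1 := by positivity
      have hme := epsF_mul_tendsto ((j:ℝ)+1) hm
      have hkey : Tendsto (fun n : ℕ =>
          (((j:ℝ)+1)*epsF n) / (1 - exp (-(((j:ℝ)+1)*epsF n)))) atTop (nhds 1) :=
        tendsto_div_one_sub_exp.comp hme
      have hexp : Tendsto (fun n : ℕ => exp (-(((j:ℝ)+1)*epsF n))) atTop (nhds 1) := by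
        have h0 : Tendsto (fun n : ℕ => -(((j:ℝ)+1)*epsF n)) atTop (nhds 0) := by
          simpa using (epsF_tendsto.const_mul ((j:ℝ)+1)).neg
        simpa [Function.comp_def] using (Real.continuous_exp.tendsto 0).comp h0
      have hexp2 : Tendsto (fun n : ℕ =>
          exp (-(((j:ℝ)+1)*epsF n)) * (1 + exp (-(((j:ℝ)+1)*epsF n)))) atTop (nhds 2) := by
        have h2 := hexp.mul
          ((tendsto_const_nhds : Tendsto (fun _ : ℕ => (1:ℝ)) atTop (nhds 1)).add hexp)
        norm_num at h2
        exact h2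
      have hT := Tendsto.const_mul ((1/fcC^3) * ((-1:ℝ)^j) / (((j:ℝ)+1)^2))
        (hexp2.mul (hkey.pow 3))
      have hgj : ((1/fcC^3) * ((-1:ℝ)^j) / (((j:ℝ)+1)^2)) * (2 * 1^3) = g j := by
        rw [hg]; ring
      rw [hgj] at hT
      refine hT.congr' ?_
      filter_upwards [eventually_ge_atTop 1] with n hn
      have hε := epsF_pos hn
      have hE := one_sub_exp_pos (t := ((j:ℝ)+1) * epsF n) (by positivity)
      have hn0 : (n:ℝ) ≠ 0 := Nat.cast_ne_zero.mpr (by omega)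
      have hfc0 : fcC ≠ 0 := fcC_pos.ne'
      have h1n : (1/(n:ℝ)^((3:ℝ)/2)) = (epsF n)^3 / fcC^3 := by
        rw [epsF_cube hn]
        have hrp : (n:ℝ)^((3:ℝ)/2) ≠ 0 := by positivity
        field_simp
      rw [hf]
      simp only
      rw [fristedtX_pow n (j+1), h1n]
      push_cast
      field_simp
    · filter_upwards [eventually_ge_atTop 1] with n hn j
      have hε := epsF_pos hn
      have hm : (0:ℝ) < (j:ℝ)+1 := by positivity
      set t : ℝ := ((j:ℝ)+1) * epsF n with hts
      have ht : 0 < t := by positivity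
      have hE1 := one_sub_exp_pos ht
      have hEpos : 0 < exp (-t) := Real.exp_pos _
      have hineq := ineq_cube ht
      have hdiv : exp (-t) * (1 + exp (-t)) / (1 - exp (-t))^3 ≤ 450 / t^3 := by
        rw [div_le_div_iff₀ (by positivity) (by positivity)]
        nlinarith [hineq]
      have hP : (0:ℝ) ≤ (1/(n:ℝ)^((3:ℝ)/2)) *
          (((j:ℝ)+1) * (exp (-t) * (1 + exp (-t))) / (1 - exp (-t))^3) :=
        mul_nonneg (by positivity)
          (div_nonneg (by positivity) (pow_nonneg hE1.le 3))
      have hrepr : f n j = (-1:ℝ)^j * ((1/(n:ℝ)^((3:ℝ)/2)) *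
          (((j:ℝ)+1) * (exp (-t) * (1 + exp (-t))) / (1 - exp (-t))^3)) := by
        rw [hf]
        simp only
        rw [fristedtX_pow n (j+1)]
        push_cast
        rw [← hts]
        ring
      have hnorm : ‖f n j‖ = (1/(n:ℝ)^((3:ℝ)/2)) *
          (((j:ℝ)+1) * (exp (-t) * (1 + exp (-t))) / (1 - exp (-t))^3) := by
        rw [Real.norm_eq_abs, hrepr, abs_mul, abs_pow, abs_neg, abs_one, one_pow, one_mul,
          abs_of_nonneg hP]
      rw [hnorm]
      have hn0 : (n:ℝ) ≠ 0 := Nat.cast_ne_zero.mpr (by omega)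
      have hfc0 : fcC ≠ 0 := fcC_pos.ne'
      have h1n : (1/(n:ℝ)^((3:ℝ)/2)) = (epsF n)^3 / fcC^3 := by
        rw [epsF_cube hn]
        have hrp : (n:ℝ)^((3:ℝ)/2) ≠ 0 := by positivity
        field_simp
      rw [h1n]
      have hfc := fcC_pos
      calc (epsF n)^3 / fcC^3 * (((j:ℝ)+1) * (exp (-t) * (1 + exp (-t))) / (1 - exp (-t))^3)
          = (epsF n)^3 / fcC^3 * (((j:ℝ)+1) * (exp (-t) * (1 + exp (-t)) / (1 - exp (-t))^3)) := by
            ring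
        _ ≤ (epsF n)^3 / fcC^3 * (((j:ℝ)+1) * (450 / t^3)) := by
            apply mul_le_mul_of_nonneg_left _ (by positivity)
            exact mul_le_mul_of_nonneg_left hdiv (by positivity)
        _ = (450/fcC^3) * (1/((j:ℝ)+1)^2) := by
            rw [hts]
            field_simp
  rw [hgsum.tsum_eq, hval] at hmain
  exact hmain

lemma abs_lt_one_of (h0 : 0 < (x:ℝ)) (h1 : x < 1) : |x| < 1 := by
  rwa [abs_of_pos h0]

lemma summable_f1 {x : ℝ} (h0 : 0 < x) (h1 : x < 1) :
    Summable (fun i : ℕ => (i:ℝ) * x^i / (1 + x^i)) := by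
  refine Summable.of_nonneg_of_le (fun i => ?_) (fun i => ?_)
    (hasSum_geo1 (abs_lt_one_of h0 h1)).summable
  · have := pow_pos h0 i; positivity
  · exact div_le_self (by positivity) (by nlinarith [pow_pos h0 i])

lemma summable_f2 {x : ℝ} (h0 : 0 < x) (h1 : x < 1) :
    Summable (fun i : ℕ => (i:ℝ)^2 * x^i / (1 + x^i)^2) := by
  have hn : ‖x‖ < 1 := by rw [Real.norm_eq_abs]; exact abs_lt_one_of h0 h1
  have hs := summable_pow_mul_geometric_of_norm_lt_one (R := ℝ) 2 hn
  refine Summable.of_nonneg_of_le (fun i => ?_) (fun i => ?_) hs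
  · have := pow_pos h0 i; positivity
  · exact div_le_self (by positivity) (by nlinarith [pow_pos h0 i])

lemma sqrtN_atTop : Tendsto (fun n : ℕ => Real.sqrt n) atTop atTop := by
  have := (tendsto_rpow_atTop (by norm_num : (0:ℝ) < 1/2)).comp tendsto_natCast_atTop_atTop
  exact this.congr (fun n => (Real.sqrt_eq_rpow _).symm)

lemma decay_aux (k : ℕ) :
    Tendsto (fun n : ℕ => (Real.sqrt n)^k * exp (-(fcC * Real.sqrt n))) atTop (nhds 0) := by
  have h2 := tendsto_rpow_mul_exp_neg_mul_atTop_nhds_zero (k:ℝ) fcC fcC_pos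
  have h3 := h2.comp sqrtN_atTop
  refine h3.congr fun n => ?_
  simp [Function.comp, Real.rpow_natCast, neg_mul]

set_option maxHeartbeats 1000000 in
lemma tail1_le {x : ℝ} (h0 : 0 < x) (h1 : x < 1) (n : ℕ) :
    (∑' i : ℕ, ((i + (n+1) : ℕ):ℝ) * x^(i + (n+1)) / (1 + x^(i + (n+1))))
      ≤ (1/(1-x)^2) * (((n:ℝ)+1) * x^(n+1)) := by
  have hx : |x| < 1 := abs_lt_one_of h0 h1
  have hmaj : HasSum (fun i : ℕ => (((i:ℝ)+1) * x^i) * (((n:ℝ)+1) * x^(n+1)))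
      ((1/(1-x)^2) * (((n:ℝ)+1) * x^(n+1))) := (hasSum_geo_add_one hx).mul_right _
  have hle : ∀ i : ℕ, ((i + (n+1) : ℕ):ℝ) * x^(i + (n+1)) / (1 + x^(i + (n+1)))
      ≤ (((i:ℝ)+1) * x^i) * (((n:ℝ)+1) * x^(n+1)) := by
    intro i
    have hp := pow_pos h0 (i + (n+1))
    calc ((i + (n+1) : ℕ):ℝ) * x^(i + (n+1)) / (1 + x^(i + (n+1)))
        ≤ ((i + (n+1) : ℕ):ℝ) * x^(i + (n+1)) := div_le_self (by positivity) (by nlinarith)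
      _ ≤ (((i:ℝ)+1) * ((n:ℝ)+1)) * x^(i + (n+1)) := by
          apply mul_le_mul_of_nonneg_right _ (by positivity)
          push_cast; nlinarith [Nat.cast_nonneg (α := ℝ) i, Nat.cast_nonneg (α := ℝ) n]
      _ = (((i:ℝ)+1) * x^i) * (((n:ℝ)+1) * x^(n+1)) := by
          rw [pow_add]; ring
  rw [← hmaj.tsum_eq]
  exact Summable.tsum_le_tsum hle ((summable_nat_add_iff (n+1)).2 (summable_f1 h0 h1)) hmaj.summable

set_option maxHeartbeats 1000000 in
lemma tail2_le {x : ℝ} (h0 : 0 < x) (h1 : x < 1) (n : ℕ) :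
    (∑' i : ℕ, ((i + (n+1) : ℕ):ℝ)^2 * x^(i + (n+1)) / (1 + x^(i + (n+1)))^2)
      ≤ ((1+x)/(1-x)^3) * ((((n:ℝ)+1)^2) * x^(n+1)) := by
  have hx : |x| < 1 := abs_lt_one_of h0 h1
  have hmaj : HasSum (fun i : ℕ => (((i:ℝ)+1)^2 * x^i) * ((((n:ℝ)+1)^2) * x^(n+1)))
      (((1+x)/(1-x)^3) * ((((n:ℝ)+1)^2) * x^(n+1))) := (hasSum_geo_add_one_sq hx).mul_right _
  have hle : ∀ i : ℕ, ((i + (n+1) : ℕ):ℝ)^2 * x^(i + (n+1)) / (1 + x^(i + (n+1)))^2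
      ≤ (((i:ℝ)+1)^2 * x^i) * ((((n:ℝ)+1)^2) * x^(n+1)) := by
    intro i
    have hp := pow_pos h0 (i + (n+1))
    calc ((i + (n+1) : ℕ):ℝ)^2 * x^(i + (n+1)) / (1 + x^(i + (n+1)))^2
        ≤ ((i + (n+1) : ℕ):ℝ)^2 * x^(i + (n+1)) := div_le_self (by positivity) (by nlinarith)
      _ ≤ ((((i:ℝ)+1) * ((n:ℝ)+1))^2) * x^(i + (n+1)) := by
          apply mul_le_mul_of_nonneg_right _ (by positivity)
          have hc : ((i + (n+1) : ℕ):ℝ) ≤ ((i:ℝ)+1) * ((n:ℝ)+1) := by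
            push_cast; nlinarith [Nat.cast_nonneg (α := ℝ) i, Nat.cast_nonneg (α := ℝ) n]
          exact pow_le_pow_left₀ (by positivity) hc 2
      _ = (((i:ℝ)+1)^2 * x^i) * ((((n:ℝ)+1)^2) * x^(n+1)) := by
          rw [pow_add]; ring
  rw [← hmaj.tsum_eq]
  exact Summable.tsum_le_tsum hle ((summable_nat_add_iff (n+1)).2 (summable_f2 h0 h1)) hmaj.summable

lemma icc_sum_eq {f : ℕ → ℝ} (hf : Summable f) {n : ℕ} (hn : 2 ≤ n) :
    ∑ i ∈ Finset.Icc 2 n, f i = (∑' i, f i) - (f 0 + f 1) - ∑' i, f (i + (n+1)) := by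
  have h := Summable.sum_add_tsum_nat_add (f := f) (n+1) hf
  have h2 : ∑ i ∈ Finset.range (n+1), f i = f 0 + f 1 + ∑ i ∈ Finset.Icc 2 n, f i := by
    have h01 : ∑ i ∈ Finset.Ico 0 2, f i = f 0 + f 1 := by
      rw [show Finset.Ico 0 2 = ({0, 1} : Finset ℕ) by decide]
      rw [Finset.sum_pair (by norm_num)]
    rw [Finset.range_eq_Ico,
      ← Finset.sum_Ico_consecutive f (by omega : 0 ≤ 2) (by omega : 2 ≤ n+1),
      h01, Finset.Ico_add_one_right_eq_Icc]
  linarith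

lemma nat_one_le {n : ℕ} (hn : 1 ≤ n) : (1:ℝ) ≤ (n:ℝ) := by exact_mod_cast hn

lemma exp_sq (a : ℝ) : exp a ^ 2 = exp (2*a) := by
  rw [pow_two, ← Real.exp_add]; ring_nf

lemma exp_cube (a : ℝ) : exp a ^ 3 = exp (3*a) := by
  rw [pow_succ, exp_sq, ← Real.exp_add]; ring_nf

lemma hinv_sq {n : ℕ} (hn : 1 ≤ n) :
    1/(1 - fristedtX n)^2 ≤ exp (2*fcC) * (n:ℝ) / fcC^2 := by
  have hε := epsF_pos hn
  have h1x : epsF n * exp (-fcC) ≤ 1 - fristedtX n := by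
    have h := aux_texp_le hε.le
    have hεc : exp (-fcC) ≤ exp (-(epsF n)) := Real.exp_le_exp.2 (by linarith [epsF_le hn])
    rw [fristedtX_eq]
    nlinarith
  have hpos1 : (0:ℝ) < epsF n * exp (-fcC) := by positivity
  have h2 : (epsF n * exp (-fcC))^2 ≤ (1 - fristedtX n)^2 := pow_le_pow_left₀ hpos1.le h1x 2
  have h3 : 1/(1 - fristedtX n)^2 ≤ 1/(epsF n * exp (-fcC))^2 :=
    one_div_le_one_div_of_le (by positivity) h2
  refine h3.trans (le_of_eq ?_)
  rw [mul_pow, epsF_sq hn, exp_sq, show (2:ℝ)*(-fcC) = -(2*fcC) by ring, Real.exp_neg]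
  have hn0 : (n:ℝ) ≠ 0 := by positivity
  have hfc0 : fcC ≠ 0 := fcC_pos.ne'
  have he0 : exp (2*fcC) ≠ 0 := (Real.exp_pos _).ne'
  field_simp

lemma hinv_cube {n : ℕ} (hn : 1 ≤ n) :
    1/(1 - fristedtX n)^3 ≤ exp (3*fcC) * (n:ℝ)^((3:ℝ)/2) / fcC^3 := by
  have hε := epsF_pos hn
  have h1x : epsF n * exp (-fcC) ≤ 1 - fristedtX n := by
    have h := aux_texp_le hε.le
    have hεc : exp (-fcC) ≤ exp (-(epsF n)) := Real.exp_le_exp.2 (by linarith [epsF_le hn])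
    rw [fristedtX_eq]
    nlinarith
  have hpos1 : (0:ℝ) < epsF n * exp (-fcC) := by positivity
  have h2 : (epsF n * exp (-fcC))^3 ≤ (1 - fristedtX n)^3 := pow_le_pow_left₀ hpos1.le h1x 3
  have h3 : 1/(1 - fristedtX n)^3 ≤ 1/(epsF n * exp (-fcC))^3 :=
    one_div_le_one_div_of_le (by positivity) h2
  refine h3.trans (le_of_eq ?_)
  rw [mul_pow, epsF_cube hn, exp_cube, show (3:ℝ)*(-fcC) = -(3*fcC) by ring, Real.exp_neg]
  have hn0 : (n:ℝ)^((3:ℝ)/2) ≠ 0 := by positivity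
  have hfc0 : fcC ≠ 0 := fcC_pos.ne'
  have he0 : exp (3*fcC) ≠ 0 := (Real.exp_pos _).ne'
  field_simp

lemma xpow_succ_le {n : ℕ} (hn : 1 ≤ n) :
    (fristedtX n)^(n+1) ≤ exp (-(fcC * Real.sqrt n)) := by
  rw [fristedtX_pow n (n+1)]
  apply Real.exp_le_exp.2
  have hε := epsF_pos hn
  have hspos : (0:ℝ) < Real.sqrt n := Real.sqrt_pos.2 (by exact_mod_cast hn)
  have hns : (n:ℝ) * epsF n = fcC * Real.sqrt n := by
    rw [epsF]
    field_simp
    linear_combination (-fcC) * Real.sq_sqrt (by positivity : (0:ℝ) ≤ (n:ℝ))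
  have : fcC * Real.sqrt n ≤ ((n:ℝ)+1) * epsF n := by
    rw [← hns]; nlinarith
  push_cast
  linarith

lemma tailA : Tendsto (fun n : ℕ => (1/(n:ℝ)) * ∑' i : ℕ,
    ((i + (n+1) : ℕ):ℝ) * (fristedtX n)^(i + (n+1)) / (1 + (fristedtX n)^(i + (n+1))))
    atTop (nhds 0) := by
  apply squeeze_zero'
    (g := fun n : ℕ => (2*exp (2*fcC)/fcC^2) * ((Real.sqrt n)^2 * exp (-(fcC * Real.sqrt n))))
  · filter_upwards with n
    have hx0 := fristedtX_pos n
    apply mul_nonneg (by positivity)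
    apply tsum_nonneg
    intro i
    have := pow_pos hx0 (i + (n+1))
    positivity
  · filter_upwards [eventually_ge_atTop 1] with n hn
    have hx0 := fristedtX_pos n
    have hx1 := fristedtX_lt_one hn
    have hs2 : (Real.sqrt n)^2 = (n:ℝ) := Real.sq_sqrt (by positivity)
    have hn0 : (n:ℝ) ≠ 0 := by positivity
    have hT := tail1_le hx0 hx1 n
    calc (1/(n:ℝ)) * ∑' i : ℕ,
        ((i + (n+1) : ℕ):ℝ) * (fristedtX n)^(i + (n+1)) / (1 + (fristedtX n)^(i + (n+1)))
        ≤ (1/(n:ℝ)) * ((1/(1 - fristedtX n)^2) * (((n:ℝ)+1) * (fristedtX n)^(n+1))) :=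
          mul_le_mul_of_nonneg_left hT (by positivity)
      _ ≤ (1/(n:ℝ)) * ((exp (2*fcC) * (n:ℝ) / fcC^2) * ((2*(n:ℝ)) * exp (-(fcC * Real.sqrt n)))) := by
          apply mul_le_mul_of_nonneg_left _ (by positivity)
          have hb1 : ((n:ℝ)+1) * (fristedtX n)^(n+1) ≤ (2*(n:ℝ)) * exp (-(fcC * Real.sqrt n)) := by
            have hn2 : ((n:ℝ)+1) ≤ 2*(n:ℝ) := by linarith [nat_one_le hn]
            exact mul_le_mul hn2 (xpow_succ_le hn) (by positivity) (by positivity)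
          have h1e : (0:ℝ) ≤ 1/(1 - fristedtX n)^2 := by positivity
          exact mul_le_mul (hinv_sq hn) hb1 (by positivity) (by positivity)
      _ = (2*exp (2*fcC)/fcC^2) * ((Real.sqrt n)^2 * exp (-(fcC * Real.sqrt n))) := by
          rw [hs2]
          have hfc0 : fcC ≠ 0 := fcC_pos.ne'
          field_simp
  · simpa using (decay_aux 2).const_mul (2*exp (2*fcC)/fcC^2)

lemma tailB : Tendsto (fun n : ℕ => (1/(n:ℝ)^((3:ℝ)/2)) * ∑' i : ℕ,
    ((i + (n+1) : ℕ):ℝ)^2 * (fristedtX n)^(i + (n+1)) / (1 + (fristedtX n)^(i + (n+1)))^2)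
    atTop (nhds 0) := by
  apply squeeze_zero'
    (g := fun n : ℕ => (8*exp (3*fcC)/fcC^3) * ((Real.sqrt n)^4 * exp (-(fcC * Real.sqrt n))))
  · filter_upwards with n
    have hx0 := fristedtX_pos n
    apply mul_nonneg (by positivity)
    apply tsum_nonneg
    intro i
    have := pow_pos hx0 (i + (n+1))
    positivity
  · filter_upwards [eventually_ge_atTop 1] with n hn
    have hx0 := fristedtX_pos n
    have hx1 := fristedtX_lt_one hn
    have hs2 : (Real.sqrt n)^2 = (n:ℝ) := Real.sq_sqrt (by positivity)
    have hs4 : (Real.sqrt n)^4 = (n:ℝ)^2 := by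
      rw [show (Real.sqrt n)^4 = ((Real.sqrt n)^2)^2 by ring, hs2]
    have hn0 : (n:ℝ) ≠ 0 := by positivity
    have hrp : ((n:ℝ)^((3:ℝ)/2)) ≠ 0 := by positivity
    have hT := tail2_le hx0 hx1 n
    have hxb : (0:ℝ) ≤ 1 + fristedtX n := by positivity
    calc (1/(n:ℝ)^((3:ℝ)/2)) * ∑' i : ℕ,
        ((i + (n+1) : ℕ):ℝ)^2 * (fristedtX n)^(i + (n+1)) / (1 + (fristedtX n)^(i + (n+1)))^2
        ≤ (1/(n:ℝ)^((3:ℝ)/2)) * (((1 + fristedtX n)/(1 - fristedtX n)^3) *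
            ((((n:ℝ)+1)^2) * (fristedtX n)^(n+1))) :=
          mul_le_mul_of_nonneg_left hT (by positivity)
      _ ≤ (1/(n:ℝ)^((3:ℝ)/2)) * ((2 * (exp (3*fcC) * (n:ℝ)^((3:ℝ)/2) / fcC^3)) *
            ((4*(n:ℝ)^2) * exp (-(fcC * Real.sqrt n)))) := by
          apply mul_le_mul_of_nonneg_left _ (by positivity)
          have hb1 : (((n:ℝ)+1)^2) * (fristedtX n)^(n+1)
              ≤ (4*(n:ℝ)^2) * exp (-(fcC * Real.sqrt n)) := by
            have hn2 : ((n:ℝ)+1)^2 ≤ 4*(n:ℝ)^2 := by nlinarith [nat_one_le hn]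
            exact mul_le_mul hn2 (xpow_succ_le hn) (by positivity) (by positivity)
          have hD : (0:ℝ) < (1 - fristedtX n)^3 := pow_pos (by linarith) 3
          have hfr : (1 + fristedtX n)/(1 - fristedtX n)^3
              ≤ 2 * (exp (3*fcC) * (n:ℝ)^((3:ℝ)/2) / fcC^3) := by
            have h2 : (1 + fristedtX n)/(1 - fristedtX n)^3 ≤ 2/(1 - fristedtX n)^3 :=
              (div_le_div_iff_of_pos_right hD).2 (by linarith)
            refine h2.trans ?_
            rw [show (2:ℝ)/(1 - fristedtX n)^3 = 2 * (1/(1 - fristedtX n)^3) by ring]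
            exact mul_le_mul_of_nonneg_left (hinv_cube hn) (by norm_num)
          have hb0 : (0:ℝ) ≤ (((n:ℝ)+1)^2) * (fristedtX n)^(n+1) :=
            mul_nonneg (by positivity) (pow_nonneg (fristedtX_pos n).le _)
          have hfr0 : (0:ℝ) ≤ 2 * (exp (3*fcC) * (n:ℝ)^((3:ℝ)/2) / fcC^3) :=
            mul_nonneg (by norm_num) (div_nonneg
              (mul_nonneg (Real.exp_pos _).le (by positivity)) (pow_pos fcC_pos 3).le)
          exact mul_le_mul hfr hb1 hb0 hfr0
      _ = (8*exp (3*fcC)/fcC^3) * ((Real.sqrt n)^4 * exp (-(fcC * Real.sqrt n))) := by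
          rw [hs4]
          have hfc0 : fcC ≠ 0 := fcC_pos.ne'
          field_simp
          ring
  · have h8 : Tendsto (fun n : ℕ =>
        (8*exp (3*fcC)/fcC^3) * ((Real.sqrt n)^4 * exp (-(fcC * Real.sqrt n))))
        atTop (nhds ((8*exp (3*fcC)/fcC^3) * 0)) := (decay_aux 4).const_mul _
    simpa using h8

/-- **Mean and variance asymptotics for the parity-bit proposal `T_A`.**
With `c = π/√6` and `x(n) = exp(-c/√n)`:
`(1/n)·Σ_{i=2}^n i·x^i/(1+x^i) → 1/2` and
`(1/n^{3/2})·Σ_{i=2}^n i²·x^i/(1+x^i)² → 1/c`,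
i.e. for independent Bernoulli `ε_i` with `P(ε_i = 1) = x^i/(1+x^i)` and
`T_A = Σ_{i=2}^n i·ε_i` one has `E T_A ∼ n/2` and `Var T_A ∼ (1/c)·n^{3/2}`. -/
theorem parity_proposal_mean_var_asymptotics :
    Tendsto (fun n : ℕ =>
        (1 / (n : ℝ)) * ∑ i ∈ Finset.Icc 2 n,
          (i : ℝ) * fristedtX n ^ i / (1 + fristedtX n ^ i))
      atTop (nhds (1 / 2)) ∧
    Tendsto (fun n : ℕ =>
        (1 / (n : ℝ) ^ ((3 : ℝ) / 2)) * ∑ i ∈ Finset.Icc 2 n,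
          (i : ℝ) ^ 2 * fristedtX n ^ i / (1 + fristedtX n ^ i) ^ 2)
      atTop (nhds (1 / (Real.pi / Real.sqrt 6))) := by
  constructor
  · have hA : Tendsto (fun n : ℕ => (1/(n:ℝ)) *
        ∑' i : ℕ, (i:ℝ) * fristedtX n ^ i / (1 + fristedtX n ^ i)) atTop (nhds (1/2)) := by
      refine limitA.congr' ?_
      filter_upwards [eventually_ge_atTop 1] with n hn
      rw [identity1 (fristedtX_pos n) (fristedtX_lt_one hn)]
    have hB : Tendsto (fun n : ℕ => (1/(n:ℝ)) * (fristedtX n / (1 + fristedtX n)))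
        atTop (nhds 0) := by
      apply squeeze_zero' (g := fun n : ℕ => 1/(n:ℝ))
      · filter_upwards with n
        have := fristedtX_pos n
        positivity
      · filter_upwards with n
        have h0 := fristedtX_pos n
        have hle : fristedtX n / (1 + fristedtX n) ≤ 1 := by
          rw [div_le_one (by positivity)]; linarith
        calc (1/(n:ℝ)) * (fristedtX n / (1 + fristedtX n)) ≤ (1/(n:ℝ)) * 1 :=
              mul_le_mul_of_nonneg_left hle (by positivity)
          _ = 1/(n:ℝ) := mul_one _
      · exact tendsto_one_div_atTop_nhds_zero_nat
    have hsub := (hA.sub hB).sub tailA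
    rw [show (1:ℝ)/2 - 0 - 0 = 1/2 from by norm_num] at hsub
    refine hsub.congr' ?_
    filter_upwards [eventually_ge_atTop 2] with n hn
    have h1 : (1:ℕ) ≤ n := by omega
    rw [icc_sum_eq (summable_f1 (fristedtX_pos n) (fristedtX_lt_one h1)) hn]
    push_cast
    ring
  · have hfc : (1:ℝ) / (Real.pi / Real.sqrt 6) = 1/fcC := rfl
    rw [hfc]
    have hA : Tendsto (fun n : ℕ => (1/(n:ℝ)^((3:ℝ)/2)) *
        ∑' i : ℕ, (i:ℝ)^2 * fristedtX n ^ i / (1 + fristedtX n ^ i)^2)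
        atTop (nhds (1/fcC)) := by
      refine limitB.congr' ?_
      filter_upwards [eventually_ge_atTop 1] with n hn
      rw [identity2 (fristedtX_pos n) (fristedtX_lt_one hn)]
    have hB : Tendsto (fun n : ℕ => (1/(n:ℝ)^((3:ℝ)/2)) *
        (fristedtX n / (1 + fristedtX n)^2)) atTop (nhds 0) := by
      apply squeeze_zero' (g := fun n : ℕ => 1/(n:ℝ)^((3:ℝ)/2))
      · filter_upwards with n
        have h0 := fristedtX_pos n
        have h1 : (0:ℝ) ≤ (n:ℝ)^((3:ℝ)/2) := by positivity
        positivity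
      · filter_upwards with n
        have h0 := fristedtX_pos n
        have hle : fristedtX n / (1 + fristedtX n)^2 ≤ 1 := by
          rw [div_le_one (by positivity)]; nlinarith
        calc (1/(n:ℝ)^((3:ℝ)/2)) * (fristedtX n / (1 + fristedtX n)^2)
            ≤ (1/(n:ℝ)^((3:ℝ)/2)) * 1 := mul_le_mul_of_nonneg_left hle (by positivity)
          _ = 1/(n:ℝ)^((3:ℝ)/2) := mul_one _
      · have := ((tendsto_rpow_atTop (by norm_num : (0:ℝ) < 3/2)).comp
          tendsto_natCast_atTop_atTop).inv_tendsto_atTop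
        simpa [one_div, Function.comp_def, Pi.inv_def] using this
    have hsub := (hA.sub hB).sub tailB
    rw [show (1:ℝ)/fcC - 0 - 0 = 1/fcC from by norm_num] at hsub
    refine hsub.congr' ?_
    filter_upwards [eventually_ge_atTop 2] with n hn
    have h1 : (1:ℕ) ≤ n := by omega
    rw [icc_sum_eq (summable_f2 (fristedtX_pos n) (fristedtX_lt_one h1)) hn]
    push_cast
    ring
end

section
/- Let (Ω, P) be a probability space carrying mutually independent random elements A_1, A_2, … (each with law μ on a measurable space α) and B_1, B_2, … (each with law ν on a measurable space β). Let h : α × β → {0,1} be measurable with p := E h(A_1, B_1) ∈ (0,1], let g : α × β → ℝ be bounded and measurable, and set E g(S) := E[g(A_1,B_1)·h(A_1,B_1)]/p. For m₁, m₂ ≥ 1 define G(m₁,m₂) = Σ_{1≤i≤m₁, 1≤j≤m₂} g(A_i,B_j)·h(A_i,B_j). Then: (a) E[G(m₁,m₂)] = m₁·m₂·p·E g(S) for all m₁, m₂ ≥ 1 (so G/(m₁m₂) is an unbiased estimator of p·E g(S)); and (b) G(m₁,m₂)/(m₁m₂) → p·E g(S) in probability as min(m₁,m₂) → ∞, i.e.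 for every ε > 0, P(|G(m₁,m₂)/(m₁m₂) − p·E g(S)| > ε) → 0. -/
open MeasureTheory ProbabilityTheory Filter

universe u v

/-- The combined family of codomains for an A-sequence and a B-sequence,
indexed by `ℕ ⊕ ℕ`. -/
def pdcSumFam (α β : Type u) : ℕ ⊕ ℕ → Type u := fun k => Sum.elim (fun _ => α) (fun _ => β) k

/-- Measurable-space structure on the combined family. -/
def pdcSumMS {α β : Type u} [mα : MeasurableSpace α] [mβ : MeasurableSpace β] :
    ∀ k, MeasurableSpace (pdcSumFam α β k)
  | .inl _ => mα
  | .inr _ => mβ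

/-- The combined family of random variables `A_1, A_2, …, B_1, B_2, …`. -/
def pdcSumFun {Ω : Type v} {α β : Type u} (A : ℕ → Ω → α) (B : ℕ → Ω → β) :
    ∀ k, Ω → pdcSumFam α β k
  | .inl i => A i
  | .inr j => B j

/-- **Unbiasedness and consistency of the opportunistic estimator `G/(m₁m₂)`.**
Given mutually independent i.i.d. sequences `A_i ~ μ` and `B_j ~ ν`, a
measurable indicator `h` with `p = E h(A,B) ∈ (0,1]`, a bounded measurable `g`,
and `E g(S) = E[g(A,B)h(A,B)]/p`, the total score
`G(m₁,m₂) = Σ_{i<m₁, j<m₂} g(A_i,B_j)h(A_i,B_j)` satisfies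
`E G(m₁,m₂) = m₁·m₂·p·E g(S)` and `G(m₁,m₂)/(m₁m₂) → p·E g(S)` in probability
as `min(m₁,m₂) → ∞`. -/
theorem opportunistic_unbiased_and_consistent
    {Ω : Type v} {α β : Type u} [MeasurableSpace Ω] [MeasurableSpace α] [MeasurableSpace β]
    (P : Measure Ω) [IsProbabilityMeasure P]
    (μ : Measure α) (ν : Measure β)
    (A : ℕ → Ω → α) (B : ℕ → Ω → β)
    (hAm : ∀ i, Measurable (A i)) (hBm : ∀ j, Measurable (B j))
    (hindep : iIndepFun (m := pdcSumMS) (pdcSumFun A B) P)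
    (hA : ∀ i, P.map (A i) = μ) (hB : ∀ j, P.map (B j) = ν)
    (h : α × β → ℝ) (hh01 : ∀ z, h z = 0 ∨ h z = 1) (hhm : Measurable h)
    (g : α × β → ℝ) (hgm : Measurable g) (hgb : ∃ C, ∀ z, |g z| ≤ C)
    (p : ℝ) (hp : p = ∫ ω, h (A 0 ω, B 0 ω) ∂P) (hp' : p ∈ Set.Ioc (0 : ℝ) 1)
    (EgS : ℝ) (hEgS : EgS = (∫ ω, g (A 0 ω, B 0 ω) * h (A 0 ω, B 0 ω) ∂P) / p)
    (G : ℕ → ℕ → Ω → ℝ)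
    (hG : ∀ m₁ m₂ ω, G m₁ m₂ ω =
      ∑ i ∈ Finset.range m₁, ∑ j ∈ Finset.range m₂,
        g (A i ω, B j ω) * h (A i ω, B j ω)) :
    (∀ m₁ m₂ : ℕ, 1 ≤ m₁ → 1 ≤ m₂ →
      ∫ ω, G m₁ m₂ ω ∂P = m₁ * m₂ * p * EgS) ∧
    (∀ ε > (0 : ℝ),
      Tendsto (fun m : ℕ × ℕ =>
          P {ω | ε < |G m.1 m.2 ω / (m.1 * m.2) - p * EgS|})
        atTop (nhds 0)) := by
  classical
  obtain ⟨C₀, hC₀⟩ := hgb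
  set C : ℝ := max C₀ 0 with hCdef
  have hC0 : 0 ≤ C := le_max_right _ _
  set F : α × β → ℝ := fun z => g z * h z with hFdef
  have hFm : Measurable F := hgm.mul hhm
  have hC : ∀ z, |F z| ≤ C := by
    intro z
    rcases hh01 z with h0 | h1
    · have hz : F z = 0 := by simp [hFdef, h0]
      rw [hz]; simpa using hC0
    · have hz : F z = g z := by simp [hFdef, h1]
      rw [hz]; exact (hC₀ z).trans (le_max_left _ _)
  set X : ℕ → ℕ → Ω → ℝ := fun i j ω => F (A i ω, B j ω) with hXdef
  have hXm : ∀ i j, Measurable (X i j) := fun i j => hFm.comp ((hAm i).prodMk (hBm j))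
  have hXb : ∀ i j ω, |X i j ω| ≤ C := fun i j ω => hC _
  have hXint : ∀ i j, Integrable (X i j) P := by
    intro i j
    exact ⟨(hXm i j).aestronglyMeasurable,
      HasFiniteIntegral.of_bounded (C := C)
        (ae_of_all _ fun ω => by simpa [Real.norm_eq_abs] using hXb i j ω)⟩
  -- laws of pairs
  have hmeasSum : ∀ k, @Measurable Ω (pdcSumFam α β k) _ (pdcSumMS k) (pdcSumFun A B k) := by
    intro k; cases k with
    | inl i => exact hAm i
    | inr j => exact hBm j
  have hlaw : ∀ i j, P.map (fun ω => (A i ω, B j ω)) = μ.prod ν := by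
    intro i j
    have hij : (Sum.inl i : ℕ ⊕ ℕ) ≠ Sum.inr j := by simp
    have hind : IndepFun (A i) (B j) P := hindep.indepFun hij
    rw [(indepFun_iff_map_prod_eq_prod_map_map ((hAm i).aemeasurable)
      ((hBm j).aemeasurable)).mp hind, hA i, hB j]
  set c : ℝ := ∫ z, F z ∂(μ.prod ν) with hcdef
  have hEX : ∀ i j, ∫ ω, X i j ω ∂P = c := by
    intro i j
    rw [hcdef, ← hlaw i j,
      integral_map ((hAm i).prodMk (hBm j)).aemeasurable hFm.aestronglyMeasurable]
  have hc : c = p * EgS := by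
    have h00 : (∫ ω, g (A 0 ω, B 0 ω) * h (A 0 ω, B 0 ω) ∂P) = c := hEX 0 0
    have hp0 : p ≠ 0 := ne_of_gt hp'.1
    rw [hEgS, h00]
    field_simp
  -- part (a)
  have partA : ∀ m₁ m₂ : ℕ, ∫ ω, G m₁ m₂ ω ∂P = (m₁ : ℝ) * m₂ * c := by
    intro m₁ m₂
    have hGeq : (fun ω => G m₁ m₂ ω)
        = fun ω => ∑ i ∈ Finset.range m₁, ∑ j ∈ Finset.range m₂, X i j ω :=
      funext fun ω => hG m₁ m₂ ω
    rw [hGeq, integral_finset_sum _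
      (fun i _ => integrable_finset_sum _ (fun j _ => hXint i j))]
    have : ∀ i ∈ Finset.range m₁,
        ∫ ω, ∑ j ∈ Finset.range m₂, X i j ω ∂P = (m₂ : ℝ) * c := by
      intro i _
      rw [integral_finset_sum _ (fun j _ => hXint i j)]
      simp [hEX, mul_comm]
    rw [Finset.sum_congr rfl this]
    simp [mul_assoc]
  refine ⟨fun m₁ m₂ _ _ => by rw [partA, hc]; ring, ?_⟩
  -- part (b)
  intro ε hε
  set K : ℝ := C + |c| with hKdef
  have hK0 : 0 ≤ K := add_nonneg hC0 (abs_nonneg _)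
  set Y : ℕ → ℕ → Ω → ℝ := fun i j ω => X i j ω - c with hYdef
  have hYm : ∀ i j, Measurable (Y i j) := fun i j => (hXm i j).sub measurable_const
  have hYb : ∀ i j ω, |Y i j ω| ≤ K := by
    intro i j ω
    calc |X i j ω - c| ≤ |X i j ω| + |c| := abs_sub _ _
      _ ≤ C + |c| := by gcongr; exact hXb i j ω
  have hYint : ∀ i j, Integrable (Y i j) P := fun i j => (hXint i j).sub (integrable_const c)
  have hEY : ∀ i j, ∫ ω, Y i j ω ∂P = 0 := by
    intro i j
    rw [hYdef]
    simp only
    rw [integral_sub (hXint i j) (integrable_const c), hEX]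
    simp
  have hprodint : ∀ i j i' j', Integrable (fun ω => Y i j ω * Y i' j' ω) P := by
    intro i j i' j'
    refine ⟨((hYm i j).mul (hYm i' j')).aestronglyMeasurable,
      HasFiniteIntegral.of_bounded (C := K * K) (ae_of_all _ fun ω => ?_)⟩
    rw [Real.norm_eq_abs, abs_mul]
    exact mul_le_mul (hYb i j ω) (hYb i' j' ω) (abs_nonneg _) hK0
  have hcov0 : ∀ i j i' j', i ≠ i' → j ≠ j' →
      ∫ ω, Y i j ω * Y i' j' ω ∂P = 0 := by
    intro i j i' j' hii hjj
    have hpair : IndepFun (fun ω => (A i ω, B j ω)) (fun ω => (A i' ω, B j' ω)) P :=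
      hindep.indepFun_prodMk_prodMk hmeasSum (.inl i) (.inr j) (.inl i') (.inr j')
        (by simp [hii]) (by simp) (by simp) (by simp [hjj])
    have hYindep : IndepFun (Y i j) (Y i' j') P :=
      hpair.comp (hFm.sub measurable_const) (hFm.sub measurable_const)
    have hmul := hYindep.integral_mul_eq_mul_integral (hYm i j).aestronglyMeasurable
      (hYm i' j').aestronglyMeasurable
    calc ∫ ω, Y i j ω * Y i' j' ω ∂P = ∫ ω, (Y i j * Y i' j') ω ∂P := rfl
      _ = (∫ ω, Y i j ω ∂P) * ∫ ω, Y i' j' ω ∂P := hmul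
      _ = 0 := by rw [hEY, hEY, mul_zero]
  have hcovb : ∀ i j i' j', |∫ ω, Y i j ω * Y i' j' ω ∂P| ≤ K ^ 2 := by
    intro i j i' j'
    calc |∫ ω, Y i j ω * Y i' j' ω ∂P| = ‖∫ ω, Y i j ω * Y i' j' ω ∂P‖ :=
          (Real.norm_eq_abs _).symm
      _ ≤ ∫ ω, ‖Y i j ω * Y i' j' ω‖ ∂P := norm_integral_le_integral_norm _
      _ ≤ ∫ _ω, K ^ 2 ∂P := by
          refine integral_mono (hprodint i j i' j').norm (integrable_const _) fun ω => ?_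
          rw [Real.norm_eq_abs, abs_mul, sq]
          exact mul_le_mul (hYb i j ω) (hYb i' j' ω) (abs_nonneg _) hK0
      _ = K ^ 2 := by simp
  -- the centered sum and its variance bound
  set S : ℕ → ℕ → Ω → ℝ := fun m₁ m₂ ω =>
    ∑ q ∈ Finset.range m₁ ×ˢ Finset.range m₂, Y q.1 q.2 ω with hSdef
  have hvar : ∀ m₁ m₂ : ℕ,
      ∫ ω, (S m₁ m₂ ω) ^ 2 ∂P ≤ K ^ 2 * (m₁ * m₂ * (m₁ + m₂)) := by
    intro m₁ m₂
    set T := Finset.range m₁ ×ˢ Finset.range m₂ with hTdef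
    have hexp : ∀ ω, (S m₁ m₂ ω) ^ 2 = ∑ q ∈ T, ∑ r ∈ T, Y q.1 q.2 ω * Y r.1 r.2 ω := by
      intro ω
      rw [hSdef]
      simp only
      rw [sq, Finset.sum_mul_sum]
    have h1 : ∫ ω, (S m₁ m₂ ω) ^ 2 ∂P
        = ∑ q ∈ T, ∑ r ∈ T, ∫ ω, Y q.1 q.2 ω * Y r.1 r.2 ω ∂P := by
      simp_rw [hexp]
      rw [integral_finset_sum _ fun q _ =>
        integrable_finset_sum _ fun r _ => hprodint q.1 q.2 r.1 r.2]
      exact Finset.sum_congr rfl fun q _ =>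
        integral_finset_sum _ fun r _ => hprodint q.1 q.2 r.1 r.2
    have h2 : ∫ ω, (S m₁ m₂ ω) ^ 2 ∂P
        ≤ ∑ q ∈ T, ∑ r ∈ T,
            ((if q.1 = r.1 then K ^ 2 else 0) + (if q.2 = r.2 then K ^ 2 else 0)) := by
      rw [h1]
      refine Finset.sum_le_sum fun q _ => Finset.sum_le_sum fun r _ => ?_
      have h3 : (0:ℝ) ≤ if q.1 = r.1 then K ^ 2 else 0 := by positivity
      have h4 : (0:ℝ) ≤ if q.2 = r.2 then K ^ 2 else 0 := by positivity
      by_cases hq1 : q.1 = r.1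
      · have hle : ∫ ω, Y q.1 q.2 ω * Y r.1 r.2 ω ∂P ≤ K ^ 2 :=
          (le_abs_self _).trans (hcovb _ _ _ _)
        rw [if_pos hq1]
        linarith
      by_cases hq2 : q.2 = r.2
      · have hle : ∫ ω, Y q.1 q.2 ω * Y r.1 r.2 ω ∂P ≤ K ^ 2 :=
          (le_abs_self _).trans (hcovb _ _ _ _)
        rw [if_pos hq2]
        linarith
      · rw [hcov0 _ _ _ _ hq1 hq2]
        linarith
    have count1 : ∀ q ∈ T, (∑ r ∈ T, if q.1 = r.1 then K ^ 2 else (0:ℝ)) = m₂ * K ^ 2 := by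
      intro q hq
      have hq1 : q.1 ∈ Finset.range m₁ := (Finset.mem_product.mp (by rwa [hTdef] at hq)).1
      rw [hTdef, Finset.sum_product, Finset.sum_comm]
      simp [Finset.sum_ite_eq, hq1, Finset.sum_const, Finset.card_range, mul_comm]
    have count2 : ∀ q ∈ T, (∑ r ∈ T, if q.2 = r.2 then K ^ 2 else (0:ℝ)) = m₁ * K ^ 2 := by
      intro q hq
      have hq2 : q.2 ∈ Finset.range m₂ := (Finset.mem_product.mp (by rwa [hTdef] at hq)).2
      rw [hTdef, Finset.sum_product]
      simp only [Finset.sum_ite_eq, if_pos hq2]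
      simp [Finset.sum_const, Finset.card_range]
    have hcount : (∑ q ∈ T, ∑ r ∈ T,
        ((if q.1 = r.1 then K ^ 2 else 0) + (if q.2 = r.2 then K ^ 2 else 0)))
        = K ^ 2 * (m₁ * m₂ * (m₁ + m₂)) := by
      rw [Finset.sum_congr rfl
        (fun q hq => by rw [Finset.sum_add_distrib, count1 q hq, count2 q hq])]
      rw [Finset.sum_const, hTdef, Finset.card_product, Finset.card_range,
        Finset.card_range, nsmul_eq_mul]
      push_cast
      ring
    calc ∫ ω, (S m₁ m₂ ω) ^ 2 ∂P ≤ _ := h2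
      _ = _ := hcount
  -- relation between G and S
  have hGS : ∀ m₁ m₂ ω, G m₁ m₂ ω = S m₁ m₂ ω + (m₁ : ℝ) * m₂ * c := by
    intro m₁ m₂ ω
    have e1 : S m₁ m₂ ω = ∑ q ∈ Finset.range m₁ ×ˢ Finset.range m₂,
        (g (A q.1 ω, B q.2 ω) * h (A q.1 ω, B q.2 ω) - c) := rfl
    rw [hG, e1, Finset.sum_sub_distrib, Finset.sum_const, Finset.card_product,
      Finset.card_range, Finset.card_range, nsmul_eq_mul, Finset.sum_product]
    push_cast
    ring
  -- Chebyshev bound for each m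
  have hcheb : ∀ m₁ m₂ : ℕ, 1 ≤ m₁ → 1 ≤ m₂ →
      P {ω | ε < |G m₁ m₂ ω / (m₁ * m₂) - p * EgS|}
        ≤ ENNReal.ofReal (K ^ 2 / ε ^ 2 * (1 / m₁ + 1 / m₂)) := by
    intro m₁ m₂ hm₁ hm₂
    have hm₁0 : (0:ℝ) < m₁ := by exact_mod_cast hm₁
    have hm₂0 : (0:ℝ) < m₂ := by exact_mod_cast hm₂
    have hM0 : (0:ℝ) < (m₁ : ℝ) * m₂ := by positivity
    have hsub : {ω | ε < |G m₁ m₂ ω / (m₁ * m₂) - p * EgS|}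
        ⊆ {ω | ε ^ 2 * ((m₁ : ℝ) * m₂) ^ 2 ≤ (S m₁ m₂ ω) ^ 2} := by
      intro ω hω
      simp only [Set.mem_setOf_eq] at hω ⊢
      have hGeq : G m₁ m₂ ω / ((m₁ : ℝ) * m₂) - p * EgS = S m₁ m₂ ω / ((m₁ : ℝ) * m₂) := by
        rw [hGS m₁ m₂ ω, ← hc]
        field_simp
        ring
      rw [hGeq, abs_div, abs_of_pos hM0] at hω
      have h1 : ε * ((m₁ : ℝ) * m₂) < |S m₁ m₂ ω| := (lt_div_iff₀ hM0).mp hω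
      calc ε ^ 2 * ((m₁ : ℝ) * m₂) ^ 2 = (ε * ((m₁ : ℝ) * m₂)) ^ 2 := by ring
        _ ≤ |S m₁ m₂ ω| ^ 2 := by
            apply pow_le_pow_left₀ (by positivity) h1.le
        _ = (S m₁ m₂ ω) ^ 2 := sq_abs _
    have hSeq : (fun ω => (S m₁ m₂ ω) ^ 2) = fun ω =>
        ∑ q ∈ Finset.range m₁ ×ˢ Finset.range m₂,
          ∑ r ∈ Finset.range m₁ ×ˢ Finset.range m₂, Y q.1 q.2 ω * Y r.1 r.2 ω := by
      funext ω
      rw [hSdef]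
      simp only
      rw [sq, Finset.sum_mul_sum]
    have hSint2 : Integrable (fun ω => (S m₁ m₂ ω) ^ 2) P := by
      rw [hSeq]
      exact integrable_finset_sum _ fun q _ =>
        integrable_finset_sum _ fun r _ => hprodint q.1 q.2 r.1 r.2
    have hmarkov := mul_meas_ge_le_integral_of_nonneg
      (ae_of_all P fun ω => sq_nonneg (S m₁ m₂ ω)) hSint2 (ε ^ 2 * ((m₁ : ℝ) * m₂) ^ 2)
    have hPle : (P {ω | ε < |G m₁ m₂ ω / (m₁ * m₂) - p * EgS|}).toReal
        ≤ K ^ 2 / ε ^ 2 * (1 / m₁ + 1 / m₂) := by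
      have hmono : P {ω | ε < |G m₁ m₂ ω / (m₁ * m₂) - p * EgS|}
          ≤ P {ω | ε ^ 2 * ((m₁ : ℝ) * m₂) ^ 2 ≤ (S m₁ m₂ ω) ^ 2} := measure_mono hsub
      have ht := ENNReal.toReal_mono (measure_ne_top P _) hmono
      have hbig : (P {ω | ε ^ 2 * ((m₁ : ℝ) * m₂) ^ 2 ≤ (S m₁ m₂ ω) ^ 2}).toReal
          ≤ K ^ 2 * (m₁ * m₂ * (m₁ + m₂)) / (ε ^ 2 * ((m₁ : ℝ) * m₂) ^ 2) := by
        rw [le_div_iff₀ (by positivity)]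
        calc (P {ω | ε ^ 2 * ((m₁ : ℝ) * m₂) ^ 2 ≤ (S m₁ m₂ ω) ^ 2}).toReal
              * (ε ^ 2 * ((m₁ : ℝ) * m₂) ^ 2)
            = ε ^ 2 * ((m₁ : ℝ) * m₂) ^ 2
              * (P {ω | ε ^ 2 * ((m₁ : ℝ) * m₂) ^ 2 ≤ (S m₁ m₂ ω) ^ 2}).toReal := by ring
          _ ≤ ∫ ω, (S m₁ m₂ ω) ^ 2 ∂P := hmarkov
          _ ≤ K ^ 2 * (m₁ * m₂ * (m₁ + m₂)) := hvar m₁ m₂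
      have heq : K ^ 2 * (m₁ * m₂ * (m₁ + m₂)) / (ε ^ 2 * ((m₁ : ℝ) * m₂) ^ 2)
          = K ^ 2 / ε ^ 2 * (1 / m₁ + 1 / m₂) := by
        field_simp
        ring
      exact ht.trans (by rw [← heq]; exact hbig)
    rw [← ENNReal.ofReal_toReal (measure_ne_top P _)]
    exact ENNReal.ofReal_le_ofReal hPle
  -- conclude
  have hupper : Tendsto (fun m : ℕ × ℕ =>
      ENNReal.ofReal (K ^ 2 / ε ^ 2 * (1 / m.1 + 1 / m.2))) atTop (nhds 0) := by
    have h1 : Tendsto (fun m : ℕ × ℕ => m.1) atTop atTop := by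
      rw [← prod_atTop_atTop_eq]; exact tendsto_fst
    have h2 : Tendsto (fun m : ℕ × ℕ => m.2) atTop atTop := by
      rw [← prod_atTop_atTop_eq]; exact tendsto_snd
    have t1 : Tendsto (fun m : ℕ × ℕ => 1 / (m.1 : ℝ)) atTop (nhds 0) :=
      tendsto_one_div_atTop_nhds_zero_nat.comp h1
    have t2 : Tendsto (fun m : ℕ × ℕ => 1 / (m.2 : ℝ)) atTop (nhds 0) :=
      tendsto_one_div_atTop_nhds_zero_nat.comp h2
    have t3 := (t1.add t2).const_mul (K ^ 2 / ε ^ 2)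
    have t4 := ENNReal.tendsto_ofReal t3
    simpa using t4
  refine tendsto_of_tendsto_of_tendsto_of_le_of_le' tendsto_const_nhds hupper
    (Eventually.of_forall fun m => zero_le) ?_
  filter_upwards [eventually_ge_atTop ((1 : ℕ), (1 : ℕ))] with m hm
  exact hcheb m.1 m.2 hm.1 hm.2
end

section
/- Let (Ω, P) be a probability space carrying mutually independent random elements A_1, A_2, … (each with law μ on a measurable space α) and B_1, B_2, … (each with law ν on a measurable space β). Let h : α × β → {0,1} be measurable with p := E h(A_1, B_1) ∈ (0,1], let g : α × β → ℝ be bounded and measurable, and set E g(S) := E[g(A_1,B_1)·h(A_1,B_1)]/p. For m₁, m₂ ≥ 1 define G(m₁,m₂) = Σ_{1≤i≤m₁, 1≤j≤m₂} g(A_i,B_j)·h(A_i,B_j) and W(m₁,m₂) = Σ_{1≤i≤m₁, 1≤j≤m₂} h(A_i,B_j). Then G(m₁,m₂)/W(m₁,m₂) → E g(S) in probability as min(m₁,m₂) → ∞: for every ε > 0, P(W(m₁,m₂) > 0 and |G(m₁,m₂)/W(m₁,m₂) − E g(S)| ≤ ε) → 1. -/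
open MeasureTheory ProbabilityTheory Filter

universe u v

lemma pdc_lln
    {Ω : Type v} {α β : Type u} [MeasurableSpace Ω] [MeasurableSpace α] [MeasurableSpace β]
    (P : Measure Ω) [IsProbabilityMeasure P]
    (A : ℕ → Ω → α) (B : ℕ → Ω → β)
    (hAm : ∀ i, Measurable (A i)) (hBm : ∀ j, Measurable (B j))
    (hindep : iIndepFun (m := pdcSumMS) (pdcSumFun A B) P)
    (hA : ∀ i, P.map (A i) = P.map (A 0)) (hB : ∀ j, P.map (B j) = P.map (B 0))
    (f : α × β → ℝ) (hfm : Measurable f) (C : ℝ) (hC0 : 0 ≤ C) (hC : ∀ z, |f z| ≤ C)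
    (If : ℝ) (hIf : If = ∫ ω, f (A 0 ω, B 0 ω) ∂P)
    (δ : ℝ) (hδ : 0 < δ) :
    Tendsto (fun m : ℕ × ℕ =>
        P {ω | δ < |(∑ i ∈ Finset.range m.1, ∑ j ∈ Finset.range m.2,
            f (A i ω, B j ω)) / ((m.1 : ℝ) * m.2) - If|})
      atTop (nhds 0) := by
  classical
  -- measurability of the summands
  have hXm : ∀ i j, Measurable fun ω => f (A i ω, B j ω) :=
    fun i j => hfm.comp ((hAm i).prodMk (hBm j))
  -- independence of A i and B j
  have hmeas : ∀ k, @Measurable Ω (pdcSumFam α β k) _ (pdcSumMS k) (pdcSumFun A B k) := by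
    rintro (i | j)
    · exact hAm i
    · exact hBm j
  have hind1 : ∀ i j, IndepFun (A i) (B j) P := by
    intro i j
    exact hindep.indepFun (show (Sum.inl i : ℕ ⊕ ℕ) ≠ Sum.inr j by simp)
  -- common law of the pairs
  have hlaw : ∀ i j, P.map (fun ω => (A i ω, B j ω))
      = (P.map (A 0)).prod (P.map (B 0)) := by
    intro i j
    rw [(indepFun_iff_map_prod_eq_prod_map_map (hAm i).aemeasurable
      (hBm j).aemeasurable).mp (hind1 i j), hA i, hB j]
  have hint : ∀ i j, ∫ ω, f (A i ω, B j ω) ∂P = If := by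
    intro i j
    have key : ∀ i j : ℕ, ∫ ω, f (A i ω, B j ω) ∂P
        = ∫ z, f z ∂((P.map (A 0)).prod (P.map (B 0))) := by
      intro i j
      rw [← hlaw i j,
        integral_map ((hAm i).prodMk (hBm j)).aemeasurable hfm.aestronglyMeasurable]
    rw [key i j, hIf, key 0 0]
  -- independence of disjoint pairs
  have hindPair : ∀ i j k l : ℕ, i ≠ k → j ≠ l →
      IndepFun (fun ω => (A i ω, B j ω)) (fun ω => (A k ω, B l ω)) P := by
    intro i j k l hik hjl
    exact hindep.indepFun_prodMk_prodMk hmeas (.inl i) (.inr j) (.inl k) (.inr l)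
      (by simp [hik]) (by simp) (by simp) (by simp [hjl])
  -- integrability
  have hXint : ∀ i j, Integrable (fun ω => f (A i ω, B j ω)) P := by
    intro i j
    exact (integrable_const C).mono' (hXm i j).aestronglyMeasurable
      (ae_of_all _ fun ω => by simpa using hC _)
  have hIfC : |If| ≤ C := by
    rw [hIf]
    calc |∫ ω, f (A 0 ω, B 0 ω) ∂P| = ‖∫ ω, f (A 0 ω, B 0 ω) ∂P‖ := rfl
      _ ≤ ∫ ω, ‖f (A 0 ω, B 0 ω)‖ ∂P := norm_integral_le_integral_norm _
      _ ≤ ∫ _ω, C ∂P := integral_mono (hXint 0 0).norm (integrable_const C)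
          fun ω => by simpa using hC _
      _ = C := by simp
  -- centered variables
  set Y : ℕ × ℕ → Ω → ℝ := fun q ω => f (A q.1 ω, B q.2 ω) - If with hYdef
  have hYm : ∀ q, Measurable (Y q) := fun q => (hXm q.1 q.2).sub measurable_const
  have hYb : ∀ q ω, |Y q ω| ≤ 2 * C := by
    intro q ω
    calc |Y q ω| ≤ |f (A q.1 ω, B q.2 ω)| + |If| := abs_sub _ _
      _ ≤ C + C := add_le_add (hC _) hIfC
      _ = 2 * C := by ring
  have hYprodInt : ∀ q r, Integrable (fun ω => Y q ω * Y r ω) P := by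
    intro q r
    refine (integrable_const ((2*C) * (2*C))).mono'
      ((hYm q).mul (hYm r)).aestronglyMeasurable (ae_of_all _ fun ω => ?_)
    rw [Real.norm_eq_abs, abs_mul]
    exact mul_le_mul (hYb q ω) (hYb r ω) (abs_nonneg _) (by linarith)
  have hYint : ∀ q, Integrable (Y q) P := fun q => (hXint q.1 q.2).sub (integrable_const If)
  have hYmean : ∀ q, ∫ ω, Y q ω ∂P = 0 := by
    intro q
    rw [hYdef]
    simp only
    rw [integral_sub (hXint q.1 q.2) (integrable_const If), hint q.1 q.2]
    simp
  have hYzero : ∀ q r : ℕ × ℕ, q.1 ≠ r.1 → q.2 ≠ r.2 → ∫ ω, Y q ω * Y r ω ∂P = 0 := by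
    intro q r h1 h2
    have hI : IndepFun (Y q) (Y r) P := by
      have := (hindPair q.1 q.2 r.1 r.2 h1 h2).comp
        (φ := fun z : α × β => f z - If) (ψ := fun z : α × β => f z - If)
        (hfm.sub measurable_const) (hfm.sub measurable_const)
      exact this
    have := hI.integral_mul_eq_mul_integral (hYm q).aestronglyMeasurable (hYm r).aestronglyMeasurable
    calc ∫ ω, Y q ω * Y r ω ∂P = ∫ ω, (Y q * Y r) ω ∂P := rfl
      _ = (∫ ω, Y q ω ∂P) * ∫ ω, Y r ω ∂P := this
      _ = 0 := by rw [hYmean q, hYmean r, mul_zero]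
  have hYprodB : ∀ q r : ℕ × ℕ, ∫ ω, Y q ω * Y r ω ∂P ≤ 4 * C ^ 2 := by
    intro q r
    calc ∫ ω, Y q ω * Y r ω ∂P ≤ ∫ _ω, (2*C) * (2*C) ∂P := by
          refine integral_mono (hYprodInt q r) (integrable_const _) fun ω => ?_
          calc Y q ω * Y r ω ≤ |Y q ω * Y r ω| := le_abs_self _
            _ = |Y q ω| * |Y r ω| := abs_mul _ _
            _ ≤ (2*C) * (2*C) := mul_le_mul (hYb q ω) (hYb r ω) (abs_nonneg _) (by linarith)
      _ = 4 * C ^ 2 := by simp; ring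
  -- second moment bound
  have keybound : ∀ m₁ m₂ : ℕ,
      ∫ ω, (∑ q ∈ Finset.range m₁ ×ˢ Finset.range m₂, Y q ω) ^ 2 ∂P
        ≤ 4 * C ^ 2 * ((m₁ : ℝ) * m₂) * ((m₁ : ℝ) + m₂) := by
    intro m₁ m₂
    set S := Finset.range m₁ ×ˢ Finset.range m₂ with hS
    have hsq : ∀ ω, (∑ q ∈ S, Y q ω) ^ 2 = ∑ q ∈ S, ∑ r ∈ S, Y q ω * Y r ω := by
      intro ω; rw [sq, Finset.sum_mul_sum]
    have c0 : (0:ℝ) ≤ 4 * C ^ 2 := by positivity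
    calc ∫ ω, (∑ q ∈ S, Y q ω) ^ 2 ∂P
        = ∫ ω, ∑ q ∈ S, ∑ r ∈ S, Y q ω * Y r ω ∂P := by
          exact integral_congr_ae (ae_of_all _ hsq)
      _ = ∑ q ∈ S, ∑ r ∈ S, ∫ ω, Y q ω * Y r ω ∂P := by
          rw [integral_finset_sum _ (fun q _ =>
            integrable_finset_sum _ fun r _ => hYprodInt q r)]
          exact Finset.sum_congr rfl fun q _ =>
            integral_finset_sum _ fun r _ => hYprodInt q r
      _ ≤ ∑ q ∈ S, ∑ r ∈ S, (if q.1 = r.1 ∨ q.2 = r.2 then 4 * C ^ 2 else 0) := by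
          refine Finset.sum_le_sum fun q _ => Finset.sum_le_sum fun r _ => ?_
          by_cases hc : q.1 = r.1 ∨ q.2 = r.2
          · rw [if_pos hc]; exact hYprodB q r
          · push_neg at hc
            rw [if_neg (by push_neg; exact hc), hYzero q r hc.1 hc.2]
      _ ≤ ∑ _q ∈ S, ((m₂ : ℝ) * (4 * C ^ 2) + (m₁ : ℝ) * (4 * C ^ 2)) := by
          refine Finset.sum_le_sum fun q _ => ?_
          calc ∑ r ∈ S, (if q.1 = r.1 ∨ q.2 = r.2 then 4 * C ^ 2 else 0)
              ≤ ∑ r ∈ S, ((if q.1 = r.1 then 4 * C ^ 2 else 0)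
                + (if q.2 = r.2 then 4 * C ^ 2 else 0)) := by
                refine Finset.sum_le_sum fun r _ => ?_
                by_cases h1 : q.1 = r.1 <;> by_cases h2 : q.2 = r.2 <;>
                  simp [h1, h2, c0]
            _ = (∑ r ∈ S, if q.1 = r.1 then 4 * C ^ 2 else 0)
                + ∑ r ∈ S, if q.2 = r.2 then 4 * C ^ 2 else 0 :=
                Finset.sum_add_distrib
            _ ≤ (m₂ : ℝ) * (4 * C ^ 2) + (m₁ : ℝ) * (4 * C ^ 2) := by
                gcongr
                · rw [hS, Finset.sum_product]
                  have : ∀ r1 ∈ Finset.range m₁,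
                      (∑ _r2 ∈ Finset.range m₂, if q.1 = r1 then 4 * C ^ 2 else 0)
                        = if q.1 = r1 then (m₂ : ℝ) * (4 * C ^ 2) else 0 := by
                    intro r1 _
                    by_cases hh : q.1 = r1 <;> simp [hh, Finset.sum_const, mul_comm]
                  rw [Finset.sum_congr rfl this, Finset.sum_ite_eq]
                  split
                  · exact le_refl _
                  · positivity
                · rw [hS, Finset.sum_product]
                  calc ∑ r1 ∈ Finset.range m₁, ∑ r2 ∈ Finset.range m₂,
                        (if q.2 = r2 then 4 * C ^ 2 else 0)
                      ≤ ∑ _r1 ∈ Finset.range m₁, (4 * C ^ 2) := by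
                        refine Finset.sum_le_sum fun r1 _ => ?_
                        rw [Finset.sum_ite_eq]
                        split
                        · exact le_refl _
                        · positivity
                    _ = (m₁ : ℝ) * (4 * C ^ 2) := by
                        rw [Finset.sum_const, Finset.card_range, nsmul_eq_mul]
      _ = 4 * C ^ 2 * ((m₁ : ℝ) * m₂) * ((m₁ : ℝ) + m₂) := by
          rw [Finset.sum_const, hS, Finset.card_product, Finset.card_range,
            Finset.card_range, nsmul_eq_mul]
          push_cast
          ring
  -- Chebyshev bound
  have cheb : ∀ m : ℕ × ℕ, 1 ≤ m.1 → 1 ≤ m.2 →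
      (P {ω | δ < |(∑ i ∈ Finset.range m.1, ∑ j ∈ Finset.range m.2,
          f (A i ω, B j ω)) / ((m.1 : ℝ) * m.2) - If|}).toReal
        ≤ 4 * C ^ 2 / δ ^ 2 * (1 / (m.1 : ℝ) + 1 / (m.2 : ℝ)) := by
    rintro ⟨m₁, m₂⟩ h₁ h₂
    simp only at h₁ h₂ ⊢
    have hm₁ : (0:ℝ) < m₁ := by exact_mod_cast h₁
    have hm₂ : (0:ℝ) < m₂ := by exact_mod_cast h₂
    set N : ℝ := (m₁ : ℝ) * m₂ with hNdef
    have hN : 0 < N := mul_pos hm₁ hm₂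
    set T : Ω → ℝ := fun ω => ∑ q ∈ Finset.range m₁ ×ˢ Finset.range m₂, Y q ω with hT
    have hTm : Measurable T := Finset.measurable_sum _ fun q _ => hYm q
    have hT2int : Integrable (fun ω => T ω ^ 2) P := by
      refine (integrable_const ((N * (2*C)) ^ 2)).mono'
        (hTm.pow_const 2).aestronglyMeasurable (ae_of_all _ fun ω => ?_)
      rw [Real.norm_eq_abs, abs_pow]
      have hTb : |T ω| ≤ N * (2*C) := by
        calc |T ω| ≤ ∑ q ∈ Finset.range m₁ ×ˢ Finset.range m₂, |Y q ω| :=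
            Finset.abs_sum_le_sum_abs _ _
          _ ≤ ∑ _q ∈ Finset.range m₁ ×ˢ Finset.range m₂, (2*C) :=
            Finset.sum_le_sum fun q _ => hYb q ω
          _ = N * (2*C) := by
              rw [Finset.sum_const, Finset.card_product, Finset.card_range,
                Finset.card_range, nsmul_eq_mul, hNdef]
              push_cast; ring
      exact pow_le_pow_left₀ (abs_nonneg _) hTb 2
    have hTS : ∀ ω, T ω = (∑ i ∈ Finset.range m₁, ∑ j ∈ Finset.range m₂,
        f (A i ω, B j ω)) - N * If := by
      intro ω
      rw [hT]
      simp only [hYdef]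
      rw [Finset.sum_sub_distrib, Finset.sum_const, Finset.card_product,
        Finset.card_range, Finset.card_range, nsmul_eq_mul, Finset.sum_product, hNdef]
      push_cast; ring
    have hsub : {ω | δ < |(∑ i ∈ Finset.range m₁, ∑ j ∈ Finset.range m₂,
          f (A i ω, B j ω)) / N - If|} ⊆ {ω | (δ * N) ^ 2 ≤ T ω ^ 2} := by
      intro ω hω
      simp only [Set.mem_setOf_eq] at hω ⊢
      have habs : (∑ i ∈ Finset.range m₁, ∑ j ∈ Finset.range m₂,
          f (A i ω, B j ω)) / N - If = T ω / N := by
        rw [hTS ω]; field_simp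
      rw [habs, abs_div, abs_of_pos hN, lt_div_iff₀ hN] at hω
      calc (δ * N) ^ 2 ≤ |T ω| ^ 2 := pow_le_pow_left₀ (by positivity) hω.le 2
        _ = T ω ^ 2 := sq_abs _
    have mark := mul_meas_ge_le_integral_of_nonneg
      (ae_of_all P fun ω => sq_nonneg (T ω)) hT2int ((δ * N) ^ 2)
    have hδN : (0:ℝ) < (δ * N) ^ 2 := by positivity
    calc (P {ω | δ < |(∑ i ∈ Finset.range m₁, ∑ j ∈ Finset.range m₂,
            f (A i ω, B j ω)) / N - If|}).toReal
        ≤ (P {ω | (δ * N) ^ 2 ≤ T ω ^ 2}).toReal :=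
          ENNReal.toReal_mono (measure_ne_top P _) (measure_mono hsub)
      _ ≤ (∫ ω, T ω ^ 2 ∂P) / (δ * N) ^ 2 := by
          rw [le_div_iff₀ hδN, mul_comm]
          exact mark
      _ ≤ (4 * C ^ 2 * ((m₁ : ℝ) * m₂) * ((m₁ : ℝ) + m₂)) / (δ * N) ^ 2 := by
          gcongr
          exact keybound m₁ m₂
      _ = 4 * C ^ 2 / δ ^ 2 * (1 / (m₁ : ℝ) + 1 / (m₂ : ℝ)) := by
          rw [hNdef]
          field_simp
          ring
  -- conclude
  have hub : Tendsto (fun m : ℕ × ℕ => 4 * C ^ 2 / δ ^ 2 * (1 / (m.1 : ℝ) + 1 / (m.2 : ℝ)))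
      atTop (nhds 0) := by
    have h1 : Tendsto (fun m : ℕ × ℕ => m.1) atTop atTop :=
      tendsto_atTop_atTop.mpr fun b => ⟨(b, 0), fun a ha => ha.1⟩
    have h2 : Tendsto (fun m : ℕ × ℕ => m.2) atTop atTop :=
      tendsto_atTop_atTop.mpr fun b => ⟨(0, b), fun a ha => ha.2⟩
    have := ((tendsto_one_div_atTop_nhds_zero_nat.comp h1).add
      (tendsto_one_div_atTop_nhds_zero_nat.comp h2)).const_mul (4 * C ^ 2 / δ ^ 2)
    simpa using this
  refine (ENNReal.tendsto_toReal_iff (fun m => measure_ne_top P _) (by simp)).mp ?_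
  rw [ENNReal.toReal_zero]
  refine tendsto_of_tendsto_of_tendsto_of_le_of_le' tendsto_const_nhds hub
    (Filter.Eventually.of_forall fun m => ENNReal.toReal_nonneg) ?_
  filter_upwards [eventually_ge_atTop (1, 1)] with m hm
  exact cheb m hm.1 hm.2

/-- **Consistency of the opportunistic estimator `G/W`.**
Given mutually independent i.i.d. sequences `A_i ~ μ` and `B_j ~ ν`, a
measurable indicator `h` with `p = E h(A,B) ∈ (0,1]`, a bounded measurable `g`,
and `E g(S) = E[g(A,B)h(A,B)]/p`, the total score over matching pairs
`G(m₁,m₂)` divided by the number of matching pairs `W(m₁,m₂)` converges in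
probability to `E g(S)` as `min(m₁,m₂) → ∞`: for every `ε > 0`,
`P(W > 0 and |G/W − E g(S)| ≤ ε) → 1`. -/
theorem opportunistic_ratio_consistent
    {Ω : Type v} {α β : Type u} [MeasurableSpace Ω] [MeasurableSpace α] [MeasurableSpace β]
    (P : Measure Ω) [IsProbabilityMeasure P]
    (μ : Measure α) (ν : Measure β)
    (A : ℕ → Ω → α) (B : ℕ → Ω → β)
    (hAm : ∀ i, Measurable (A i)) (hBm : ∀ j, Measurable (B j))
    (hindep : iIndepFun (m := pdcSumMS) (pdcSumFun A B) P)
    (hA : ∀ i, P.map (A i) = μ) (hB : ∀ j, P.map (B j) = ν)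
    (h : α × β → ℝ) (hh01 : ∀ z, h z = 0 ∨ h z = 1) (hhm : Measurable h)
    (g : α × β → ℝ) (hgm : Measurable g) (hgb : ∃ C, ∀ z, |g z| ≤ C)
    (p : ℝ) (hp : p = ∫ ω, h (A 0 ω, B 0 ω) ∂P) (hp' : p ∈ Set.Ioc (0 : ℝ) 1)
    (EgS : ℝ) (hEgS : EgS = (∫ ω, g (A 0 ω, B 0 ω) * h (A 0 ω, B 0 ω) ∂P) / p)
    (G W : ℕ → ℕ → Ω → ℝ)
    (hG : ∀ m₁ m₂ ω, G m₁ m₂ ω =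
      ∑ i ∈ Finset.range m₁, ∑ j ∈ Finset.range m₂,
        g (A i ω, B j ω) * h (A i ω, B j ω))
    (hW : ∀ m₁ m₂ ω, W m₁ m₂ ω =
      ∑ i ∈ Finset.range m₁, ∑ j ∈ Finset.range m₂, h (A i ω, B j ω)) :
    ∀ ε > (0 : ℝ),
      Tendsto (fun m : ℕ × ℕ =>
          P {ω | 0 < W m.1 m.2 ω ∧ |G m.1 m.2 ω / W m.1 m.2 ω - EgS| ≤ ε})
        atTop (nhds 1) := by
  intro ε hε
  obtain ⟨C₀, hC₀⟩ := hgb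
  obtain ⟨hp0, hp1⟩ := hp'
  have hE1 : (0:ℝ) < 1 + |EgS| := by positivity
  set δ : ℝ := min (p / 2) (ε * p / (2 * (1 + |EgS|))) with hδdef
  have hδ0 : 0 < δ := lt_min (by linarith) (by positivity)
  have hδp : δ ≤ p / 2 := min_le_left _ _
  have hδε : δ ≤ ε * p / (2 * (1 + |EgS|)) := min_le_right _ _
  have hA' : ∀ i, P.map (A i) = P.map (A 0) := fun i => (hA i).trans (hA 0).symm
  have hB' : ∀ j, P.map (B j) = P.map (B 0) := fun j => (hB j).trans (hB 0).symm
  have hgh : p * EgS = ∫ ω, g (A 0 ω, B 0 ω) * h (A 0 ω, B 0 ω) ∂P := by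
    rw [hEgS]; field_simp
  set C' : ℝ := max C₀ 1 with hC'
  have hC'0 : (0:ℝ) ≤ C' := le_trans zero_le_one (le_max_right _ _)
  have hh_b : ∀ z, |h z| ≤ (1:ℝ) := fun z => by rcases hh01 z with h0 | h0 <;> simp [h0]
  have hgh_b : ∀ z, |(fun z : α × β => g z * h z) z| ≤ C' := by
    intro z
    simp only [abs_mul]
    rcases hh01 z with h0 | h1
    · simp only [h0, abs_zero, mul_zero]; exact hC'0
    · simp only [h1, abs_one, mul_one]
      exact le_trans (hC₀ z) (le_max_left _ _)
  -- the two bad events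
  set Bad1 : ℕ × ℕ → Set Ω := fun m =>
    {ω | δ < |(∑ i ∈ Finset.range m.1, ∑ j ∈ Finset.range m.2,
        h (A i ω, B j ω)) / ((m.1 : ℝ) * m.2) - p|} with hBad1
  set Bad2 : ℕ × ℕ → Set Ω := fun m =>
    {ω | δ < |(∑ i ∈ Finset.range m.1, ∑ j ∈ Finset.range m.2,
        g (A i ω, B j ω) * h (A i ω, B j ω)) / ((m.1 : ℝ) * m.2) - p * EgS|} with hBad2
  have hb1 : Tendsto (fun m => P (Bad1 m)) atTop (nhds 0) :=
    pdc_lln P A B hAm hBm hindep hA' hB' h hhm 1 zero_le_one hh_b p hp δ hδ0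
  have hb2 : Tendsto (fun m => P (Bad2 m)) atTop (nhds 0) :=
    pdc_lln P A B hAm hBm hindep hA' hB' (fun z => g z * h z) (hgm.mul hhm)
      C' hC'0 hgh_b (p * EgS) hgh δ hδ0
  -- measurability of bad events
  have hBadm : ∀ m : ℕ × ℕ, MeasurableSet (Bad1 m ∪ Bad2 m) := by
    intro m
    have m1 : Measurable fun ω =>
        (∑ i ∈ Finset.range m.1, ∑ j ∈ Finset.range m.2, h (A i ω, B j ω)) := by
      refine Finset.measurable_sum _ fun i _ => Finset.measurable_sum _ fun j _ => ?_
      exact hhm.comp ((hAm i).prodMk (hBm j))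
    have m2 : Measurable fun ω =>
        (∑ i ∈ Finset.range m.1, ∑ j ∈ Finset.range m.2,
          g (A i ω, B j ω) * h (A i ω, B j ω)) := by
      refine Finset.measurable_sum _ fun i _ => Finset.measurable_sum _ fun j _ => ?_
      exact (hgm.mul hhm).comp ((hAm i).prodMk (hBm j))
    exact ((measurableSet_lt measurable_const
        (((m1.div_const _).sub measurable_const).abs)).union
      (measurableSet_lt measurable_const
        (((m2.div_const _).sub measurable_const).abs)))
  -- inclusion of the good event
  have hincl : ∀ m : ℕ × ℕ, (Bad1 m ∪ Bad2 m)ᶜ ⊆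
      {ω | 0 < W m.1 m.2 ω ∧ |G m.1 m.2 ω / W m.1 m.2 ω - EgS| ≤ ε} := by
    rintro ⟨m₁, m₂⟩ ω hω
    simp only [Set.mem_compl_iff, Set.mem_union, hBad1, hBad2, Set.mem_setOf_eq,
      not_or, not_lt] at hω
    obtain ⟨h1, h2⟩ := hω
    rw [← hW m₁ m₂ ω] at h1
    rw [← hG m₁ m₂ ω] at h2
    set N : ℝ := ((m₁ : ℝ) * m₂) with hNdef
    have hWN : p / 2 ≤ W m₁ m₂ ω / N := by
      have := (abs_le.mp h1).1
      linarith
    have hN0 : (0:ℝ) < N := by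
      rcases lt_or_eq_of_le (by positivity : (0:ℝ) ≤ N) with hlt | heq
      · exact hlt
      · exfalso; rw [← heq, div_zero] at hWN; linarith
    have hWpos : 0 < W m₁ m₂ ω := by
      have h' : 0 < W m₁ m₂ ω / N * N := mul_pos (lt_of_lt_of_le (by linarith) hWN) hN0
      rwa [div_mul_cancel₀ _ hN0.ne'] at h'
    refine ⟨hWpos, ?_⟩
    have hGW : G m₁ m₂ ω / W m₁ m₂ ω = (G m₁ m₂ ω / N) / (W m₁ m₂ ω / N) := by
      rw [div_div_div_cancel_right₀]
      exact hN0.ne'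
    have hnum : |G m₁ m₂ ω / N - EgS * (W m₁ m₂ ω / N)| ≤ δ * (1 + |EgS|) := by
      have key : G m₁ m₂ ω / N - EgS * (W m₁ m₂ ω / N)
          = (G m₁ m₂ ω / N - p * EgS) - EgS * (W m₁ m₂ ω / N - p) := by ring
      rw [key]
      calc |(G m₁ m₂ ω / N - p * EgS) - EgS * (W m₁ m₂ ω / N - p)|
          ≤ |G m₁ m₂ ω / N - p * EgS| + |EgS * (W m₁ m₂ ω / N - p)| := abs_sub _ _
        _ ≤ δ + |EgS| * δ := by
            rw [abs_mul]
            exact add_le_add h2 (mul_le_mul_of_nonneg_left h1 (abs_nonneg _))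
        _ = δ * (1 + |EgS|) := by ring
    have hy : 0 < W m₁ m₂ ω / N := lt_of_lt_of_le (by linarith) hWN
    have step : |G m₁ m₂ ω / W m₁ m₂ ω - EgS|
        ≤ δ * (1 + |EgS|) / (p / 2) := by
      rw [hGW]
      have : G m₁ m₂ ω / N / (W m₁ m₂ ω / N) - EgS
          = (G m₁ m₂ ω / N - EgS * (W m₁ m₂ ω / N)) / (W m₁ m₂ ω / N) := by
        field_simp
      rw [this, abs_div, abs_of_pos hy]
      exact div_le_div₀ (by positivity) hnum (by linarith) hWN
    refine le_trans step ?_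
    rw [div_le_iff₀ (by linarith : (0:ℝ) < p / 2)]
    calc δ * (1 + |EgS|) ≤ (ε * p / (2 * (1 + |EgS|))) * (1 + |EgS|) :=
        mul_le_mul_of_nonneg_right hδε (by linarith)
      _ = ε * (p / 2) := by field_simp
  -- assemble
  have hu : Tendsto (fun m => P (Bad1 m ∪ Bad2 m)) atTop (nhds 0) := by
    refine tendsto_of_tendsto_of_tendsto_of_le_of_le tendsto_const_nhds ?_
      (fun m => zero_le) (fun m => measure_union_le _ _)
    simpa using hb1.add hb2
  have hl : Tendsto (fun m => 1 - P (Bad1 m ∪ Bad2 m)) atTop (nhds 1) := by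
    have := ENNReal.Tendsto.sub (tendsto_const_nhds (x := (1 : ENNReal))) hu
      (Or.inl ENNReal.one_ne_top)
    simpa using this
  refine tendsto_of_tendsto_of_tendsto_of_le_of_le hl tendsto_const_nhds
    (fun m => ?_) (fun m => prob_le_one)
  calc 1 - P (Bad1 m ∪ Bad2 m) = P ((Bad1 m ∪ Bad2 m)ᶜ) :=
      (prob_compl_eq_one_sub (hBadm m)).symm
    _ ≤ P _ := measure_mono (hincl m)
end

section
/- For every n ≥ 0, p_n = Σ_{m=0}^{⌊n/2⌋} q_{n−2m} · p_m, where p_j denotes the number of partitions of j and q_j denotes the number of partitions of j into distinct parts (with p_0 = q_0 = 1). -/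
open Multiset

def oddPart (s : Multiset ℕ) : Multiset ℕ := s.dedup.filter (fun i => Odd (s.count i))

noncomputable def halfPart (s : Multiset ℕ) : Multiset ℕ :=
  ((s.toFinsupp).mapRange (· / 2) rfl).toMultiset

lemma count_oddPart (s : Multiset ℕ) (i : ℕ) : (oddPart s).count i = s.count i % 2 := by
  rw [oddPart, count_filter]
  rcases Nat.even_or_odd (s.count i) with h | h
  · simp [Nat.not_odd_iff_even.2 h, Nat.even_iff.1 h]
  · have hi : i ∈ s := by
      rw [← count_pos]; rcases h with ⟨k, hk⟩; omega
    simp [h, count_dedup, hi, Nat.odd_iff.1 h]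

lemma count_halfPart (s : Multiset ℕ) (i : ℕ) : (halfPart s).count i = s.count i / 2 := by
  simp [halfPart, Finsupp.count_toMultiset, Finsupp.mapRange_apply]

lemma mem_oddPart {s : Multiset ℕ} {i : ℕ} (h : i ∈ oddPart s) : i ∈ s := by
  rw [← count_pos] at h ⊢; rw [count_oddPart] at h; omega

lemma mem_halfPart {s : Multiset ℕ} {i : ℕ} (h : i ∈ halfPart s) : i ∈ s := by
  rw [← count_pos] at h ⊢; rw [count_halfPart] at h; omega

lemma nodup_oddPart (s : Multiset ℕ) : (oddPart s).Nodup := (s.nodup_dedup).filter _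

lemma decomp (s : Multiset ℕ) : oddPart s + (halfPart s + halfPart s) = s := by
  ext i; simp only [count_add, count_oddPart, count_halfPart]; omega

lemma oddPart_recover {d h : Multiset ℕ} (hd : d.Nodup) : oddPart (d + (h + h)) = d := by
  ext i
  have := (nodup_iff_count_le_one.1 hd) i
  simp only [count_oddPart, count_add]; omega

lemma halfPart_recover {d h : Multiset ℕ} (hd : d.Nodup) : halfPart (d + (h + h)) = h := by
  ext i
  have := (nodup_iff_count_le_one.1 hd) i
  simp only [count_halfPart, count_add]; omega

lemma sum_decomp (s : Multiset ℕ) : (oddPart s).sum + 2 * (halfPart s).sum = s.sum := by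
  conv_rhs => rw [← decomp s]
  simp [Multiset.sum_add]; ring

noncomputable def fiberEquiv (n m : ℕ) (hm : 2 * m ≤ n) :
    {p : Nat.Partition n // (halfPart p.parts).sum = m} ≃
      ({q : Nat.Partition (n - 2 * m) // q.parts.Nodup} × Nat.Partition m) where
  toFun := fun ⟨p, hp⟩ =>
    (⟨⟨oddPart p.parts, fun hi => p.parts_pos (mem_oddPart hi), by
        have := sum_decomp p.parts
        rw [hp, p.parts_sum] at this; omega⟩, nodup_oddPart _⟩,
     ⟨halfPart p.parts, fun hi => p.parts_pos (mem_halfPart hi), hp⟩)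
  invFun := fun ⟨⟨d, hd⟩, h⟩ =>
    ⟨⟨d.parts + (h.parts + h.parts), by
        intro i hi
        rcases Multiset.mem_add.1 hi with hi | hi
        · exact d.parts_pos hi
        · rcases Multiset.mem_add.1 hi with hi | hi <;> exact h.parts_pos hi, by
        rw [Multiset.sum_add, Multiset.sum_add, d.parts_sum, h.parts_sum]; omega⟩, by
      rw [halfPart_recover hd]; exact h.parts_sum⟩
  left_inv := fun ⟨p, hp⟩ => by
    apply Subtype.ext; apply Nat.Partition.ext
    exact decomp p.parts
  right_inv := fun ⟨⟨d, hd⟩, h⟩ => by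
    refine Prod.ext ?_ ?_
    · apply Subtype.ext; apply Nat.Partition.ext; exact oddPart_recover hd
    · apply Nat.Partition.ext; exact halfPart_recover hd



/-- **Coefficient identity of `p(z) = d(z)·p(z²)`.**
For every `n`, the number of partitions of `n` equals
`Σ_{m=0}^{⌊n/2⌋} q_{n−2m} · p_m`, where `p_j` is the number of partitions of `j`
and `q_j` is the number of partitions of `j` into distinct parts. -/
theorem partition_count_eq_sum_distinct_mul_partition (n : ℕ) :
    Fintype.card (Nat.Partition n) =
      ∑ m ∈ Finset.range (n / 2 + 1),
        Fintype.card {q : Nat.Partition (n - 2 * m) // q.parts.Nodup} *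
          Fintype.card (Nat.Partition m) := by
  classical
  have hmap : ∀ p : Nat.Partition n, (fun p : Nat.Partition n => (halfPart p.parts).sum) p ∈
      Finset.range (n / 2 + 1) := by
    intro p
    have := sum_decomp p.parts
    rw [p.parts_sum] at this
    simp only [Finset.mem_range]; omega
  rw [← Finset.card_univ,
    Finset.card_eq_sum_card_fiberwise (f := fun p : Nat.Partition n => (halfPart p.parts).sum)
      (fun p _ => hmap p)]
  refine Finset.sum_congr rfl fun m hm => ?_
  have h2m : 2 * m ≤ n := by
    simp only [Finset.mem_range] at hm; omega
  rw [← Fintype.card_subtype, Fintype.card_congr (fiberEquiv n m h2m), Fintype.card_prod]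
end

section
/- Let y ∈ (0,1) and let Z be a geometric random variable with P(Z = k) = (1−y)·y^k for k ∈ ℕ. Then the pair (Z mod 2, Z div 2) has the following joint distribution: Z mod 2 is Bernoulli with P(Z mod 2 = 1) = y/(1+y) and P(Z mod 2 = 0) = 1/(1+y); Z div 2 is geometric with parameter y², i.e. P(Z div 2 = m) = (1−y²)·(y²)^m; and Z mod 2 and Z div 2 are independent. Equivalently, for every e ∈ {0,1} and m ∈ ℕ, (1−y)·y^{e+2m} = (y^e/(1+y)) · (1−y²)·(y²)^m. -/
open scoped ENNReal

private lemma real_id' (y : ℝ) (hy : y ∈ Set.Ioo (0 : ℝ) 1) (e m : ℕ) :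
    (1 - y) * y ^ (e + 2 * m) = (y ^ e / (1 + y)) * ((1 - y ^ 2) * (y ^ 2) ^ m) := by
  obtain ⟨h0, h1⟩ := hy
  have h1y : (1:ℝ) + y ≠ 0 := by nlinarith
  field_simp
  rw [pow_add, pow_mul]
  ring

private lemma geo_sum' (y : ℝ) (hy : y ∈ Set.Ioo (0 : ℝ) 1) (e : ℕ) :
    ∑' m : ℕ, ENNReal.ofReal ((1 - y) * y ^ (2 * m + e)) =
      ENNReal.ofReal (y ^ e / (1 + y)) := by
  obtain ⟨h0, h1⟩ := hy
  have hy0 : (0:ℝ) ≤ y := h0.le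
  have h1y : (0:ℝ) < 1 - y ^ 2 := by nlinarith
  have key : ∀ m : ℕ, ENNReal.ofReal ((1 - y) * y ^ (2 * m + e)) =
      ENNReal.ofReal ((1 - y) * y ^ e) * (ENNReal.ofReal (y ^ 2)) ^ m := by
    intro m
    rw [← ENNReal.ofReal_pow (by positivity),
      ← ENNReal.ofReal_mul (mul_nonneg (by nlinarith) (pow_nonneg hy0 e))]
    congr 1
    rw [pow_add, pow_mul]
    ring
  rw [tsum_congr key, ENNReal.tsum_mul_left, ENNReal.tsum_geometric]
  have h2 : (1 : ℝ≥0∞) - ENNReal.ofReal (y ^ 2) = ENNReal.ofReal (1 - y ^ 2) := by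
    rw [ENNReal.ofReal_sub _ (by positivity), ENNReal.ofReal_one]
  rw [h2, ← ENNReal.ofReal_inv_of_pos h1y,
    ← ENNReal.ofReal_mul (mul_nonneg (by nlinarith) (pow_nonneg hy0 e))]
  congr 1
  have h1y' : (1:ℝ) + y ≠ 0 := by nlinarith
  have h1y'' : (1:ℝ) - y ≠ 0 := by nlinarith
  field_simp
  ring

/-- **Parity decomposition of a geometric random variable.**
Let `Z` be geometric with `P(Z = k) = (1−y)·y^k`, `y ∈ (0,1)`.  Then the parity
bit `Z mod 2` is Bernoulli with `P(1) = y/(1+y)`, `P(0) = 1/(1+y)`, the half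
`Z div 2` is geometric with parameter `y²`, the two are independent (the joint
law is the product of the marginals), and equivalently, for `e ∈ {0,1}` and
`m ∈ ℕ`, `(1−y)·y^{e+2m} = (y^e/(1+y)) · (1−y²)·(y²)^m`. -/
theorem geometric_parity_decomposition (y : ℝ) (hy : y ∈ Set.Ioo (0 : ℝ) 1)
    (Z : PMF ℕ) (hZ : ∀ k, Z k = ENNReal.ofReal ((1 - y) * y ^ k)) :
    ((Z.map (fun k => k % 2)) 1 = ENNReal.ofReal (y / (1 + y)) ∧
      (Z.map (fun k => k % 2)) 0 = ENNReal.ofReal (1 / (1 + y))) ∧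
    (∀ m : ℕ, (Z.map (fun k => k / 2)) m = ENNReal.ofReal ((1 - y ^ 2) * (y ^ 2) ^ m)) ∧
    (∀ (e m : ℕ), (Z.map (fun k => (k % 2, k / 2))) (e, m) =
      (Z.map (fun k => k % 2)) e * (Z.map (fun k => k / 2)) m) ∧
    (∀ (e m : ℕ), e ≤ 1 →
      (1 - y) * y ^ (e + 2 * m) = (y ^ e / (1 + y)) * ((1 - y ^ 2) * (y ^ 2) ^ m)) := by
  obtain ⟨h0, h1⟩ := hy
  have hy0 : (0:ℝ) ≤ y := h0.le
  -- parity marginal for e ≤ 1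
  have hpar : ∀ e : ℕ, e ≤ 1 →
      (Z.map (fun k => k % 2)) e = ENNReal.ofReal (y ^ e / (1 + y)) := by
    intro e he
    rw [PMF.map_apply]
    have hinj : Function.Injective (fun m : ℕ => 2 * m + e) := by
      intro a b hab; dsimp only at hab; omega
    refine ((Function.Injective.tsum_eq (g := fun m : ℕ => 2 * m + e) hinj ?_).symm).trans ?_
    · intro k hk
      simp only [Function.mem_support, ne_eq, ite_eq_right_iff, not_forall] at hk
      obtain ⟨hk1, -⟩ := hk
      exact ⟨k / 2, by dsimp only; omega⟩
    · refine (tsum_congr fun m => ?_).trans (geo_sum' y ⟨h0, h1⟩ e)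
      rw [if_pos (by omega), hZ]
  -- parity marginal for e ≥ 2 is zero
  have hpar0 : ∀ e : ℕ, 2 ≤ e → (Z.map (fun k => k % 2)) e = 0 := by
    intro e he
    simp only [PMF.map_apply]
    refine ENNReal.tsum_eq_zero.2 fun k => ?_
    rw [if_neg (by omega)]
  -- half marginal
  have hdiv : ∀ m : ℕ, (Z.map (fun k => k / 2)) m =
      ENNReal.ofReal ((1 - y ^ 2) * (y ^ 2) ^ m) := by
    intro m
    simp only [PMF.map_apply]
    rw [tsum_eq_sum (s := {2 * m, 2 * m + 1}) (by
      intro k hk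
      simp only [Finset.mem_insert, Finset.mem_singleton] at hk
      rw [if_neg (by omega)])]
    have hne : (2 * m : ℕ) ≠ 2 * m + 1 := by omega
    rw [Finset.sum_pair hne, if_pos (by omega), if_pos (by omega), hZ, hZ,
      ← ENNReal.ofReal_add (by nlinarith [pow_nonneg hy0 (2*m)])
        (by nlinarith [pow_nonneg hy0 (2*m+1)])]
    congr 1
    have : y ^ (2 * m + 1) = y ^ (2 * m) * y := by rw [pow_succ]
    rw [this, pow_mul]
    ring
  refine ⟨⟨by simpa using hpar 1 le_rfl, by simpa using hpar 0 (by omega)⟩, hdiv, ?_,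
    fun e m he => real_id' y ⟨h0, h1⟩ e m⟩
  intro e m
  by_cases he : e ≤ 1
  · rw [PMF.map_apply]
    rw [tsum_eq_single (2 * m + e) (by
      intro k hk
      rw [if_neg]
      intro h
      apply hk
      have h1 := congrArg Prod.fst h
      have h2 := congrArg Prod.snd h
      simp at h1 h2
      omega)]
    rw [if_pos (by simp only [Prod.mk.injEq]; omega), hZ, hpar e he, hdiv m,
      ← ENNReal.ofReal_mul (by positivity)]
    have := real_id' y ⟨h0, h1⟩ e m
    rw [show 2 * m + e = e + 2 * m by omega, this]
  · rw [hpar0 e (by omega), zero_mul, PMF.map_apply]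
    refine ENNReal.tsum_eq_zero.2 fun k => ?_
    rw [if_neg]
    intro h
    have h1 := congrArg Prod.fst h
    simp at h1
    omega
end
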